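/- arXiv:1601.04216 — 5 statements merged into one kernel-verified Lean document; each statement's English description precedes it below -/
import Mathlib

section
/- For every ε > 0 there exists a twice continuously differentiable function Φ : ℝ² → ℝ with compact support such that 0 ≤ Φ(x) ≤ 1 for all x, Φ(x) = 1 for all x in the closed unit disk {|x| ≤ 1}, and ∫_{ℝ²} ‖∇Φ(x)‖² dm(x) < ε, where m is Lebesgue measure on ℝ² and ‖·‖ is the Euclidean norm of the gradient. -/
open MeasureTheory

open Real Set

noncomputable def eta : ℝ → ℝ := fun s => Real.smoothTransition (1 - s)

lemma eta_contDiff : ContDiff ℝ 2 eta :=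
  (Real.smoothTransition.contDiff (n := 2)).comp (contDiff_const.sub contDiff_id)

lemma eta_one {s : ℝ} (h : s ≤ 0) : eta s = 1 :=
  Real.smoothTransition.one_of_one_le (by linarith)

lemma eta_zero {s : ℝ} (h : 1 ≤ s) : eta s = 0 :=
  Real.smoothTransition.zero_of_nonpos (by linarith)

lemma eta_nonneg (s : ℝ) : 0 ≤ eta s := Real.smoothTransition.nonneg _
lemma eta_le_one (s : ℝ) : eta s ≤ 1 := Real.smoothTransition.le_one _

lemma eta_deriv_bound : ∃ C : ℝ, 0 < C ∧ ∀ s : ℝ, |deriv eta s| ≤ C := by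
  have hc : Continuous (fun s => |deriv eta s|) :=
    (eta_contDiff.continuous_deriv one_le_two).abs
  obtain ⟨m, -, hm'⟩ := (isCompact_Icc (a := (0:ℝ)) (b := 1)).exists_isMaxOn
    (nonempty_Icc.2 zero_le_one) hc.continuousOn
  have hm : ∀ y ∈ Icc (0:ℝ) 1, |deriv eta y| ≤ |deriv eta m| := hm'
  refine ⟨|deriv eta m| + 1, by positivity, fun s => ?_⟩
  rcases le_or_gt s 0 with h | h
  · rcases eq_or_lt_of_le h with rfl | h
    · have := hm 0 (by simp); linarith
    · have : deriv eta s = 0 := by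
        have hev : eta =ᶠ[nhds s] fun _ => 1 :=
          Filter.eventually_of_mem (Iio_mem_nhds h) (fun y hy => eta_one (le_of_lt hy))
        rw [hev.deriv_eq, deriv_const]
      simp [this]; positivity
  rcases le_or_gt s 1 with h1 | h1
  · have := hm s ⟨h.le, h1⟩; linarith
  · have : deriv eta s = 0 := by
      have hev : eta =ᶠ[nhds s] fun _ => 0 :=
        Filter.eventually_of_mem (Ioi_mem_nhds h1) (fun y hy => eta_zero (le_of_lt hy))
      rw [hev.deriv_eq, deriv_const]
    simp [this]; positivity

lemma exists_dyadic (x : ℝ) (h1 : 1 ≤ x) :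
    ∀ n : ℕ, x ≤ 2 ^ (n + 1) → ∃ k ≤ n, (2:ℝ) ^ k ≤ x ∧ x ≤ 2 ^ (k + 1) := by
  intro n
  induction n with
  | zero => intro h; exact ⟨0, le_refl _, by simpa using h1, h⟩
  | succ m ih =>
    intro h
    rcases le_or_gt x (2 ^ (m + 1)) with h' | h'
    · obtain ⟨k, hk, hk1, hk2⟩ := ih h'
      exact ⟨k, hk.trans (Nat.le_succ m), hk1, hk2⟩
    · exact ⟨m + 1, le_refl _, h'.le, h⟩

noncomputable def LL (n : ℕ) : ℝ := Real.log ((4:ℝ) ^ (n + 1))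

lemma LL_pos (n : ℕ) : 0 < LL n :=
  Real.log_pos (one_lt_pow₀ (by norm_num) (Nat.succ_ne_zero n))

lemma LL_eq (n : ℕ) : LL n = (n + 1) * Real.log 4 := by
  rw [LL, Real.log_pow]; push_cast; ring

noncomputable def psi (n : ℕ) : ℝ → ℝ :=
  fun t => if t < 1 then 1 else eta ((LL n)⁻¹ * Real.log t)

noncomputable def Phi (n : ℕ) : EuclideanSpace ℝ (Fin 2) → ℝ :=
  fun x => psi n (‖x‖ ^ 2)

lemma psi_nonneg (n : ℕ) (t : ℝ) : 0 ≤ psi n t := by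
  unfold psi; split_ifs
  · norm_num
  · exact eta_nonneg _

lemma psi_le_one (n : ℕ) (t : ℝ) : psi n t ≤ 1 := by
  unfold psi; split_ifs
  · norm_num
  · exact eta_le_one _

lemma psi_one (n : ℕ) {t : ℝ} (h : t ≤ 1) : psi n t = 1 := by
  unfold psi; split_ifs with h'
  · rfl
  · have : t = 1 := le_antisymm h (not_lt.1 h')
    rw [this]; simp [eta_one]

lemma psi_zero (n : ℕ) {t : ℝ} (h : (4:ℝ) ^ (n + 1) ≤ t) : psi n t = 0 := by
  have h4 : (1:ℝ) < 4 ^ (n + 1) := one_lt_pow₀ (by norm_num) (Nat.succ_ne_zero n)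
  unfold psi; split_ifs with h'
  · linarith
  · refine eta_zero ?_
    have hlog : LL n ≤ Real.log t := Real.log_le_log (by positivity) h
    have hLpos := LL_pos n
    rw [← inv_mul_cancel₀ hLpos.ne']
    exact mul_le_mul_of_nonneg_left hlog (by positivity)

lemma phi_eventually_eq (n : ℕ) {x : EuclideanSpace ℝ (Fin 2)} (hx : 1/2 < ‖x‖ ^ 2) :
    Phi n =ᶠ[nhds x] fun y => eta ((LL n)⁻¹ * Real.log (‖y‖ ^ 2)) := by
  have hopen : IsOpen {y : EuclideanSpace ℝ (Fin 2) | 1/2 < ‖y‖ ^ 2} :=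
    isOpen_lt continuous_const ((continuous_norm).pow 2)
  refine Filter.eventually_of_mem (hopen.mem_nhds hx) (fun y hy => ?_)
  simp only [Set.mem_setOf_eq] at hy
  unfold Phi psi
  split_ifs with h'
  · have hlog : Real.log (‖y‖ ^ 2) < 0 := Real.log_neg (by linarith) h'
    simp only []
    rw [eta_one (by nlinarith [LL_pos n, inv_pos.2 (LL_pos n)])]
  · rfl

lemma phi_contDiff (n : ℕ) : ContDiff ℝ 2 (Phi n) := by
  rw [contDiff_iff_contDiffAt]
  intro x
  rcases le_or_gt (‖x‖ ^ 2) (1/2) with h | h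
  · have hopen : IsOpen {y : EuclideanSpace ℝ (Fin 2) | ‖y‖ ^ 2 < 1} :=
      isOpen_lt ((continuous_norm).pow 2) continuous_const
    have hev : Phi n =ᶠ[nhds x] fun _ => 1 :=
      Filter.eventually_of_mem (hopen.mem_nhds (by simp only [Set.mem_setOf_eq]; linarith))
        (fun y hy => psi_one n (le_of_lt hy))
    exact contDiffAt_const.congr_of_eventuallyEq hev
  · have ht : (0:ℝ) < ‖x‖ ^ 2 := by linarith
    have hinner : ContDiffAt ℝ 2 (fun y : EuclideanSpace ℝ (Fin 2) =>
        (LL n)⁻¹ * Real.log (‖y‖ ^ 2)) x := by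
      exact ContDiffAt.mul contDiffAt_const
        ((Real.contDiffAt_log.2 ht.ne').comp x (contDiff_norm_sq ℝ).contDiffAt)
    exact ((eta_contDiff.contDiffAt.comp x hinner).congr_of_eventuallyEq
      (phi_eventually_eq n h))

lemma fderiv_phi_inner (n : ℕ) {x : EuclideanSpace ℝ (Fin 2)} (hx : ‖x‖ < 1) :
    fderiv ℝ (Phi n) x = 0 := by
  have hopen : IsOpen {y : EuclideanSpace ℝ (Fin 2) | ‖y‖ < 1} :=
    isOpen_lt continuous_norm continuous_const
  have hev : Phi n =ᶠ[nhds x] fun _ => (1:ℝ) :=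
    Filter.eventually_of_mem (hopen.mem_nhds hx)
      (fun y hy => psi_one n (by nlinarith [norm_nonneg y, Set.mem_setOf_eq ▸ hy]))
  rw [hev.fderiv_eq, fderiv_fun_const]; rfl

lemma fderiv_phi_outer (n : ℕ) {x : EuclideanSpace ℝ (Fin 2)} (hx : (2:ℝ) ^ (n+1) < ‖x‖) :
    fderiv ℝ (Phi n) x = 0 := by
  have hopen : IsOpen {y : EuclideanSpace ℝ (Fin 2) | (2:ℝ) ^ (n+1) < ‖y‖} :=
    isOpen_lt continuous_const continuous_norm
  have hev : Phi n =ᶠ[nhds x] fun _ => (0:ℝ) := by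
    refine Filter.eventually_of_mem (hopen.mem_nhds hx) (fun y hy => ?_)
    simp only [Set.mem_setOf_eq] at hy
    refine psi_zero n ?_
    have h2 : ((2:ℝ) ^ (n+1)) ^ 2 = 4 ^ (n+1) := by
      rw [← pow_mul, mul_comm, pow_mul]; norm_num
    have hp : (0:ℝ) < 2 ^ (n+1) := by positivity
    nlinarith
  rw [hev.fderiv_eq, fderiv_fun_const]; rfl

set_option synthInstance.maxHeartbeats 1000000 in
lemma fderiv_phi_bound (C : ℝ) (hC : ∀ s : ℝ, |deriv eta s| ≤ C) (n : ℕ)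
    {x : EuclideanSpace ℝ (Fin 2)} (hx : 1/2 < ‖x‖ ^ 2) :
    ‖fderiv ℝ (Phi n) x‖ ≤ 2 * C / (LL n * ‖x‖) := by
  set t := ‖x‖ ^ 2 with htdef
  have ht : (0:ℝ) < t := by linarith
  have hxnorm : (0:ℝ) < ‖x‖ := by nlinarith [norm_nonneg x, hx]
  set s := (LL n)⁻¹ * Real.log t with hsdef
  have h1 : HasFDerivAt (fun y : EuclideanSpace ℝ (Fin 2) => ‖y‖ ^ 2)
      ((2:ℝ) • innerSL ℝ x) x := by
    have := (hasStrictFDerivAt_norm_sq x).hasFDerivAt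
    simpa [two_smul] using this
  have h2 : HasFDerivAt (fun y : EuclideanSpace ℝ (Fin 2) => Real.log (‖y‖ ^ 2))
      (t⁻¹ • ((2:ℝ) • innerSL ℝ x)) x :=
    h1.log ht.ne'
  have h3 : HasFDerivAt (fun y : EuclideanSpace ℝ (Fin 2) => (LL n)⁻¹ * Real.log (‖y‖ ^ 2))
      ((LL n)⁻¹ • (t⁻¹ • ((2:ℝ) • innerSL ℝ x))) x := by
    exact h2.const_mul (LL n)⁻¹
  have h4 : HasDerivAt eta (deriv eta s) s :=
    ((eta_contDiff.differentiable two_ne_zero) s).hasDerivAt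
  have h5 : HasFDerivAt (fun y : EuclideanSpace ℝ (Fin 2) => eta ((LL n)⁻¹ * Real.log (‖y‖ ^ 2)))
      (deriv eta s • ((LL n)⁻¹ • (t⁻¹ • ((2:ℝ) • innerSL ℝ x)))) x :=
    h4.comp_hasFDerivAt (h₂ := eta) x h3
  have heq : fderiv ℝ (Phi n) x = deriv eta s • ((LL n)⁻¹ • (t⁻¹ • ((2:ℝ) • innerSL ℝ x))) := by
    rw [(phi_eventually_eq n hx).fderiv_eq]
    exact h5.fderiv
  rw [heq]
  have hnorm : ‖deriv eta s • ((LL n)⁻¹ • (t⁻¹ • ((2:ℝ) • innerSL ℝ x)))‖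
      = |deriv eta s| * ((LL n)⁻¹ * (t⁻¹ * (2 * ‖x‖))) := by
    have hL := LL_pos n
    have n1 : ∀ (c : ℝ) (f : EuclideanSpace ℝ (Fin 2) →L[ℝ] ℝ), ‖c • f‖ = |c| * ‖f‖ :=
      fun c f => by rw [← Real.norm_eq_abs]; exact norm_smul c f
    rw [n1, n1, n1, n1, innerSL_apply_norm, abs_of_pos (inv_pos.2 hL),
      abs_of_pos (inv_pos.2 ht), abs_two]
  rw [hnorm]
  have hL := LL_pos n
  have hbound := hC s
  have hCnn : 0 ≤ C := le_trans (abs_nonneg _) hbound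
  have key : (LL n)⁻¹ * (t⁻¹ * (2 * ‖x‖)) = 2 / (LL n * ‖x‖) := by
    rw [htdef]; field_simp
  rw [key]
  have : |deriv eta s| * (2 / (LL n * ‖x‖)) ≤ C * (2 / (LL n * ‖x‖)) :=
    mul_le_mul_of_nonneg_right hbound (by positivity)
  linarith [this, (by ring : C * (2 / (LL n * ‖x‖)) = 2 * C / (LL n * ‖x‖))]

lemma phi_zero_far (n : ℕ) {x : EuclideanSpace ℝ (Fin 2)} (hx : (2:ℝ) ^ (n+1) ≤ ‖x‖) :
    Phi n x = 0 := by
  refine psi_zero n ?_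
  have h2 : ((2:ℝ) ^ (n+1)) ^ 2 = 4 ^ (n+1) := by
    rw [← pow_mul, mul_comm, pow_mul]; norm_num
  have hp : (0:ℝ) < 2 ^ (n+1) := by positivity
  nlinarith

lemma phi_hasCompactSupport (n : ℕ) : HasCompactSupport (Phi n) := by
  refine HasCompactSupport.intro (isCompact_closedBall (0 : EuclideanSpace ℝ (Fin 2))
    ((2:ℝ) ^ (n+1))) (fun x hx => ?_)
  refine phi_zero_far n ?_
  simpa [Metric.mem_closedBall, dist_zero_right] using le_of_lt (not_le.1 (by
    simpa [Metric.mem_closedBall, dist_zero_right] using hx))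

lemma gradient_norm_eq (f : EuclideanSpace ℝ (Fin 2) → ℝ) (x : EuclideanSpace ℝ (Fin 2)) :
    ‖gradient f x‖ = ‖fderiv ℝ f x‖ := by
  rw [gradient]
  exact LinearIsometryEquiv.norm_map _ _

open Metric in
lemma energy_bound (C : ℝ) (hC0 : 0 < C) (hC : ∀ s : ℝ, |deriv eta s| ≤ C) (n : ℕ) :
    ∫ x : EuclideanSpace ℝ (Fin 2), ‖fderiv ℝ (Phi n) x‖ ^ 2 ≤
      (n + 1 : ℝ) * (16 * C ^ 2 * (volume (ball (0 : EuclideanSpace ℝ (Fin 2)) 1)).toReal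
        / (LL n) ^ 2) := by
  set E := EuclideanSpace ℝ (Fin 2)
  set V : ℝ := (volume (ball (0 : E) 1)).toReal with hV
  have hVnn : 0 ≤ V := ENNReal.toReal_nonneg
  have hL := LL_pos n
  set f : E → ℝ := fun x => ‖fderiv ℝ (Phi n) x‖ ^ 2 with hf
  set A : ℕ → Set E := fun k => {y : E | ‖y‖ ∈ Icc ((2:ℝ) ^ k) (2 ^ (k+1))} with hA
  have hAmeas : ∀ k, MeasurableSet (A k) :=
    fun k => (isClosed_Icc.preimage continuous_norm).measurableSet
  set c : ℕ → ℝ := fun k => (2 * C / (LL n * 2 ^ k)) ^ 2 with hc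
  have hcnn : ∀ k, 0 ≤ c k := fun k => sq_nonneg _
  set B : E → ℝ := fun x => ∑ k ∈ Finset.range (n + 1), (A k).indicator (fun _ => c k) x with hB
  -- pointwise bound
  have hpt : ∀ x, f x ≤ B x := by
    intro x
    have hBnn : 0 ≤ B x :=
      Finset.sum_nonneg fun k _ => Set.indicator_nonneg (fun _ _ => hcnn k) x
    rcases lt_or_ge ‖x‖ 1 with h1 | h1
    · simpa [hf, fderiv_phi_inner n h1] using hBnn
    rcases lt_or_ge ((2:ℝ) ^ (n+1)) ‖x‖ with h2 | h2
    · simpa [hf, fderiv_phi_outer n h2] using hBnn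
    obtain ⟨k, hk, hk1, hk2⟩ := exists_dyadic ‖x‖ h1 n h2
    have hxx : 1/2 < ‖x‖ ^ 2 := by nlinarith
    have hb := fderiv_phi_bound C hC n hxx
    have hxpos : (0:ℝ) < ‖x‖ := by nlinarith
    have h2k : (0:ℝ) < 2 ^ k := by positivity
    have hmono : 2 * C / (LL n * ‖x‖) ≤ 2 * C / (LL n * 2 ^ k) := by
      apply div_le_div_of_nonneg_left (by positivity) (by positivity)
      exact mul_le_mul_of_nonneg_left hk1 hL.le
    have hfx : f x ≤ c k := by
      have hnn : (0:ℝ) ≤ ‖fderiv ℝ (Phi n) x‖ := norm_nonneg _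
      have := hb.trans hmono
      exact pow_le_pow_left₀ hnn this 2
    refine hfx.trans ?_
    have hmem : x ∈ A k := ⟨hk1, hk2⟩
    have : (A k).indicator (fun _ => c k) x = c k := Set.indicator_of_mem hmem _
    rw [← this]
    exact Finset.single_le_sum (fun j _ => Set.indicator_nonneg (fun _ _ => hcnn j) x)
      (Finset.mem_range.2 (Nat.lt_succ_of_le hk))
  -- integrability
  have hf_cont : Continuous f :=
    (((phi_contDiff n).continuous_fderiv two_ne_zero).norm).pow 2
  have hf_supp : HasCompactSupport f := by
    have h0 := (phi_hasCompactSupport n).fderiv (𝕜 := ℝ)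
    exact h0.comp_left (g := fun T : E →L[ℝ] ℝ => ‖T‖ ^ 2) (by simp)
  have hf_int : Integrable f := hf_cont.integrable_of_hasCompactSupport hf_supp
  have hBk_int : ∀ k, Integrable ((A k).indicator (fun _ => c k)) := by
    intro k
    rw [integrable_indicator_iff (hAmeas k)]
    refine integrableOn_const (lt_top_iff_ne_top.1 ?_)
    refine lt_of_le_of_lt (measure_mono (fun y hy => ?_)) (measure_closedBall_lt_top
      (x := (0:E)) (r := (2:ℝ) ^ (k+1)))
    simpa [Metric.mem_closedBall, dist_zero_right] using hy.2
  have hB_int : Integrable B := integrable_finset_sum _ (fun k _ => hBk_int k)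
  have step1 : ∫ x, f x ≤ ∫ x, B x := integral_mono hf_int hB_int hpt
  have step2 : ∫ x, B x = ∑ k ∈ Finset.range (n + 1), c k * (volume (A k)).toReal := by
    rw [hB, integral_finset_sum _ (fun k _ => hBk_int k)]
    refine Finset.sum_congr rfl (fun k _ => ?_)
    rw [integral_indicator_const _ (hAmeas k), smul_eq_mul, mul_comm, measureReal_def]
  have step3 : ∀ k, (volume (A k)).toReal ≤ 4 ^ (k+1) * V := by
    intro k
    have hsub : A k ⊆ closedBall (0:E) ((2:ℝ) ^ (k+1)) := fun y hy => by
      simpa [Metric.mem_closedBall, dist_zero_right] using hy.2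
    have hcb : volume (closedBall (0:E) ((2:ℝ) ^ (k+1)))
        = ENNReal.ofReal (((2:ℝ) ^ (k+1)) ^ Module.finrank ℝ E) * volume (ball (0:E) 1) :=
      Measure.addHaar_closedBall _ _ (by positivity)
    have hfr : Module.finrank ℝ E = 2 := finrank_euclideanSpace_fin
    have h4 : ((2:ℝ) ^ (k+1)) ^ 2 = 4 ^ (k+1) := by
      rw [← pow_mul, mul_comm, pow_mul]; norm_num
    have hle := measure_mono (μ := (volume : Measure E)) hsub
    have hne : volume (closedBall (0:E) ((2:ℝ) ^ (k+1))) ≠ ⊤ :=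
      (measure_closedBall_lt_top (x := (0:E)) (r := (2:ℝ) ^ (k+1))).ne
    calc (volume (A k)).toReal ≤ (volume (closedBall (0:E) ((2:ℝ) ^ (k+1)))).toReal :=
          ENNReal.toReal_mono hne hle
      _ = 4 ^ (k+1) * V := by
          rw [hcb, hfr, h4, ENNReal.toReal_mul, ENNReal.toReal_ofReal (by positivity)]
  have step4 : ∑ k ∈ Finset.range (n + 1), c k * (volume (A k)).toReal ≤
      ∑ k ∈ Finset.range (n + 1), (16 * C ^ 2 * V / (LL n) ^ 2) := by
    refine Finset.sum_le_sum (fun k _ => ?_)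
    have h1 : c k * (volume (A k)).toReal ≤ c k * (4 ^ (k+1) * V) :=
      mul_le_mul_of_nonneg_left (step3 k) (hcnn k)
    refine h1.trans_eq ?_
    have h2k : ((2:ℝ) ^ k) ^ 2 = 4 ^ k := by rw [← pow_mul, mul_comm, pow_mul]; norm_num
    have h4k : (4:ℝ) ^ (k+1) = 4 * 4 ^ k := by ring
    have hLne : LL n ≠ 0 := hL.ne'
    have h4ne : ((4:ℝ) ^ k) ≠ 0 := by positivity
    show (2 * C / (LL n * 2 ^ k)) ^ 2 * (4 ^ (k+1) * V) = 16 * C ^ 2 * V / (LL n) ^ 2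
    rw [div_pow, mul_pow (LL n) ((2:ℝ) ^ k), h2k, h4k]
    field_simp
    ring
  have step5 : ∑ k ∈ Finset.range (n + 1), (16 * C ^ 2 * V / (LL n) ^ 2)
      = (n + 1 : ℝ) * (16 * C ^ 2 * V / (LL n) ^ 2) := by
    rw [Finset.sum_const, Finset.card_range, nsmul_eq_mul]
    push_cast; ring
  calc ∫ x, f x ≤ ∫ x, B x := step1
    _ = _ := step2
    _ ≤ _ := step4
    _ = _ := step5

/-- For every `ε > 0` there is a `C²` compactly supported plateau function `Φ : ℝ² → ℝ`
with `0 ≤ Φ ≤ 1`, `Φ = 1` on the closed unit disk, and Dirichlet energy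
`∫ ‖∇Φ‖² < ε`. -/
theorem stmt_2 (ε : ℝ) (hε : 0 < ε) :
    ∃ Φ : EuclideanSpace ℝ (Fin 2) → ℝ,
      ContDiff ℝ 2 Φ ∧ HasCompactSupport Φ ∧
      (∀ x, 0 ≤ Φ x ∧ Φ x ≤ 1) ∧
      (∀ x, ‖x‖ ≤ 1 → Φ x = 1) ∧
      ∫ x, ‖gradient Φ x‖ ^ 2 < ε := by
  obtain ⟨C, hC0, hC⟩ := eta_deriv_bound
  set V : ℝ := (volume (Metric.ball (0 : EuclideanSpace ℝ (Fin 2)) 1)).toReal with hV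
  have hVnn : 0 ≤ V := ENNReal.toReal_nonneg
  have hlog4 : (0:ℝ) < Real.log 4 := Real.log_pos (by norm_num)
  obtain ⟨N, hN⟩ := exists_nat_gt (16 * C ^ 2 * V / (ε * (Real.log 4) ^ 2))
  set n := N with hn
  have hL := LL_pos n
  have hkey : (n + 1 : ℝ) * (16 * C ^ 2 * V / (LL n) ^ 2) < ε := by
    have hexp : (n + 1 : ℝ) * (16 * C ^ 2 * V / (LL n) ^ 2)
        = 16 * C ^ 2 * V / ((n + 1) * (Real.log 4) ^ 2) := by
      rw [LL_eq]
      have h1 : ((n:ℝ) + 1) ≠ 0 := by positivity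
      field_simp
    rw [hexp, div_lt_iff₀ (by positivity)]
    have hQ : 16 * C ^ 2 * V / (ε * (Real.log 4) ^ 2) * (ε * (Real.log 4) ^ 2)
        = 16 * C ^ 2 * V := div_mul_cancel₀ _ (by positivity)
    have h2 : (16 * C ^ 2 * V / (ε * (Real.log 4) ^ 2)) * (ε * (Real.log 4) ^ 2)
        < ((n:ℝ) + 1) * (ε * (Real.log 4) ^ 2) := by
      apply mul_lt_mul_of_pos_right _ (by positivity)
      exact hN.trans (lt_add_one _)
    rw [hQ] at h2
    calc 16 * C ^ 2 * V < ((n:ℝ) + 1) * (ε * (Real.log 4) ^ 2) := h2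
      _ = ε * (((n:ℝ) + 1) * (Real.log 4) ^ 2) := by ring
  refine ⟨Phi n, phi_contDiff n, phi_hasCompactSupport n,
    fun x => ⟨psi_nonneg n _, psi_le_one n _⟩,
    fun x hx => psi_one n (by nlinarith [norm_nonneg x]), ?_⟩
  have hre : (fun x : EuclideanSpace ℝ (Fin 2) => ‖gradient (Phi n) x‖ ^ 2)
      = fun x => ‖fderiv ℝ (Phi n) x‖ ^ 2 :=
    funext fun x => by rw [gradient_norm_eq]
  calc ∫ x, ‖gradient (Phi n) x‖ ^ 2 = ∫ x, ‖fderiv ℝ (Phi n) x‖ ^ 2 := by rw [hre]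
    _ ≤ (n + 1 : ℝ) * (16 * C ^ 2 * V / (LL n) ^ 2) := energy_bound C hC0 hC n
    _ < ε := hkey
end

section
/- Let γ > 0, K > 0, and let Φ : ℝ² → ℝ be a twice continuously differentiable function with support contained in the disk {|x| ≤ K}, satisfying 0 ≤ Φ ≤ 1 and having bounded first and second derivatives. For R > 0 set Φ_R(x) = Φ(x/R). Then limsup_{R → ∞} ∫_{ℝ²} ∫_{ℝ²} e^{−γ|x−y|} |Φ_R(x) − Φ_R(y)|² dm(x) dm(y) ≤ 2 (∫_{ℝ²} |v|² e^{−γ|v|} dm(v)) · ∫_{ℝ²} ‖∇Φ(u)‖² dm(u). -/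
open MeasureTheory Filter Metric

lemma bdd_aux (n : ℕ) {c : ℝ} (hc : 0 < c) :
    ∃ M : ℝ, 1 ≤ M ∧ ∀ t : ℝ, 0 ≤ t → (1 + t) ^ n * Real.exp (-(c * t)) ≤ M := by
  have h1 : Tendsto (fun t : ℝ => c * (1 + t)) atTop atTop := by
    apply Tendsto.const_mul_atTop hc
    exact tendsto_atTop_add_const_left _ 1 tendsto_id
  have h2 : Tendsto (fun t : ℝ => (c * (1 + t)) ^ n * Real.exp (-(c * (1 + t)))) atTop (nhds 0) :=
    (Real.tendsto_pow_mul_exp_neg_atTop_nhds_zero n).comp h1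
  have h3 : Tendsto (fun t : ℝ => (1 + t) ^ n * Real.exp (-(c * t))) atTop (nhds 0) := by
    have := h2.mul_const (Real.exp c / c ^ n)
    rw [zero_mul] at this
    refine this.congr (fun t => ?_)
    rw [mul_pow]
    have : -(c * (1 + t)) = -(c*t) + -c := by ring
    rw [this, Real.exp_add]
    have hh : Real.exp (-c) * Real.exp c = 1 := by rw [← Real.exp_add]; simp
    rw [show c ^ n * (1 + t) ^ n * (Real.exp (-(c * t)) * Real.exp (-c)) * (Real.exp c / c ^ n)
        = (1 + t) ^ n * Real.exp (-(c * t)) * (Real.exp (-c) * Real.exp c) * (c ^ n / c ^ n)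
        from by ring, hh, div_self (pow_ne_zero n hc.ne')]
    ring
  have h4 : ∀ᶠ t in atTop, (1 + t) ^ n * Real.exp (-(c * t)) < 1 :=
    h3.eventually_lt_const one_pos
  obtain ⟨T, hT⟩ := eventually_atTop.1 h4
  obtain ⟨C, hC⟩ := (isCompact_Icc (a := (0:ℝ)) (b := T)).exists_bound_of_continuousOn
    (f := fun t : ℝ => (1 + t) ^ n * Real.exp (-(c * t))) (by fun_prop)
  refine ⟨max C 1, le_max_right _ _, fun t ht => ?_⟩
  rcases le_total t T with h | h
  · exact le_trans (le_trans (le_abs_self _) (hC t ⟨ht, h⟩)) (le_max_left _ _)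
  · exact le_trans (hT t h).le (le_max_right _ _)

lemma integrable_pow_exp (k : ℕ) {c : ℝ} (hc : 0 < c) :
    Integrable (fun v : EuclideanSpace ℝ (Fin 2) => ‖v‖ ^ k * Real.exp (-(c * ‖v‖))) := by
  obtain ⟨M, hM1, hM⟩ := bdd_aux (k + 4) hc
  have hint : Integrable (fun v : EuclideanSpace ℝ (Fin 2) => M * (1 + ‖v‖) ^ (-(4:ℝ))) :=
    (integrable_one_add_norm (by simp; norm_num)).const_mul M
  refine hint.mono (Continuous.aestronglyMeasurable (by continuity)) (Filter.Eventually.of_forall fun v => ?_)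
  set t := ‖v‖ with ht
  have ht0 : 0 ≤ t := norm_nonneg v
  have h1t : (0:ℝ) < 1 + t := by linarith
  have hr : (1 + t) ^ (-(4:ℝ)) = ((1 + t) ^ (4:ℕ))⁻¹ := by
    rw [Real.rpow_neg h1t.le, ← Real.rpow_natCast (1 + t) 4]; norm_num
  have key : t ^ k * Real.exp (-(c * t)) * (1 + t) ^ (4:ℕ) ≤ M := by
    calc t ^ k * Real.exp (-(c * t)) * (1 + t) ^ (4:ℕ)
        ≤ (1 + t) ^ k * Real.exp (-(c * t)) * (1 + t) ^ (4:ℕ) := by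
          have h1 := pow_le_pow_left₀ ht0 (by linarith : t ≤ 1 + t) k
          have h2 := (Real.exp_pos (-(c * t))).le
          have h3 : (0:ℝ) ≤ (1 + t) ^ (4:ℕ) := by positivity
          exact mul_le_mul_of_nonneg_right (mul_le_mul_of_nonneg_right h1 h2) h3
      _ = (1 + t) ^ (k + 4) * Real.exp (-(c * t)) := by ring
      _ ≤ M := hM t ht0
  have hf0 : (0:ℝ) ≤ t ^ k * Real.exp (-(c * t)) := by positivity
  have hg0 : (0:ℝ) ≤ M * (1 + t) ^ (-(4:ℝ)) := by
    have : (0:ℝ) ≤ (1 + t) ^ (-(4:ℝ)) := Real.rpow_nonneg h1t.le _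
    nlinarith
  rw [Real.norm_eq_abs, Real.norm_eq_abs, abs_of_nonneg hf0, abs_of_nonneg hg0, hr]
  rw [← div_eq_mul_inv, le_div_iff₀ (by positivity)]
  exact key

variable {Φ : EuclideanSpace ℝ (Fin 2) → ℝ}

lemma grad_norm_eq (z : EuclideanSpace ℝ (Fin 2)) : ‖gradient Φ z‖ = ‖fderiv ℝ Φ z‖ := by
  rw [show gradient Φ z = (InnerProductSpace.toDual ℝ _).symm (fderiv ℝ Φ z) from rfl]
  exact LinearIsometryEquiv.norm_map _ _

lemma grad_zero_outside {K : ℝ} (hsupp : tsupport Φ ⊆ closedBall 0 K)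
    {z : EuclideanSpace ℝ (Fin 2)} (hz : K < ‖z‖) : Φ z = 0 ∧ gradient Φ z = 0 := by
  have hzt : z ∉ tsupport Φ := by
    intro h
    have := hsupp h
    rw [mem_closedBall_zero_iff] at this
    linarith
  refine ⟨image_eq_zero_of_notMem_tsupport hzt, ?_⟩
  have h2 : fderiv ℝ Φ z = 0 := by
    by_contra h
    exact hzt (support_fderiv_subset ℝ (by simpa [Function.mem_support] using h))
  rw [show gradient Φ z = (InnerProductSpace.toDual ℝ _).symm (fderiv ℝ Φ z) from rfl, h2, map_zero]

lemma taylor_bound (hΦ : ContDiff ℝ 2 Φ) {C₂ : ℝ}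
    (hC₂ : ∀ z, ‖fderiv ℝ (fderiv ℝ Φ) z‖ ≤ C₂) (a b : EuclideanSpace ℝ (Fin 2)) :
    |Φ a - Φ b - fderiv ℝ Φ b (a - b)| ≤ C₂ * ‖a - b‖ ^ 2 := by
  have hC₂0 : 0 ≤ C₂ := le_trans (norm_nonneg (fderiv ℝ (fderiv ℝ Φ) 0)) (hC₂ 0)
  have hd1 : Differentiable ℝ Φ := hΦ.differentiable two_ne_zero
  have hd2 : Differentiable ℝ (fderiv ℝ Φ) :=
    (hΦ.fderiv_right (m := 1) (by norm_num)).differentiable one_ne_zero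
  have hlip : ∀ z : EuclideanSpace ℝ (Fin 2),
      ‖fderiv ℝ Φ z - fderiv ℝ Φ b‖ ≤ C₂ * ‖z - b‖ :=
    fun z => Convex.norm_image_sub_le_of_norm_fderiv_le
      (fun w _ => (hd2 w)) (fun w _ => hC₂ w) convex_univ (Set.mem_univ b) (Set.mem_univ z)
  set L := fderiv ℝ Φ b with hL
  set F : EuclideanSpace ℝ (Fin 2) → ℝ := fun z => Φ z - L (z - b) with hF
  have hFd : ∀ z, HasFDerivAt F (fderiv ℝ Φ z - L) z := by
    intro z
    have h1 : HasFDerivAt (fun z : EuclideanSpace ℝ (Fin 2) => L (z - b)) L z := by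
      have := L.hasFDerivAt.comp z ((hasFDerivAt_id z).sub_const b)
      simpa [Function.comp_def] using this
    exact ((hd1 z).hasFDerivAt).sub h1
  have key : ‖F a - F b‖ ≤ (C₂ * ‖a - b‖) * ‖a - b‖ :=
    Convex.norm_image_sub_le_of_norm_fderiv_le
      (s := closedBall b ‖a - b‖) (f := F)
      (fun w _ => (hFd w).differentiableAt)
      (fun w hw => by
        rw [(hFd w).fderiv]
        calc ‖fderiv ℝ Φ w - L‖ ≤ C₂ * ‖w - b‖ := hlip w
          _ ≤ C₂ * ‖a - b‖ := by
              have hwb : ‖w - b‖ ≤ ‖a - b‖ := by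
                rw [← dist_eq_norm, ← dist_eq_norm]; exact mem_closedBall.1 hw
              exact mul_le_mul_of_nonneg_left hwb hC₂0)
      (convex_closedBall _ _)
      (mem_closedBall_self (norm_nonneg _))
      (by rw [mem_closedBall, dist_eq_norm])
  have hFb : F b = Φ b := by simp [hF]
  have hFa : F a = Φ a - L (a - b) := rfl
  calc |Φ a - Φ b - L (a - b)| = ‖F a - F b‖ := by
        rw [hFa, hFb, Real.norm_eq_abs]; ring_nf
    _ ≤ (C₂ * ‖a - b‖) * ‖a - b‖ := key
    _ = C₂ * ‖a - b‖ ^ 2 := by ring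

lemma pointwiseP (hΦ : ContDiff ℝ 2 Φ) {γ K C₂ R : ℝ} (hγ : 0 < γ) (hK : 0 < K)
    (hsupp : tsupport Φ ⊆ closedBall 0 K)
    (hC₂ : ∀ z, ‖fderiv ℝ (fderiv ℝ Φ) z‖ ≤ C₂) (hR : 0 < R)
    (x v : EuclideanSpace ℝ (Fin 2)) :
    Real.exp (-(γ * ‖v‖)) * |Φ (R⁻¹ • x) - Φ (R⁻¹ • (x - v))| ^ 2 ≤
      2 * ‖gradient Φ (R⁻¹ • x)‖ ^ 2 / R ^ 2 * (‖v‖ ^ 2 * Real.exp (-(γ * ‖v‖)))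
      + 2 * C₂ ^ 2 / R ^ 4 *
          ((closedBall (0 : EuclideanSpace ℝ (Fin 2)) (2 * R * K)).indicator
              (fun _ => (1 : ℝ)) x * (‖v‖ ^ 4 * Real.exp (-(γ * ‖v‖)))
            + Real.exp (-(γ / 4 * ‖x‖)) * (‖v‖ ^ 4 * Real.exp (-(γ / 2 * ‖v‖)))) := by
  have hC₂0 : 0 ≤ C₂ := le_trans (norm_nonneg (fderiv ℝ (fderiv ℝ Φ) 0)) (hC₂ 0)
  have hind0 : (0:ℝ) ≤ (closedBall (0 : EuclideanSpace ℝ (Fin 2)) (2 * R * K)).indicator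
      (fun _ => (1 : ℝ)) x := Set.indicator_nonneg (fun _ _ => zero_le_one) x
  by_cases hcase : ‖x‖ ≤ R * K + ‖v‖
  · -- Taylor regime
    set b := R⁻¹ • x with hb
    set a := R⁻¹ • (x - v) with ha
    have hab : a - b = -(R⁻¹ • v) := by rw [ha, hb, smul_sub]; abel
    have hnab : ‖a - b‖ = ‖v‖ / R := by
      rw [hab, norm_neg, norm_smul, norm_inv, Real.norm_eq_abs, abs_of_pos hR]
      rw [inv_mul_eq_div]
    have htay := taylor_bound hΦ hC₂ a b
    have hLbd : |fderiv ℝ Φ b (a - b)| ≤ ‖gradient Φ b‖ * (‖v‖ / R) := by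
      calc |fderiv ℝ Φ b (a - b)| ≤ ‖fderiv ℝ Φ b‖ * ‖a - b‖ := (fderiv ℝ Φ b).le_opNorm _
        _ = ‖gradient Φ b‖ * (‖v‖ / R) := by rw [grad_norm_eq, hnab]
    have hD : |Φ b - Φ a| ≤ ‖gradient Φ b‖ * (‖v‖ / R) + C₂ * (‖v‖ / R) ^ 2 := by
      have h1 : |Φ b - Φ a| ≤ |Φ a - Φ b - fderiv ℝ Φ b (a - b)| + |fderiv ℝ Φ b (a - b)| := by
        rw [abs_sub_comm]
        calc |Φ a - Φ b| = |(Φ a - Φ b - fderiv ℝ Φ b (a - b)) + fderiv ℝ Φ b (a - b)| := by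
              ring_nf
          _ ≤ _ := abs_add_le _ _
      calc |Φ b - Φ a| ≤ C₂ * ‖a - b‖ ^ 2 + ‖gradient Φ b‖ * (‖v‖ / R) := by
            refine le_trans h1 (add_le_add htay hLbd)
        _ = ‖gradient Φ b‖ * (‖v‖ / R) + C₂ * (‖v‖ / R) ^ 2 := by rw [hnab]; ring
    have hDsq : |Φ b - Φ a| ^ 2 ≤
        2 * ‖gradient Φ b‖ ^ 2 * ‖v‖ ^ 2 / R ^ 2 + 2 * C₂ ^ 2 * ‖v‖ ^ 4 / R ^ 4 := by
      have h2 : |Φ b - Φ a| ^ 2 ≤ (‖gradient Φ b‖ * (‖v‖ / R) + C₂ * (‖v‖ / R) ^ 2) ^ 2 :=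
        pow_le_pow_left₀ (abs_nonneg _) hD 2
      calc |Φ b - Φ a| ^ 2 ≤ (‖gradient Φ b‖ * (‖v‖ / R) + C₂ * (‖v‖ / R) ^ 2) ^ 2 := h2
        _ ≤ 2 * (‖gradient Φ b‖ * (‖v‖ / R)) ^ 2 + 2 * (C₂ * (‖v‖ / R) ^ 2) ^ 2 := by
            nlinarith [sq_nonneg (‖gradient Φ b‖ * (‖v‖ / R) - C₂ * (‖v‖ / R) ^ 2)]
        _ = 2 * ‖gradient Φ b‖ ^ 2 * ‖v‖ ^ 2 / R ^ 2 + 2 * C₂ ^ 2 * ‖v‖ ^ 4 / R ^ 4 := by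
            field_simp
    have he : (0:ℝ) ≤ Real.exp (-(γ * ‖v‖)) := (Real.exp_pos _).le
    have step1 : Real.exp (-(γ * ‖v‖)) * |Φ b - Φ a| ^ 2 ≤
        2 * ‖gradient Φ b‖ ^ 2 / R ^ 2 * (‖v‖ ^ 2 * Real.exp (-(γ * ‖v‖)))
        + 2 * C₂ ^ 2 / R ^ 4 * (‖v‖ ^ 4 * Real.exp (-(γ * ‖v‖))) := by
      have := mul_le_mul_of_nonneg_left hDsq he
      calc Real.exp (-(γ * ‖v‖)) * |Φ b - Φ a| ^ 2 ≤
          Real.exp (-(γ * ‖v‖)) * (2 * ‖gradient Φ b‖ ^ 2 * ‖v‖ ^ 2 / R ^ 2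
            + 2 * C₂ ^ 2 * ‖v‖ ^ 4 / R ^ 4) := this
        _ = 2 * ‖gradient Φ b‖ ^ 2 / R ^ 2 * (‖v‖ ^ 2 * Real.exp (-(γ * ‖v‖)))
            + 2 * C₂ ^ 2 / R ^ 4 * (‖v‖ ^ 4 * Real.exp (-(γ * ‖v‖))) := by ring
    refine le_trans step1 (add_le_add (le_refl _) ?_)
    -- need: 2C₂²/R⁴ * (‖v‖⁴ e) ≤ 2C₂²/R⁴ * (ind * (‖v‖⁴ e) + e' * (‖v‖⁴ e''))
    have hfac : (0:ℝ) ≤ 2 * C₂ ^ 2 / R ^ 4 := by positivity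
    refine mul_le_mul_of_nonneg_left ?_ hfac
    by_cases hx2 : ‖x‖ ≤ 2 * R * K
    · have hind1 : (closedBall (0 : EuclideanSpace ℝ (Fin 2)) (2 * R * K)).indicator
          (fun _ => (1 : ℝ)) x = 1 := by
        rw [Set.indicator_of_mem]
        rw [mem_closedBall_zero_iff]; exact hx2
      rw [hind1, one_mul]
      have : (0:ℝ) ≤ Real.exp (-(γ / 4 * ‖x‖)) * (‖v‖ ^ 4 * Real.exp (-(γ / 2 * ‖v‖))) := by
        positivity
      linarith
    · have hind0' : (closedBall (0 : EuclideanSpace ℝ (Fin 2)) (2 * R * K)).indicator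
          (fun _ => (1 : ℝ)) x = 0 := by
        rw [Set.indicator_of_notMem]
        rw [mem_closedBall_zero_iff]; exact hx2
      rw [hind0', zero_mul, zero_add]
      -- ‖x‖ ≤ 2‖v‖ here
      have hx2' : ‖x‖ ≤ 2 * ‖v‖ := by
        push_neg at hx2
        linarith
      have hexp : Real.exp (-(γ * ‖v‖)) ≤ Real.exp (-(γ / 4 * ‖x‖)) * Real.exp (-(γ / 2 * ‖v‖)) := by
        rw [← Real.exp_add]
        apply Real.exp_le_exp.2
        have h6 := mul_le_mul_of_nonneg_left hx2' (by linarith : (0:ℝ) ≤ γ / 4)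
        linarith
      calc ‖v‖ ^ 4 * Real.exp (-(γ * ‖v‖))
          ≤ ‖v‖ ^ 4 * (Real.exp (-(γ / 4 * ‖x‖)) * Real.exp (-(γ / 2 * ‖v‖))) := by
            exact mul_le_mul_of_nonneg_left hexp (by positivity)
        _ = Real.exp (-(γ / 4 * ‖x‖)) * (‖v‖ ^ 4 * Real.exp (-(γ / 2 * ‖v‖))) := by ring
  · -- far regime : everything vanishes
    push_neg at hcase
    have h1 : K < ‖R⁻¹ • x‖ := by
      rw [norm_smul, norm_inv, Real.norm_eq_abs, abs_of_pos hR, inv_mul_eq_div, lt_div_iff₀ hR]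
      nlinarith [norm_nonneg v]
    have h2 : K < ‖R⁻¹ • (x - v)‖ := by
      rw [norm_smul, norm_inv, Real.norm_eq_abs, abs_of_pos hR, inv_mul_eq_div, lt_div_iff₀ hR]
      have := norm_sub_norm_le x v
      nlinarith
    have e1 := (grad_zero_outside hsupp h1).1
    have e2 := (grad_zero_outside hsupp h2).1
    rw [e1, e2, sub_zero, abs_zero]
    have : (0:ℝ) ≤ 2 * ‖gradient Φ (R⁻¹ • x)‖ ^ 2 / R ^ 2 * (‖v‖ ^ 2 * Real.exp (-(γ * ‖v‖))) := by
      positivity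
    have h3 : (0:ℝ) ≤ 2 * C₂ ^ 2 / R ^ 4 *
        ((closedBall (0 : EuclideanSpace ℝ (Fin 2)) (2 * R * K)).indicator
            (fun _ => (1 : ℝ)) x * (‖v‖ ^ 4 * Real.exp (-(γ * ‖v‖)))
          + Real.exp (-(γ / 4 * ‖x‖)) * (‖v‖ ^ 4 * Real.exp (-(γ / 2 * ‖v‖)))) := by
      have : (0:ℝ) ≤ (‖v‖ ^ 4 * Real.exp (-(γ * ‖v‖))) := by positivity
      have h4 : (0:ℝ) ≤ Real.exp (-(γ / 4 * ‖x‖)) * (‖v‖ ^ 4 * Real.exp (-(γ / 2 * ‖v‖))) := by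
        positivity
      have h5 : (0:ℝ) ≤ 2 * C₂ ^ 2 / R ^ 4 := by positivity
      exact mul_nonneg h5 (add_nonneg (mul_nonneg hind0 this) h4)
    simp only [ne_eq, OfNat.ofNat_ne_zero, not_false_eq_true, zero_pow, mul_zero]
    linarith

/-- For a `C²` test function `Φ : ℝ² → ℝ` supported in the disk of radius `K`, with
`0 ≤ Φ ≤ 1` and bounded first and second derivatives, setting `Φ_R(x) = Φ(x/R)`,
`limsup_{R→∞} ∫∫ e^{-γ|x-y|} |Φ_R(x) - Φ_R(y)|² dx dy
   ≤ 2 (∫ |v|² e^{-γ|v|} dv) ∫ ‖∇Φ‖²`. -/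
theorem stmt_5 (γ K : ℝ) (hγ : 0 < γ) (hK : 0 < K)
    (Φ : EuclideanSpace ℝ (Fin 2) → ℝ)
    (hΦ : ContDiff ℝ 2 Φ)
    (hsupp : tsupport Φ ⊆ closedBall 0 K)
    (hΦ01 : ∀ x, 0 ≤ Φ x ∧ Φ x ≤ 1)
    (hgrad : ∃ C₁, ∀ z, ‖gradient Φ z‖ ≤ C₁)
    (hhess : ∃ C₂, ∀ z, ‖fderiv ℝ (fderiv ℝ Φ) z‖ ≤ C₂) :
    limsup (fun R : ℝ =>
        ∫ x : EuclideanSpace ℝ (Fin 2), ∫ y : EuclideanSpace ℝ (Fin 2),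
          Real.exp (-γ * ‖x - y‖) * |Φ (R⁻¹ • x) - Φ (R⁻¹ • y)| ^ 2) atTop
      ≤ 2 * (∫ v : EuclideanSpace ℝ (Fin 2), ‖v‖ ^ 2 * Real.exp (-γ * ‖v‖))
          * ∫ u, ‖gradient Φ u‖ ^ 2 := by
  classical
  obtain ⟨C₂, hC₂⟩ := hhess
  simp only [neg_mul]
  set I₂ : ℝ := ∫ v : EuclideanSpace ℝ (Fin 2), ‖v‖ ^ 2 * Real.exp (-(γ * ‖v‖)) with hI₂
  set G : ℝ := ∫ u : EuclideanSpace ℝ (Fin 2), ‖gradient Φ u‖ ^ 2 with hG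
  set I₄ : ℝ := ∫ v : EuclideanSpace ℝ (Fin 2), ‖v‖ ^ 4 * Real.exp (-(γ * ‖v‖)) with hI₄
  set I₄' : ℝ := ∫ v : EuclideanSpace ℝ (Fin 2), ‖v‖ ^ 4 * Real.exp (-(γ / 2 * ‖v‖)) with hI₄'
  set E₀ : ℝ := ∫ x : EuclideanSpace ℝ (Fin 2), Real.exp (-(γ / 4 * ‖x‖)) with hE₀
  set c₀ : ℝ := (volume (ball (0 : EuclideanSpace ℝ (Fin 2)) 1)).toReal with hc₀
  have hγ2 : 0 < γ / 2 := by linarith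
  have hγ4 : 0 < γ / 4 := by linarith
  have hi2 := integrable_pow_exp 2 hγ
  have hi4 := integrable_pow_exp 4 hγ
  have hi4' := integrable_pow_exp 4 hγ2
  have hi0 : Integrable (fun x : EuclideanSpace ℝ (Fin 2) => Real.exp (-(γ / 4 * ‖x‖))) := by
    simpa using integrable_pow_exp 0 hγ4
  have key : ∀ R : ℝ, 0 < R →
      (∫ x : EuclideanSpace ℝ (Fin 2), ∫ y : EuclideanSpace ℝ (Fin 2),
        Real.exp (-(γ * ‖x - y‖)) * |Φ (R⁻¹ • x) - Φ (R⁻¹ • y)| ^ 2)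
      ≤ 2 * I₂ * G + 2 * C₂ ^ 2 * I₄ * (4 * K ^ 2 * c₀) / R ^ 2
          + 2 * C₂ ^ 2 * I₄' * E₀ / R ^ 4 := by
    intro R hR
    set ind : EuclideanSpace ℝ (Fin 2) → ℝ :=
      (closedBall (0 : EuclideanSpace ℝ (Fin 2)) (2 * R * K)).indicator (fun _ => (1:ℝ))
      with hind
    have hindint : Integrable ind := by
      rw [hind, integrable_indicator_iff measurableSet_closedBall]
      exact integrableOn_const measure_closedBall_lt_top.ne
    have hgc : Continuous fun x : EuclideanSpace ℝ (Fin 2) => ‖gradient Φ (R⁻¹ • x)‖ ^ 2 := by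
      have h1 : Continuous (gradient Φ) := by
        have h2 : Continuous (fderiv ℝ Φ) := (hΦ.fderiv_right (m := 1) (by norm_num)).continuous
        exact (InnerProductSpace.toDual ℝ (EuclideanSpace ℝ (Fin 2))).symm.continuous.comp h2
      fun_prop
    have hgint : Integrable (fun x : EuclideanSpace ℝ (Fin 2) => ‖gradient Φ (R⁻¹ • x)‖ ^ 2) := by
      refine hgc.integrable_of_hasCompactSupport
        (HasCompactSupport.intro (isCompact_closedBall 0 (R * K)) (fun x hx => ?_))
      have hx' : R * K < ‖x‖ := by
        by_contra h
        exact hx (mem_closedBall_zero_iff.2 (not_lt.1 h))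
      have hKx : K < ‖R⁻¹ • x‖ := by
        rw [norm_smul, norm_inv, Real.norm_eq_abs, abs_of_pos hR, inv_mul_eq_div,
          lt_div_iff₀ hR]
        linarith [mul_comm R K]
      rw [(grad_zero_outside hsupp hKx).2]
      simp
    set H : EuclideanSpace ℝ (Fin 2) → ℝ := fun x =>
      2 * ‖gradient Φ (R⁻¹ • x)‖ ^ 2 / R ^ 2 * I₂
        + 2 * C₂ ^ 2 / R ^ 4 * (ind x * I₄ + Real.exp (-(γ / 4 * ‖x‖)) * I₄') with hH
    have hHint : Integrable H := by
      rw [hH]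
      refine Integrable.add ?_ (((hindint.mul_const I₄).add (hi0.mul_const I₄')).const_mul _)
      exact (hgint.mul_const (I₂ * 2 / R ^ 2)).congr (Eventually.of_forall fun x => by ring)
    have hinner : ∀ x : EuclideanSpace ℝ (Fin 2),
        (∫ y : EuclideanSpace ℝ (Fin 2),
          Real.exp (-(γ * ‖x - y‖)) * |Φ (R⁻¹ • x) - Φ (R⁻¹ • y)| ^ 2) ≤ H x := by
      intro x
      have htrans : (∫ y : EuclideanSpace ℝ (Fin 2),
            Real.exp (-(γ * ‖x - y‖)) * |Φ (R⁻¹ • x) - Φ (R⁻¹ • y)| ^ 2)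
          = ∫ v : EuclideanSpace ℝ (Fin 2),
            Real.exp (-(γ * ‖v‖)) * |Φ (R⁻¹ • x) - Φ (R⁻¹ • (x - v))| ^ 2 := by
        rw [← integral_sub_left_eq_self (fun y : EuclideanSpace ℝ (Fin 2) =>
          Real.exp (-(γ * ‖x - y‖)) * |Φ (R⁻¹ • x) - Φ (R⁻¹ • y)| ^ 2) volume x]
        congr 1
        funext v
        rw [show x - (x - v) = v by abel]
      rw [htrans]
      have hb1 : Integrable (fun v : EuclideanSpace ℝ (Fin 2) =>
          ind x * (‖v‖ ^ 4 * Real.exp (-(γ * ‖v‖)))) := hi4.const_mul _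
      have hb2 : Integrable (fun v : EuclideanSpace ℝ (Fin 2) =>
          Real.exp (-(γ / 4 * ‖x‖)) * (‖v‖ ^ 4 * Real.exp (-(γ / 2 * ‖v‖)))) :=
        hi4'.const_mul _
      have hb : Integrable (fun v : EuclideanSpace ℝ (Fin 2) =>
          ind x * (‖v‖ ^ 4 * Real.exp (-(γ * ‖v‖)))
            + Real.exp (-(γ / 4 * ‖x‖)) * (‖v‖ ^ 4 * Real.exp (-(γ / 2 * ‖v‖)))) :=
        hb1.add hb2
      have hA : Integrable (fun v : EuclideanSpace ℝ (Fin 2) =>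
          2 * ‖gradient Φ (R⁻¹ • x)‖ ^ 2 / R ^ 2 * (‖v‖ ^ 2 * Real.exp (-(γ * ‖v‖)))) :=
        hi2.const_mul _
      have hB : Integrable (fun v : EuclideanSpace ℝ (Fin 2) =>
          2 * C₂ ^ 2 / R ^ 4 * (ind x * (‖v‖ ^ 4 * Real.exp (-(γ * ‖v‖)))
            + Real.exp (-(γ / 4 * ‖x‖)) * (‖v‖ ^ 4 * Real.exp (-(γ / 2 * ‖v‖))))) :=
        hb.const_mul _
      have hmaj : Integrable (fun v : EuclideanSpace ℝ (Fin 2) =>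
          2 * ‖gradient Φ (R⁻¹ • x)‖ ^ 2 / R ^ 2 * (‖v‖ ^ 2 * Real.exp (-(γ * ‖v‖)))
          + 2 * C₂ ^ 2 / R ^ 4 * (ind x * (‖v‖ ^ 4 * Real.exp (-(γ * ‖v‖)))
              + Real.exp (-(γ / 4 * ‖x‖)) * (‖v‖ ^ 4 * Real.exp (-(γ / 2 * ‖v‖))))) :=
        hA.add hB
      have hmono := integral_mono_of_nonneg
        (Eventually.of_forall (fun v => by positivity)) hmaj
        (Eventually.of_forall (fun v => pointwiseP hΦ hγ hK hsupp hC₂ hR x v))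
      refine le_trans hmono (le_of_eq ?_)
      rw [integral_add hA hB, integral_const_mul, integral_const_mul, integral_add hb1 hb2,
        integral_const_mul, integral_const_mul, hH]
    have hHint' : Integrable (fun x : EuclideanSpace ℝ (Fin 2) =>
        2 * ‖gradient Φ (R⁻¹ • x)‖ ^ 2 / R ^ 2 * I₂
          + 2 * C₂ ^ 2 / R ^ 4 * (ind x * I₄ + Real.exp (-(γ / 4 * ‖x‖)) * I₄')) := by
      rw [hH] at hHint; exact hHint
    have houter := integral_mono_of_nonneg
      (Eventually.of_forall (fun x => integral_nonneg (fun y => by positivity))) hHint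
      (Eventually.of_forall hinner)
    refine le_trans houter (le_of_eq ?_)
    have hsc : ∫ x : EuclideanSpace ℝ (Fin 2), ‖gradient Φ (R⁻¹ • x)‖ ^ 2 = R ^ 2 * G := by
      rw [hG, Measure.integral_comp_inv_smul_of_nonneg volume
        (fun u : EuclideanSpace ℝ (Fin 2) => ‖gradient Φ u‖ ^ 2) hR.le,
        finrank_euclideanSpace_fin, smul_eq_mul]
    have hiv : ∫ x : EuclideanSpace ℝ (Fin 2), ind x = (2 * R * K) ^ 2 * c₀ := by
      rw [hind, integral_indicator_const _ measurableSet_closedBall, smul_eq_mul, mul_one, measureReal_def,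
        Measure.addHaar_closedBall volume 0 (by positivity), finrank_euclideanSpace_fin,
        ENNReal.toReal_mul, ENNReal.toReal_ofReal (by positivity), hc₀]
    rw [hH]
    have hc1 : Integrable (fun x : EuclideanSpace ℝ (Fin 2) =>
        2 * ‖gradient Φ (R⁻¹ • x)‖ ^ 2 / R ^ 2 * I₂) :=
      (hgint.mul_const (I₂ * 2 / R ^ 2)).congr (Eventually.of_forall fun x => by ring)
    have hc2 : Integrable (fun x : EuclideanSpace ℝ (Fin 2) => ind x * I₄) :=
      hindint.mul_const I₄
    have hc3 : Integrable (fun x : EuclideanSpace ℝ (Fin 2) =>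
        Real.exp (-(γ / 4 * ‖x‖)) * I₄') := hi0.mul_const I₄'
    have hc4 : Integrable (fun x : EuclideanSpace ℝ (Fin 2) =>
        2 * C₂ ^ 2 / R ^ 4 * (ind x * I₄ + Real.exp (-(γ / 4 * ‖x‖)) * I₄')) :=
      (hc2.add hc3).const_mul _
    rw [integral_add hc1 hc4]
    have e1 : ∫ x : EuclideanSpace ℝ (Fin 2),
        2 * ‖gradient Φ (R⁻¹ • x)‖ ^ 2 / R ^ 2 * I₂ = 2 * I₂ * G := by
      have : (fun x : EuclideanSpace ℝ (Fin 2) =>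
          2 * ‖gradient Φ (R⁻¹ • x)‖ ^ 2 / R ^ 2 * I₂)
          = fun x : EuclideanSpace ℝ (Fin 2) =>
            (2 / R ^ 2 * I₂) * ‖gradient Φ (R⁻¹ • x)‖ ^ 2 := by
        funext x; ring
      rw [this, integral_const_mul, hsc]
      field_simp
    have e2 : ∫ x : EuclideanSpace ℝ (Fin 2),
        2 * C₂ ^ 2 / R ^ 4 * (ind x * I₄ + Real.exp (-(γ / 4 * ‖x‖)) * I₄')
        = 2 * C₂ ^ 2 * I₄ * (4 * K ^ 2 * c₀) / R ^ 2 + 2 * C₂ ^ 2 * I₄' * E₀ / R ^ 4 := by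
      rw [integral_const_mul, integral_add hc2 hc3,
        integral_mul_const, integral_mul_const, hiv, ← hE₀]
      field_simp
      ring
    rw [e1, e2]
    ring
  -- limsup step
  have hf0 : ∀ R : ℝ, 0 ≤ ∫ x : EuclideanSpace ℝ (Fin 2), ∫ y : EuclideanSpace ℝ (Fin 2),
      Real.exp (-(γ * ‖x - y‖)) * |Φ (R⁻¹ • x) - Φ (R⁻¹ • y)| ^ 2 :=
    fun R => integral_nonneg fun x => integral_nonneg fun y => by positivity
  set B₁ : ℝ := 2 * C₂ ^ 2 * I₄ * (4 * K ^ 2 * c₀) with hB₁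
  set B₂ : ℝ := 2 * C₂ ^ 2 * I₄' * E₀ with hB₂
  have hev : ∀ᶠ R in (atTop : Filter ℝ),
      (∫ x : EuclideanSpace ℝ (Fin 2), ∫ y : EuclideanSpace ℝ (Fin 2),
        Real.exp (-(γ * ‖x - y‖)) * |Φ (R⁻¹ • x) - Φ (R⁻¹ • y)| ^ 2)
      ≤ 2 * I₂ * G + B₁ / R ^ 2 + B₂ / R ^ 4 :=
    eventually_atTop.2 ⟨1, fun R hR => key R (lt_of_lt_of_le one_pos hR)⟩
  have htend : Tendsto (fun R : ℝ => 2 * I₂ * G + B₁ / R ^ 2 + B₂ / R ^ 4) atTop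
      (nhds (2 * I₂ * G)) := by
    have h1 : Tendsto (fun R : ℝ => B₁ / R ^ 2) atTop (nhds 0) :=
      tendsto_const_nhds.div_atTop (tendsto_pow_atTop two_ne_zero)
    have h2 : Tendsto (fun R : ℝ => B₂ / R ^ 4) atTop (nhds 0) :=
      tendsto_const_nhds.div_atTop (tendsto_pow_atTop four_ne_zero)
    simpa using (tendsto_const_nhds.add h1).add h2
  calc limsup (fun R : ℝ =>
        ∫ x : EuclideanSpace ℝ (Fin 2), ∫ y : EuclideanSpace ℝ (Fin 2),
          Real.exp (-(γ * ‖x - y‖)) * |Φ (R⁻¹ • x) - Φ (R⁻¹ • y)| ^ 2) atTop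
      ≤ limsup (fun R : ℝ => 2 * I₂ * G + B₁ / R ^ 2 + B₂ / R ^ 4) atTop :=
        limsup_le_limsup hev (isCoboundedUnder_le_of_le atTop hf0)
          htend.isBoundedUnder_le
    _ = 2 * I₂ * G := htend.limsup_eq
end

section
/- Let ε > 0, C > 0, and δ > 0. There exists a twice continuously differentiable function φ : ℝ² → ℝ with compact support such that 0 ≤ φ ≤ 1, φ(x) = 1 for all |x| ≤ 1, and ∫_{ℝ²} ∫_{ℝ²} |φ(x) − φ(y)|² C (1 + |x − y|)^{−(4+ε)} dm(x) dm(y) < δ. -/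
open MeasureTheory Set Metric
noncomputable section
namespace Stmt12


/-- Global Lipschitz bound for `Real.smoothTransition`. -/
lemma exists_K : ∃ K : ℝ, 1 ≤ K ∧
    ∀ a b : ℝ, |Real.smoothTransition a - Real.smoothTransition b| ≤ K * |a - b| := by
  set g : ℝ → ℝ := fun t => Real.smoothTransition t * Real.smoothTransition (2 - t) with hg
  have hsupp : HasCompactSupport g := by
    apply HasCompactSupport.intro (isCompact_Icc (a := (0:ℝ)) (b := 2))
    intro t ht
    simp only [Set.mem_Icc, not_and_or, not_le] at ht
    rcases ht with h | h
    · simp [hg, Real.smoothTransition.zero_of_nonpos h.le]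
    · simp [hg, Real.smoothTransition.zero_of_nonpos (by linarith : 2 - t ≤ 0)]
  have hcd : ContDiff ℝ 1 g :=
    Real.smoothTransition.contDiff.mul
      (Real.smoothTransition.contDiff.comp (contDiff_const.sub contDiff_id))
  obtain ⟨C, hC⟩ := ContDiff.lipschitzWith_of_hasCompactSupport hsupp hcd one_ne_zero
  refine ⟨max C 1, le_max_right _ _, fun a b => ?_⟩
  have key : ∀ t : ℝ, Real.smoothTransition t = g (min 1 (max 0 t)) := by
    intro t
    rcases le_total t 0 with h | h
    · have h0 : min 1 (max 0 t) = 0 := by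
        rw [max_eq_left h]; simp
      rw [h0, Real.smoothTransition.zero_of_nonpos h]
      simp [hg, Real.smoothTransition.zero]
    · rcases le_total 1 t with h1 | h1
      · have h0 : min 1 (max 0 t) = 1 := by
          rw [max_eq_right h]; exact min_eq_left h1
        rw [h0, Real.smoothTransition.one_of_one_le h1]
        simp [hg, Real.smoothTransition.one,
          Real.smoothTransition.one_of_one_le (by norm_num : (1:ℝ) ≤ 2 - 1)]
      · have h0 : min 1 (max 0 t) = t := by
          rw [max_eq_right h]; exact min_eq_right h1
        rw [h0]
        simp [hg, Real.smoothTransition.one_of_one_le (by linarith : (1:ℝ) ≤ 2 - t)]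
  rw [key a, key b]
  have h1 : |g (min 1 (max 0 a)) - g (min 1 (max 0 b))|
      ≤ (C : ℝ) * |min 1 (max 0 a) - min 1 (max 0 b)| := by
    have := hC.dist_le_mul (min 1 (max 0 a)) (min 1 (max 0 b))
    simpa [Real.dist_eq] using this
  have h2 : |min 1 (max 0 a) - min 1 (max 0 b)| ≤ |a - b| := by
    refine (abs_min_sub_min_le_max 1 (max 0 a) 1 (max 0 b)).trans ?_
    have : |max 0 a - max 0 b| ≤ |a - b| := by
      rw [max_comm 0 a, max_comm 0 b]; exact abs_max_sub_max_le_abs a b 0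
    simpa using this
  calc |g (min 1 (max 0 a)) - g (min 1 (max 0 b))|
      ≤ (C : ℝ) * |a - b| := h1.trans (by gcongr)
    _ ≤ max (C : ℝ) 1 * |a - b| := by gcongr; exact le_max_left _ _

/-- `|log a - log b| ≤ |a-b| / min a b` for positive `a b`. -/
lemma log_diff {a b : ℝ} (ha : 0 < a) (hb : 0 < b) :
    |Real.log a - Real.log b| ≤ |a - b| / min a b := by
  wlog hab : b ≤ a generalizing a b
  · rw [abs_sub_comm, abs_sub_comm a b, min_comm]
    exact this hb ha (le_of_not_ge hab)
  rw [abs_of_nonneg (sub_nonneg.2 (Real.log_le_log hb hab)),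
    abs_of_nonneg (sub_nonneg.2 hab), min_eq_right hab,
    ← Real.log_div ha.ne' hb.ne']
  have h := Real.log_le_sub_one_of_pos (div_pos ha hb)
  have : a / b - 1 = (a - b) / b := by field_simp
  linarith [this ▸ h]


abbrev E2 := EuclideanSpace ℝ (Fin 2)

def phi (R : ℝ) (x : E2) : ℝ := Real.smoothTransition (2 - Real.log ‖x‖ / Real.log R)

variable {R : ℝ}

lemma phi_one (hR : 1 < R) {x : E2} (h : ‖x‖ ≤ R) : phi R x = 1 := by
  have hL : 0 < Real.log R := Real.log_pos hR
  have hlog : Real.log ‖x‖ ≤ Real.log R := by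
    rcases le_or_gt ‖x‖ 1 with h1 | h1
    · exact (Real.log_nonpos (norm_nonneg _) h1).trans hL.le
    · exact Real.log_le_log (by linarith) h
  apply Real.smoothTransition.one_of_one_le
  have : Real.log ‖x‖ / Real.log R ≤ 1 := (div_le_one hL).2 hlog
  linarith

lemma phi_zero (hR : 1 < R) {x : E2} (h : R ^ 2 ≤ ‖x‖) : phi R x = 0 := by
  have hL : 0 < Real.log R := Real.log_pos hR
  have hlog : 2 * Real.log R ≤ Real.log ‖x‖ := by
    have : Real.log (R ^ 2) ≤ Real.log ‖x‖ := Real.log_le_log (by positivity) h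
    simpa [Real.log_pow] using this
  apply Real.smoothTransition.zero_of_nonpos
  have : 2 ≤ Real.log ‖x‖ / Real.log R := by
    rw [le_div_iff₀ hL]; linarith
  linarith

lemma phi_mem (R : ℝ) (x : E2) : 0 ≤ phi R x ∧ phi R x ≤ 1 :=
  ⟨Real.smoothTransition.nonneg _, Real.smoothTransition.le_one _⟩

lemma phi_contDiff (hR : 1 < R) : ContDiff ℝ 2 (phi R) := by
  rw [contDiff_iff_contDiffAt]
  intro x
  by_cases hx : x = 0
  · have hev : ∀ᶠ y in nhds x, phi R y = 1 := by
      have hball : Metric.ball (0 : E2) R ∈ nhds x := by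
        apply Metric.isOpen_ball.mem_nhds
        rw [hx]
        exact Metric.mem_ball_self (by linarith)
      filter_upwards [hball] with y hy
      exact phi_one hR (le_of_lt (mem_ball_zero_iff.1 hy))
    exact contDiffAt_const.congr_of_eventuallyEq hev
  · have hn : ‖x‖ ≠ 0 := norm_ne_zero_iff.2 hx
    have h1 : ContDiffAt ℝ 2 (fun y : E2 => Real.log ‖y‖) x :=
      (Real.contDiffAt_log.2 hn).comp x (contDiffAt_norm (𝕜 := ℝ) hx)
    exact Real.smoothTransition.contDiff.contDiffAt.comp x
      (contDiffAt_const.sub (h1.div_const _))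

lemma phi_supp (hR : 1 < R) : HasCompactSupport (phi R) := by
  apply HasCompactSupport.intro (isCompact_closedBall (0 : E2) (R ^ 2))
  intro x hx
  exact phi_zero hR (le_of_lt (by simpa [mem_closedBall_zero_iff] using hx))

lemma phi_rep (hR : 1 < R) (x : E2) :
    phi R x = Real.smoothTransition (2 - Real.log (max ‖x‖ R) / Real.log R) := by
  have hL : 0 < Real.log R := Real.log_pos hR
  rcases le_total ‖x‖ R with h | h
  · rw [max_eq_right h, phi_one hR h, div_self hL.ne']
    norm_num [Real.smoothTransition.one]
  · rw [max_eq_left h]; rfl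

lemma phi_lip (hR : 1 < R) {K : ℝ} (hK : 1 ≤ K)
    (hlip : ∀ a b : ℝ, |Real.smoothTransition a - Real.smoothTransition b| ≤ K * |a - b|)
    (x y : E2) :
    |phi R x - phi R y| ≤ K / Real.log R * (‖x - y‖ / max R (min ‖x‖ ‖y‖)) := by
  have hR0 : (0:ℝ) < R := by linarith
  have hL : 0 < Real.log R := Real.log_pos hR
  set a : ℝ := max ‖x‖ R with ha
  set b : ℝ := max ‖y‖ R with hb
  have ha0 : 0 < a := lt_of_lt_of_le hR0 (le_max_right _ _)
  have hb0 : 0 < b := lt_of_lt_of_le hR0 (le_max_right _ _)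
  rw [phi_rep hR x, phi_rep hR y]
  refine (hlip _ _).trans ?_
  have habs : |2 - Real.log a / Real.log R - (2 - Real.log b / Real.log R)|
      = |Real.log a - Real.log b| / Real.log R := by
    rw [show 2 - Real.log a / Real.log R - (2 - Real.log b / Real.log R)
        = (Real.log b - Real.log a) / Real.log R from by ring,
      abs_div, abs_of_pos hL, abs_sub_comm]
  rw [habs]
  have h1 : |Real.log a - Real.log b| ≤ ‖x - y‖ / max R (min ‖x‖ ‖y‖) := by
    have hnum : |a - b| ≤ ‖x - y‖ := by
      refine (abs_max_sub_max_le_abs ‖x‖ ‖y‖ R).trans ?_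
      exact abs_norm_sub_norm_le x y
    have hden : min a b = max R (min ‖x‖ ‖y‖) := by
      rw [ha, hb, max_comm ‖x‖ R, max_comm ‖y‖ R]
      exact (max_min_distrib_left R ‖x‖ ‖y‖).symm
    have hm0 : 0 < min a b := lt_min ha0 hb0
    calc |Real.log a - Real.log b| ≤ |a - b| / min a b := log_diff ha0 hb0
      _ ≤ ‖x - y‖ / min a b := by gcongr
      _ = ‖x - y‖ / max R (min ‖x‖ ‖y‖) := by rw [hden]
  have hK0 : 0 < K := lt_of_lt_of_le one_pos hK
  calc K * (|Real.log a - Real.log b| / Real.log R)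
      = K / Real.log R * |Real.log a - Real.log b| := by ring
    _ ≤ K / Real.log R * (‖x - y‖ / max R (min ‖x‖ ‖y‖)) :=
        mul_le_mul_of_nonneg_left h1 (by positivity)

lemma pointwise (hR : 1 < R) {K : ℝ} (hK : 1 ≤ K)
    (hlip : ∀ a b : ℝ, |Real.smoothTransition a - Real.smoothTransition b| ≤ K * |a - b|)
    {q : ℝ} (hq : 0 < q) (x y : E2) :
    |phi R x - phi R y| ^ 2 ≤
      (if ‖x‖ ≤ 2 * R ^ 2 then ((max ‖x‖ R) ^ 2)⁻¹ else 0) * (2 * K / Real.log R) ^ 2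
          * ‖x - y‖ ^ 2
      + (max ‖x‖ R) ^ (-(2 + q)) * 2 ^ ((2:ℝ) + q) * ‖x - y‖ ^ ((2:ℝ) + q) := by
  have hR0 : (0:ℝ) < R := by linarith
  have hL : 0 < Real.log R := Real.log_pos hR
  set m := max ‖x‖ R with hm
  have hm0 : 0 < m := lt_of_lt_of_le hR0 (le_max_right _ _)
  have hmR : R ≤ m := le_max_right _ _
  set s := ‖x - y‖ with hs
  have hs0 : 0 ≤ s := norm_nonneg _
  have hT1 : 0 ≤ (if ‖x‖ ≤ 2 * R ^ 2 then ((max ‖x‖ R) ^ 2)⁻¹ else 0)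
      * (2 * K / Real.log R) ^ 2 * s ^ 2 := by
    have : 0 ≤ (if ‖x‖ ≤ 2 * R ^ 2 then ((max ‖x‖ R) ^ 2)⁻¹ else 0) := by
      split <;> positivity
    positivity
  have hT2 : 0 ≤ m ^ (-(2 + q)) * 2 ^ ((2:ℝ) + q) * s ^ ((2:ℝ) + q) := by positivity
  rcases le_or_gt s (m / 2) with hcase | hcase
  · by_cases hx2 : ‖x‖ ≤ 2 * R ^ 2
    · have hlb : m / 2 ≤ max R (min ‖x‖ ‖y‖) := by
        rcases le_total ‖x‖ R with h | h
        · have hmr : m = R := max_eq_right h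
          calc m / 2 ≤ R := by rw [hmr]; linarith
            _ ≤ max R (min ‖x‖ ‖y‖) := le_max_left _ _
        · have hmx : m = ‖x‖ := max_eq_left h
          have hxy : ‖x‖ - ‖y‖ ≤ s := (abs_le.1 (abs_norm_sub_norm_le x y)).2
          have hy : m / 2 ≤ ‖y‖ := by rw [hmx] at hcase ⊢; linarith
          refine le_max_of_le_right (le_min ?_ hy)
          rw [hmx]; linarith
      have hd2 : |phi R x - phi R y| ≤ 2 * K / Real.log R * s / m := by
        refine (phi_lip hR hK hlip x y).trans ?_
        have hdd : s / max R (min ‖x‖ ‖y‖) ≤ s / (m / 2) :=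
          div_le_div_of_nonneg_left hs0 (half_pos hm0) hlb
        calc K / Real.log R * (s / max R (min ‖x‖ ‖y‖))
            ≤ K / Real.log R * (s / (m / 2)) :=
              mul_le_mul_of_nonneg_left hdd (by positivity)
          _ = 2 * K / Real.log R * s / m := by field_simp
      have hsq : |phi R x - phi R y| ^ 2 ≤ (2 * K / Real.log R * s / m) ^ 2 :=
        pow_le_pow_left₀ (abs_nonneg _) hd2 2
      have heq : (2 * K / Real.log R * s / m) ^ 2
          = (m ^ 2)⁻¹ * (2 * K / Real.log R) ^ 2 * s ^ 2 := by
        field_simp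
      rw [if_pos hx2]
      refine hsq.trans ?_
      rw [heq]
      exact le_add_of_nonneg_right hT2
    · push_neg at hx2
      have hRR2 : R ≤ R ^ 2 := by nlinarith
      have hxR : R ≤ ‖x‖ := by nlinarith
      have hmx : m = ‖x‖ := max_eq_left hxR
      have hxR2 : R ^ 2 ≤ ‖x‖ := by nlinarith
      have hxy : ‖x‖ - ‖y‖ ≤ s := (abs_le.1 (abs_norm_sub_norm_le x y)).2
      have hy : R ^ 2 ≤ ‖y‖ := by
        rw [hmx] at hcase; nlinarith
      rw [phi_zero hR hxR2, phi_zero hR hy]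
      simpa using add_nonneg hT1 hT2
  · have hd1 : |phi R x - phi R y| ≤ 1 := by
      have hx' := phi_mem R x; have hy' := phi_mem R y
      rw [abs_le]; constructor <;> [linarith [hx'.1, hy'.2]; linarith [hx'.2, hy'.1]]
    have h1 : (1:ℝ) ≤ (2 * s / m) ^ ((2:ℝ) + q) := by
      apply Real.one_le_rpow ?_ (by positivity)
      rw [le_div_iff₀ hm0]; linarith
    have heq : (2 * s / m) ^ ((2:ℝ) + q)
        = m ^ (-(2 + q)) * 2 ^ ((2:ℝ) + q) * s ^ ((2:ℝ) + q) := by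
      rw [Real.div_rpow (by positivity) hm0.le, Real.mul_rpow (by norm_num) hs0,
        Real.rpow_neg hm0.le]
      ring
    have hle1 : |phi R x - phi R y| ^ 2 ≤ 1 := pow_le_one₀ (abs_nonneg _) hd1
    refine hle1.trans ?_
    refine le_add_of_nonneg_of_le hT1 ?_
    rw [← heq]; exact h1

lemma radial (f : ℝ → ℝ) :
    ∫ x : E2, f ‖x‖ =
      2 * (volume (Metric.ball (0:E2) 1)).toReal * ∫ t in Ioi (0:ℝ), t * f t := by
  have h := MeasureTheory.integral_fun_norm_addHaar (volume : Measure E2) f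
  rw [h, finrank_euclideanSpace_fin]
  simp only [smul_eq_mul, nsmul_eq_mul, Nat.cast_ofNat]
  norm_num [mul_assoc]
  left; simp [Measure.real]

lemma integrable_w1 (hR : 1 < R) :
    Integrable (fun x : E2 => if ‖x‖ ≤ 2 * R ^ 2 then ((max ‖x‖ R) ^ 2)⁻¹ else 0) := by
  have hR0 : (0:ℝ) < R := by linarith
  have hco : Continuous (fun x : E2 => ((max ‖x‖ R) ^ 2)⁻¹) := by
    apply Continuous.inv₀ ((continuous_norm.max continuous_const).pow 2)
    intro x
    exact pow_ne_zero 2 (ne_of_gt (lt_of_lt_of_le hR0 (le_max_right _ _)))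
  have heq : (fun x : E2 => if ‖x‖ ≤ 2 * R ^ 2 then ((max ‖x‖ R) ^ 2)⁻¹ else 0)
      = (Metric.closedBall (0:E2) (2 * R ^ 2)).indicator
          (fun x => ((max ‖x‖ R) ^ 2)⁻¹) := by
    funext x; simp [Set.indicator, mem_closedBall_zero_iff]
  rw [heq, integrable_indicator_iff measurableSet_closedBall]
  exact hco.continuousOn.integrableOn_compact (isCompact_closedBall _ _)

lemma integral_w1 (hR : 1 < R) (hL1 : 1 ≤ Real.log R) :
    ∫ x : E2, (if ‖x‖ ≤ 2 * R ^ 2 then ((max ‖x‖ R) ^ 2)⁻¹ else 0)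
      ≤ 2 * (volume (Metric.ball (0:E2) 1)).toReal * (3 * Real.log R) := by
  have hR0 : (0:ℝ) < R := by linarith
  have hV : (0:ℝ) ≤ 2 * (volume (Metric.ball (0:E2) 1)).toReal := by positivity
  rw [radial (fun t => if t ≤ 2 * R ^ 2 then ((max t R) ^ 2)⁻¹ else 0)]
  have h1d : (∫ t in Ioi (0:ℝ), t * (if t ≤ 2 * R ^ 2 then ((max t R) ^ 2)⁻¹ else 0))
      ≤ 3 * Real.log R := by
    have hRR2 : R ≤ 2 * R ^ 2 := by nlinarith
    have hψ : ∀ t ∈ Ioi (0:ℝ), t * (if t ≤ 2 * R ^ 2 then ((max t R) ^ 2)⁻¹ else 0)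
        = (Ioc (0:ℝ) R).indicator (fun t => t * (R ^ 2)⁻¹) t
          + (Ioc R (2 * R ^ 2)).indicator (fun t => t⁻¹) t := by
      intro t ht
      simp only [mem_Ioi] at ht
      by_cases h : t ≤ R
      · have hmem : t ∈ Ioc (0:ℝ) R := ⟨ht, h⟩
        have hnot : t ∉ Ioc R (2 * R ^ 2) := fun hc => absurd hc.1 (not_lt.2 h)
        rw [if_pos (h.trans hRR2), max_eq_right h, Set.indicator_of_mem hmem,
          Set.indicator_of_notMem hnot]
        ring
      · push_neg at h
        by_cases h2 : t ≤ 2 * R ^ 2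
        · have hmem : t ∈ Ioc R (2 * R ^ 2) := ⟨h, h2⟩
          have hnot : t ∉ Ioc (0:ℝ) R := fun hc => absurd h (not_lt.2 hc.2)
          rw [if_pos h2, max_eq_left h.le, Set.indicator_of_mem hmem,
            Set.indicator_of_notMem hnot]
          field_simp
          ring
        · have hnot : t ∉ Ioc (0:ℝ) R := fun hc => absurd h (not_lt.2 hc.2)
          have hnot2 : t ∉ Ioc R (2 * R ^ 2) := fun hc => absurd hc.2 h2
          rw [if_neg h2, Set.indicator_of_notMem hnot, Set.indicator_of_notMem hnot2]
          ring
    rw [setIntegral_congr_fun measurableSet_Ioi hψ]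
    have hi1 : Integrable ((Ioc (0:ℝ) R).indicator (fun t => t * (R ^ 2)⁻¹)) := by
      rw [integrable_indicator_iff measurableSet_Ioc]
      exact (continuous_id.mul continuous_const).integrableOn_Ioc
    have hi2 : Integrable ((Ioc R (2 * R ^ 2)).indicator (fun t : ℝ => t⁻¹)) := by
      rw [integrable_indicator_iff measurableSet_Ioc]
      have hc : ContinuousOn (fun t : ℝ => t⁻¹) (Icc R (2 * R ^ 2)) :=
        ContinuousOn.inv₀ continuousOn_id fun t ht => ne_of_gt (lt_of_lt_of_le hR0 ht.1)
      exact (hc.integrableOn_compact isCompact_Icc).mono_set Ioc_subset_Icc_self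
    rw [integral_add hi1.restrict hi2.restrict]
    have e1 : (∫ t in Ioi (0:ℝ), (Ioc (0:ℝ) R).indicator (fun t => t * (R ^ 2)⁻¹) t)
        = 1 / 2 := by
      rw [setIntegral_eq_integral_of_forall_compl_eq_zero
          (fun t ht => Set.indicator_of_notMem
            (fun hc => ht (mem_Ioi.2 hc.1)) _),
        integral_indicator measurableSet_Ioc,
        ← intervalIntegral.integral_of_le (by linarith : (0:ℝ) ≤ R)]
      rw [intervalIntegral.integral_mul_const, integral_id]
      field_simp
      ring
    have e2 : (∫ t in Ioi (0:ℝ), (Ioc R (2 * R ^ 2)).indicator (fun t : ℝ => t⁻¹) t)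
        = Real.log 2 + Real.log R := by
      rw [setIntegral_eq_integral_of_forall_compl_eq_zero
          (fun t ht => Set.indicator_of_notMem
            (fun hc => ht (mem_Ioi.2 (lt_trans hR0 hc.1))) _),
        integral_indicator measurableSet_Ioc,
        ← intervalIntegral.integral_of_le hRR2,
        integral_inv_of_pos hR0 (by positivity)]
      rw [show 2 * R ^ 2 / R = 2 * R from by field_simp,
        Real.log_mul (by norm_num) (ne_of_gt hR0)]
    rw [e1, e2]
    have hlog2 : Real.log 2 ≤ 1 := by
      have := Real.log_le_sub_one_of_pos (by norm_num : (0:ℝ) < 2)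
      linarith
    linarith
  calc 2 * (volume (Metric.ball (0:E2) 1)).toReal
        * ∫ t in Ioi (0:ℝ), t * (if t ≤ 2 * R ^ 2 then ((max t R) ^ 2)⁻¹ else 0)
      ≤ 2 * (volume (Metric.ball (0:E2) 1)).toReal * (3 * Real.log R) := by
        exact mul_le_mul_of_nonneg_left h1d hV

lemma max_ge_half (hR : 1 < R) (x : E2) : (1 + ‖x‖) / 2 ≤ max ‖x‖ R := by
  rcases le_total ‖x‖ R with h | h
  · have : (1 + ‖x‖) / 2 ≤ R := by
      have := norm_nonneg x
      nlinarith
    linarith [le_max_right ‖x‖ R, this, le_max_left ‖x‖ R]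
  · have : (1 + ‖x‖) / 2 ≤ ‖x‖ := by nlinarith [h, hR]
    calc (1 + ‖x‖) / 2 ≤ ‖x‖ := this
      _ ≤ max ‖x‖ R := le_max_left _ _

lemma w2_le (hR : 1 < R) {q : ℝ} (hq0 : 0 < q) (x : E2) :
    (max ‖x‖ R) ^ (-(2 + q)) ≤ 2 ^ ((2:ℝ) + q) * (1 + ‖x‖) ^ (-(2 + q)) := by
  have h2 : (0:ℝ) < (1 + ‖x‖) / 2 := by positivity
  have h := Real.rpow_le_rpow_of_nonpos h2 (max_ge_half hR x) (by linarith : -(2 + q) ≤ 0)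
  refine h.trans (le_of_eq ?_)
  rw [Real.div_rpow (by positivity) (by norm_num), Real.rpow_neg (by norm_num : (0:ℝ) ≤ 2),
    div_inv_eq_mul]
  ring

lemma integrable_w2 (hR : 1 < R) {q : ℝ} (hq0 : 0 < q) :
    Integrable (fun x : E2 => (max ‖x‖ R) ^ (-(2 + q))) := by
  have hR0 : (0:ℝ) < R := by linarith
  have hint : Integrable (fun x : E2 => 2 ^ ((2:ℝ) + q) * (1 + ‖x‖) ^ (-(2 + q))) := by
    apply Integrable.const_mul
    apply integrable_one_add_norm (μ := (volume : Measure E2))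
    rw [finrank_euclideanSpace_fin]
    norm_num; linarith
  apply hint.mono'
  · apply Continuous.aestronglyMeasurable
    apply Continuous.rpow_const (continuous_norm.max continuous_const)
    intro x
    exact Or.inl (ne_of_gt (lt_of_lt_of_le hR0 (le_max_right _ _)))
  · refine Filter.Eventually.of_forall fun x => ?_
    rw [Real.norm_eq_abs, abs_of_nonneg (Real.rpow_nonneg (by positivity) _)]
    exact w2_le hR hq0 x

lemma integral_w2 (hR : 1 < R) {q : ℝ} (hq0 : 0 < q) (hq1 : q ≤ 1 / 2) :
    ∫ x : E2, (max ‖x‖ R) ^ (-(2 + q))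
      ≤ 2 * (volume (Metric.ball (0:E2) 1)).toReal * (2 / q * R ^ (-q)) := by
  have hR0 : (0:ℝ) < R := by linarith
  have hV : (0:ℝ) ≤ 2 * (volume (Metric.ball (0:E2) 1)).toReal := by positivity
  rw [radial (fun t => (max t R) ^ (-(2 + q)))]
  have h1d : (∫ t in Ioi (0:ℝ), t * (max t R) ^ (-(2 + q))) ≤ 2 / q * R ^ (-q) := by
    have hψ : ∀ t ∈ Ioi (0:ℝ), t * (max t R) ^ (-(2 + q))
        = (Ioc (0:ℝ) R).indicator (fun t => t * R ^ (-(2 + q))) t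
          + (Ioi R).indicator (fun t => t ^ (-(1 + q))) t := by
      intro t ht
      simp only [mem_Ioi] at ht
      rcases le_or_gt t R with h | h
      · have hmem : t ∈ Ioc (0:ℝ) R := ⟨ht, h⟩
        have hnot : t ∉ Ioi R := fun hc => absurd (mem_Ioi.1 hc) (not_lt.2 h)
        rw [max_eq_right h, Set.indicator_of_mem hmem, Set.indicator_of_notMem hnot]
        ring
      · have hmem : t ∈ Ioi R := mem_Ioi.2 h
        have hnot : t ∉ Ioc (0:ℝ) R := fun hc => absurd h (not_lt.2 hc.2)
        rw [max_eq_left h.le, Set.indicator_of_mem hmem, Set.indicator_of_notMem hnot]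
        rw [show -(1 + q) = -(2 + q) + 1 from by ring, Real.rpow_add_one (ne_of_gt ht)]
        ring
    rw [setIntegral_congr_fun measurableSet_Ioi hψ]
    have hi1 : Integrable ((Ioc (0:ℝ) R).indicator (fun t => t * R ^ (-(2 + q)))) := by
      rw [integrable_indicator_iff measurableSet_Ioc]
      exact (continuous_id.mul continuous_const).integrableOn_Ioc
    have hi2 : Integrable ((Ioi R).indicator (fun t : ℝ => t ^ (-(1 + q)))) := by
      rw [integrable_indicator_iff measurableSet_Ioi]
      exact integrableOn_Ioi_rpow_of_lt (by linarith) hR0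
    rw [integral_add hi1.restrict hi2.restrict]
    have e1 : (∫ t in Ioi (0:ℝ), (Ioc (0:ℝ) R).indicator (fun t => t * R ^ (-(2 + q))) t)
        = R ^ (-q) / 2 := by
      rw [setIntegral_eq_integral_of_forall_compl_eq_zero
          (fun t ht => Set.indicator_of_notMem
            (fun hc => ht (mem_Ioi.2 hc.1)) _),
        integral_indicator measurableSet_Ioc,
        ← intervalIntegral.integral_of_le (by linarith : (0:ℝ) ≤ R),
        intervalIntegral.integral_mul_const, integral_id]
      rw [show R ^ (-q) = R ^ 2 * R ^ (-(2 + q)) from by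
        rw [← Real.rpow_natCast R 2, ← Real.rpow_add hR0]
        norm_num]
      ring
    have e2 : (∫ t in Ioi (0:ℝ), (Ioi R).indicator (fun t : ℝ => t ^ (-(1 + q))) t)
        = R ^ (-q) / q := by
      rw [setIntegral_eq_integral_of_forall_compl_eq_zero
          (fun t ht => Set.indicator_of_notMem
            (fun hc => ht (mem_Ioi.2 (lt_trans hR0 (mem_Ioi.1 hc)))) _),
        integral_indicator measurableSet_Ioi,
        integral_Ioi_rpow_of_lt (by linarith : -(1 + q) < -1) hR0]
      rw [show -(1 + q) + 1 = -q from by ring]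
      rw [div_neg, neg_div, neg_neg]
    rw [e1, e2]
    have hRq : (0:ℝ) ≤ R ^ (-q) := Real.rpow_nonneg hR0.le _
    have h12 : R ^ (-q) / 2 ≤ R ^ (-q) / q :=
      div_le_div_of_nonneg_left hRq hq0 (by linarith)
    have : 2 / q * R ^ (-q) = 2 * (R ^ (-q) / q) := by ring
    rw [this]
    linarith
  exact mul_le_mul_of_nonneg_left h1d hV

lemma integrable_h1 {C q : ℝ} (hC : 0 < C) (hq0 : 0 < q) :
    Integrable (fun z : E2 => ‖z‖ ^ 2 * (C * (1 + ‖z‖) ^ (-(4 + 2 * q)))) := by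
  have hdom : Integrable (fun z : E2 => C * (1 + ‖z‖) ^ (-(2 + q))) := by
    apply Integrable.const_mul
    apply integrable_one_add_norm (μ := (volume : Measure E2))
    rw [finrank_euclideanSpace_fin]
    norm_num; linarith
  apply hdom.mono'
  · apply Continuous.aestronglyMeasurable
    exact (continuous_norm.pow 2).mul (continuous_const.mul
      ((continuous_const.add continuous_norm).rpow_const
        (fun z => Or.inl (add_pos_of_pos_of_nonneg one_pos (norm_nonneg _)).ne')))
  · refine Filter.Eventually.of_forall fun z => ?_
    have hn : (0:ℝ) ≤ ‖z‖ := norm_nonneg z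
    have h1b : (1:ℝ) ≤ 1 + ‖z‖ := by linarith
    rw [Real.norm_eq_abs, abs_of_nonneg (by positivity)]
    have e1 : ‖z‖ ^ 2 ≤ (1 + ‖z‖) ^ 2 := by nlinarith
    have e2 : ((1 + ‖z‖):ℝ) ^ 2 * (1 + ‖z‖) ^ (-(4 + 2 * q))
        = (1 + ‖z‖) ^ (-(2 + 2 * q)) := by
      rw [← Real.rpow_natCast (1 + ‖z‖) 2, ← Real.rpow_add (by linarith)]
      congr 1
      push_cast
      ring
    calc ‖z‖ ^ 2 * (C * (1 + ‖z‖) ^ (-(4 + 2 * q)))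
        = C * (‖z‖ ^ 2 * (1 + ‖z‖) ^ (-(4 + 2 * q))) := by ring
      _ ≤ C * ((1 + ‖z‖) ^ 2 * (1 + ‖z‖) ^ (-(4 + 2 * q))) := by
          exact mul_le_mul_of_nonneg_left
            (mul_le_mul_of_nonneg_right e1 (Real.rpow_nonneg (by linarith) _)) hC.le
      _ = C * (1 + ‖z‖) ^ (-(2 + 2 * q)) := by rw [e2]
      _ ≤ C * (1 + ‖z‖) ^ (-(2 + q)) := mul_le_mul_of_nonneg_left
          (Real.rpow_le_rpow_of_exponent_le h1b (by linarith)) hC.le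

lemma integrable_h2 {C q : ℝ} (hC : 0 < C) (hq0 : 0 < q) :
    Integrable (fun z : E2 => ‖z‖ ^ ((2:ℝ) + q) * (C * (1 + ‖z‖) ^ (-(4 + 2 * q)))) := by
  have hdom : Integrable (fun z : E2 => C * (1 + ‖z‖) ^ (-(2 + q))) := by
    apply Integrable.const_mul
    apply integrable_one_add_norm (μ := (volume : Measure E2))
    rw [finrank_euclideanSpace_fin]
    norm_num; linarith
  apply hdom.mono'
  · apply Continuous.aestronglyMeasurable
    exact (continuous_norm.rpow_const (fun z => Or.inr (by linarith))).mul
      (continuous_const.mul ((continuous_const.add continuous_norm).rpow_const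
        (fun z => Or.inl (add_pos_of_pos_of_nonneg one_pos (norm_nonneg _)).ne')))
  · refine Filter.Eventually.of_forall fun z => ?_
    have hn : (0:ℝ) ≤ ‖z‖ := norm_nonneg z
    have h1b : (1:ℝ) ≤ 1 + ‖z‖ := by linarith
    rw [Real.norm_eq_abs, abs_of_nonneg (by positivity)]
    have e1 : ‖z‖ ^ ((2:ℝ) + q) ≤ (1 + ‖z‖) ^ ((2:ℝ) + q) :=
      Real.rpow_le_rpow hn (by linarith) (by linarith)
    have e2 : ((1 + ‖z‖):ℝ) ^ ((2:ℝ) + q) * (1 + ‖z‖) ^ (-(4 + 2 * q))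
        = (1 + ‖z‖) ^ (-(2 + q)) := by
      rw [← Real.rpow_add (by linarith : (0:ℝ) < 1 + ‖z‖)]
      congr 1
      ring
    calc ‖z‖ ^ ((2:ℝ) + q) * (C * (1 + ‖z‖) ^ (-(4 + 2 * q)))
        = C * (‖z‖ ^ ((2:ℝ) + q) * (1 + ‖z‖) ^ (-(4 + 2 * q))) := by ring
      _ ≤ C * ((1 + ‖z‖) ^ ((2:ℝ) + q) * (1 + ‖z‖) ^ (-(4 + 2 * q))) := by
          exact mul_le_mul_of_nonneg_left
            (mul_le_mul_of_nonneg_right e1 (Real.rpow_nonneg (by linarith) _)) hC.le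
      _ = C * (1 + ‖z‖) ^ (-(2 + q)) := by rw [e2]

end Stmt12

set_option maxHeartbeats 2000000

open Stmt12 in
/-- For every `ε > 0`, `C > 0`, `δ > 0` there is a `C²` compactly supported
`φ : ℝ² → ℝ` with `0 ≤ φ ≤ 1`, `φ = 1` on the unit disk, and
`∫∫ |φ(x) - φ(y)|² C(1+|x-y|)^{-(4+ε)} dx dy < δ`. -/
theorem stmt_12 (ε C δ : ℝ) (hε : 0 < ε) (hC : 0 < C) (hδ : 0 < δ) :
    ∃ φ : EuclideanSpace ℝ (Fin 2) → ℝ,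
      ContDiff ℝ 2 φ ∧ HasCompactSupport φ ∧
      (∀ x, 0 ≤ φ x ∧ φ x ≤ 1) ∧
      (∀ x, ‖x‖ ≤ 1 → φ x = 1) ∧
      (∫ x : EuclideanSpace ℝ (Fin 2), ∫ y : EuclideanSpace ℝ (Fin 2),
          |φ x - φ y| ^ 2 * (C * (1 + ‖x - y‖) ^ (-(4 + ε)))) < δ := by
  classical
  obtain ⟨K, hK, hlip⟩ := Stmt12.exists_K
  have hK0 : (0:ℝ) < K := lt_of_lt_of_le one_pos hK
  set q : ℝ := min ε 1 / 2 with hqdef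
  have hq0 : 0 < q := by
    have := lt_min hε one_pos
    rw [hqdef]; linarith
  have hq1 : q ≤ 1 / 2 := by
    have : min ε 1 ≤ 1 := min_le_right _ _
    rw [hqdef]; linarith
  have hqε : 2 * q ≤ ε := by
    have : min ε 1 ≤ ε := min_le_left _ _
    rw [hqdef]; linarith
  set N1 : ℝ := ∫ z : E2, ‖z‖ ^ 2 * (C * (1 + ‖z‖) ^ (-(4 + 2 * q))) with hN1def
  set N2 : ℝ := ∫ z : E2, ‖z‖ ^ ((2:ℝ) + q) * (C * (1 + ‖z‖) ^ (-(4 + 2 * q))) with hN2def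
  have hN1i := Stmt12.integrable_h1 (C := C) (q := q) hC hq0
  have hN2i := Stmt12.integrable_h2 (C := C) (q := q) hC hq0
  have hN1nn : 0 ≤ N1 := integral_nonneg fun z => by positivity
  have hN2nn : 0 ≤ N2 := integral_nonneg fun z => by positivity
  set V : ℝ := 2 * (volume (Metric.ball (0:E2) 1)).toReal with hVdef
  have hVnn : 0 ≤ V := by rw [hVdef]; positivity
  set P : ℝ := 12 * K ^ 2 * N1 * V with hPdef
  set Q : ℝ := 16 * N2 * V / q with hQdef
  have hPnn : 0 ≤ P := by rw [hPdef]; positivity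
  have hQnn : 0 ≤ Q := by rw [hQdef]; positivity
  set L0 : ℝ := 1 + 2 * P / δ + 2 * Q / (q * δ) with hL0def
  have hL0pos : 0 < L0 := by
    rw [hL0def]
    have h1 : 0 ≤ 2 * P / δ := by positivity
    have h2 : 0 ≤ 2 * Q / (q * δ) := by positivity
    linarith
  have hL0one : 1 ≤ L0 := by
    rw [hL0def]
    have h1 : 0 ≤ 2 * P / δ := by positivity
    have h2 : 0 ≤ 2 * Q / (q * δ) := by positivity
    linarith
  set R : ℝ := Real.exp L0 with hRdef
  have hlogR : Real.log R = L0 := by rw [hRdef, Real.log_exp]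
  have hR1 : 1 < R := by
    rw [hRdef]
    have := Real.add_one_le_exp L0
    linarith
  have hR0 : (0:ℝ) < R := by linarith
  have hL1 : 1 ≤ Real.log R := by rw [hlogR]; exact hL0one
  refine ⟨Stmt12.phi R, Stmt12.phi_contDiff hR1, Stmt12.phi_supp hR1,
    Stmt12.phi_mem R, fun x hx => Stmt12.phi_one hR1 (hx.trans (by linarith)), ?_⟩
  -- notation
  set L : ℝ := Real.log R with hLdef
  have hLpos : 0 < L := by rw [hlogR]; exact hL0pos
  set w1 : E2 → ℝ := fun x => if ‖x‖ ≤ 2 * R ^ 2 then ((max ‖x‖ R) ^ 2)⁻¹ else 0 with hw1def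
  set w2 : E2 → ℝ := fun x => (max ‖x‖ R) ^ (-(2 + q)) with hw2def
  set h1f : E2 → ℝ := fun z => ‖z‖ ^ 2 * (C * (1 + ‖z‖) ^ (-(4 + 2 * q))) with hh1def
  set h2f : E2 → ℝ := fun z => ‖z‖ ^ ((2:ℝ) + q) * (C * (1 + ‖z‖) ^ (-(4 + 2 * q))) with hh2def
  set A1 : E2 → ℝ := fun x => w1 x * (2 * K / L) ^ 2 with hA1def
  set A2 : E2 → ℝ := fun x => w2 x * 2 ^ ((2:ℝ) + q) with hA2def
  -- pointwise bound on the integrand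
  have hptF : ∀ x y : E2,
      |Stmt12.phi R x - Stmt12.phi R y| ^ 2 * (C * (1 + ‖x - y‖) ^ (-(4 + ε)))
        ≤ A1 x * h1f (x - y) + A2 x * h2f (x - y) := by
    intro x y
    have hs0 : (0:ℝ) ≤ ‖x - y‖ := norm_nonneg _
    have hker : ((1:ℝ) + ‖x - y‖) ^ (-(4 + ε)) ≤ (1 + ‖x - y‖) ^ (-(4 + 2 * q)) :=
      Real.rpow_le_rpow_of_exponent_le (by linarith) (by linarith)
    have h0 : |Stmt12.phi R x - Stmt12.phi R y| ^ 2 * (C * (1 + ‖x - y‖) ^ (-(4 + ε)))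
        ≤ |Stmt12.phi R x - Stmt12.phi R y| ^ 2 * (C * (1 + ‖x - y‖) ^ (-(4 + 2 * q))) :=
      mul_le_mul_of_nonneg_left (mul_le_mul_of_nonneg_left hker hC.le) (by positivity)
    refine h0.trans ?_
    have hpw := Stmt12.pointwise hR1 hK hlip hq0 x y
    have hkn : 0 ≤ C * (1 + ‖x - y‖) ^ (-(4 + 2 * q)) := by positivity
    calc |Stmt12.phi R x - Stmt12.phi R y| ^ 2 * (C * (1 + ‖x - y‖) ^ (-(4 + 2 * q)))
        ≤ ((if ‖x‖ ≤ 2 * R ^ 2 then ((max ‖x‖ R) ^ 2)⁻¹ else 0) * (2 * K / Real.log R) ^ 2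
              * ‖x - y‖ ^ 2
            + (max ‖x‖ R) ^ (-(2 + q)) * 2 ^ ((2:ℝ) + q) * ‖x - y‖ ^ ((2:ℝ) + q))
            * (C * (1 + ‖x - y‖) ^ (-(4 + 2 * q))) :=
          mul_le_mul_of_nonneg_right hpw hkn
      _ = A1 x * h1f (x - y) + A2 x * h2f (x - y) := by
          rw [hA1def, hA2def, hh1def, hh2def, hw1def, hw2def, hLdef]
          ring
  -- integrability of the dominating function in y, for each x
  have hGi : ∀ x : E2, Integrable
      (fun y => A1 x * h1f (x - y) + A2 x * h2f (x - y)) := fun x =>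
    ((hN1i.comp_sub_left x).const_mul _).add ((hN2i.comp_sub_left x).const_mul _)
  -- inner integral bound
  have hinner : ∀ x : E2,
      (∫ y : E2, |Stmt12.phi R x - Stmt12.phi R y| ^ 2 * (C * (1 + ‖x - y‖) ^ (-(4 + ε))))
        ≤ A1 x * N1 + A2 x * N2 := by
    intro x
    have step1 : (∫ y : E2,
          |Stmt12.phi R x - Stmt12.phi R y| ^ 2 * (C * (1 + ‖x - y‖) ^ (-(4 + ε))))
        ≤ ∫ y : E2, (A1 x * h1f (x - y) + A2 x * h2f (x - y)) := by
      refine integral_mono_of_nonneg (Filter.Eventually.of_forall fun y => ?_) (hGi x)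
        (Filter.Eventually.of_forall (hptF x))
      have : (0:ℝ) ≤ (1 + ‖x - y‖) ^ (-(4 + ε)) :=
        Real.rpow_nonneg (by positivity) _
      positivity
    refine step1.trans (le_of_eq ?_)
    rw [integral_add ((hN1i.comp_sub_left x).const_mul _) ((hN2i.comp_sub_left x).const_mul _),
      integral_const_mul, integral_const_mul,
      integral_sub_left_eq_self h1f volume x, integral_sub_left_eq_self h2f volume x]
  -- integrability of the outer dominating function
  have hw1i : Integrable w1 := Stmt12.integrable_w1 hR1
  have hw2i : Integrable w2 := Stmt12.integrable_w2 hR1 hq0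
  have hg_int : Integrable (fun x : E2 => A1 x * N1 + A2 x * N2) := by
    apply Integrable.add
    · exact (hw1i.mul_const _).mul_const _
    · exact (hw2i.mul_const _).mul_const _
  have houter : (∫ x : E2, ∫ y : E2,
        |Stmt12.phi R x - Stmt12.phi R y| ^ 2 * (C * (1 + ‖x - y‖) ^ (-(4 + ε))))
      ≤ ∫ x : E2, (A1 x * N1 + A2 x * N2) := by
    refine integral_mono_of_nonneg (Filter.Eventually.of_forall fun x => ?_) hg_int
      (Filter.Eventually.of_forall hinner)
    refine integral_nonneg fun y => ?_
    have : (0:ℝ) ≤ (1 + ‖x - y‖) ^ (-(4 + ε)) := Real.rpow_nonneg (by positivity) _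
    positivity
  have hsplit : (∫ x : E2, (A1 x * N1 + A2 x * N2))
      = (∫ x : E2, w1 x) * (2 * K / L) ^ 2 * N1
        + (∫ x : E2, w2 x) * 2 ^ ((2:ℝ) + q) * N2 := by
    rw [integral_add ((hw1i.mul_const _).mul_const _) ((hw2i.mul_const _).mul_const _),
      integral_mul_const, integral_mul_const, integral_mul_const, integral_mul_const]
  -- bound the two outer integrals
  have hw1nn : 0 ≤ ∫ x : E2, w1 x := by
    refine integral_nonneg fun x => ?_
    rw [hw1def]
    dsimp only
    split <;> positivity
  have hw2nn : 0 ≤ ∫ x : E2, w2 x := integral_nonneg fun x => Real.rpow_nonneg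
    (le_of_lt (lt_of_lt_of_le hR0 (le_max_right _ _))) _
  have hb1 : (∫ x : E2, w1 x) * (2 * K / L) ^ 2 * N1 ≤ P / L0 := by
    have h1 := Stmt12.integral_w1 hR1 hL1
    have hstep : (∫ x : E2, w1 x) * (2 * K / L) ^ 2 * N1
        ≤ (V * (3 * L)) * (2 * K / L) ^ 2 * N1 := by
      have : (∫ x : E2, w1 x) ≤ V * (3 * L) := by
        rw [hVdef, hLdef]; rw [mul_assoc] at h1 ⊢; exact h1
      exact mul_le_mul_of_nonneg_right
        (mul_le_mul_of_nonneg_right this (by positivity)) hN1nn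
    refine hstep.trans (le_of_eq ?_)
    have hLL0 : L = L0 := hlogR
    rw [hPdef, hLL0]
    field_simp
    ring
  have hb2 : (∫ x : E2, w2 x) * 2 ^ ((2:ℝ) + q) * N2 ≤ Q * R ^ (-q) := by
    have h2 := Stmt12.integral_w2 hR1 hq0 hq1
    have h8 : (2:ℝ) ^ ((2:ℝ) + q) ≤ 8 := by
      have : (2:ℝ) ^ ((2:ℝ) + q) ≤ (2:ℝ) ^ ((3:ℝ)) :=
        Real.rpow_le_rpow_of_exponent_le one_le_two (by linarith)
      refine this.trans (le_of_eq ?_)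
      rw [show (3:ℝ) = ((3:ℕ):ℝ) from by norm_num, Real.rpow_natCast]
      norm_num
    have hRqnn : (0:ℝ) ≤ R ^ (-q) := Real.rpow_nonneg hR0.le _
    have hstep : (∫ x : E2, w2 x) * 2 ^ ((2:ℝ) + q) * N2
        ≤ (V * (2 / q * R ^ (-q))) * 8 * N2 := by
      refine mul_le_mul_of_nonneg_right ?_ hN2nn
      refine mul_le_mul ?_ h8 (by positivity) (by positivity)
      rw [hVdef]; rw [mul_assoc] at h2 ⊢; exact h2
    refine hstep.trans (le_of_eq ?_)
    rw [hQdef]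
    field_simp
    ring
  -- final numeric estimates
  have hPL : P / L0 < δ / 2 := by
    rw [div_lt_iff₀ hL0pos]
    have he : δ / 2 * L0 = δ / 2 + P + Q / q := by
      rw [hL0def]
      field_simp
    have hQq : 0 ≤ Q / q := by positivity
    linarith [he]
  have hQR : Q * R ^ (-q) < δ / 2 := by
    have hexp : R ^ (-q) = (Real.exp (q * L0))⁻¹ := by
      rw [hRdef, ← Real.exp_neg, Real.rpow_def_of_pos (Real.exp_pos _), Real.log_exp]
      congr 1
      ring
    rw [hexp, ← div_eq_mul_inv, div_lt_iff₀ (Real.exp_pos _)]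
    have h4 : q * L0 + 1 ≤ Real.exp (q * L0) := Real.add_one_le_exp _
    have h5 : 2 * Q / (q * δ) ≤ L0 := by
      rw [hL0def]
      have : 0 ≤ 2 * P / δ := by positivity
      linarith
    have h6 : q * (2 * Q / (q * δ)) = 2 * Q / δ := by field_simp
    have h7 : q * (2 * Q / (q * δ)) ≤ q * L0 := mul_le_mul_of_nonneg_left h5 hq0.le
    have h8 : 2 * Q / δ ≤ q * L0 := by linarith [h6 ▸ h7]
    have h9 : δ / 2 * (q * L0 + 1) ≤ δ / 2 * Real.exp (q * L0) :=
      mul_le_mul_of_nonneg_left h4 (by linarith)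
    have h10 : δ / 2 * (2 * Q / δ) = Q := by field_simp
    have h11 : δ / 2 * (2 * Q / δ) ≤ δ / 2 * (q * L0) :=
      mul_le_mul_of_nonneg_left h8 (by linarith)
    linarith [h9, h10, h11]
  calc (∫ x : E2, ∫ y : E2,
        |Stmt12.phi R x - Stmt12.phi R y| ^ 2 * (C * (1 + ‖x - y‖) ^ (-(4 + ε))))
      ≤ ∫ x : E2, (A1 x * N1 + A2 x * N2) := houter
    _ = (∫ x : E2, w1 x) * (2 * K / L) ^ 2 * N1
        + (∫ x : E2, w2 x) * 2 ^ ((2:ℝ) + q) * N2 := hsplit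
    _ ≤ P / L0 + Q * R ^ (-q) := add_le_add hb1 hb2
    _ < δ := by linarith
end
end

section
/- Let ε > 0 and let k : ℝ² → ℝ be a measurable radial function (k(v) depends only on |v|) satisfying |k(v)| ≤ C (1 + |v|)^{−(4+ε)} for some C > 0 and all v ∈ ℝ². Let Φ : ℝ² → ℝ be twice continuously differentiable with compact support, and set Φ_R(x) = Φ(x/R). Then lim_{R → ∞} ∫_{ℝ²} ∫_{ℝ²} |Φ_R(x) − Φ_R(y)|² k(x − y) dm(x) dm(y) = ( (1/2) ∫_{ℝ²} |v|² k(v) dm(v) ) · ∫_{ℝ²} ‖∇Φ(u)‖² dm(u). -/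
open MeasureTheory Filter Metric Module
open scoped Topology RealInnerProductSpace

private noncomputable def rot2 (w : EuclideanSpace ℝ (Fin 2)) : EuclideanSpace ℝ (Fin 2) :=
  (WithLp.equiv 2 (Fin 2 → ℝ)).symm ![-(w 1), w 0]

private lemma rot2_apply0 (w : EuclideanSpace ℝ (Fin 2)) : rot2 w 0 = -(w 1) := rfl
private lemma rot2_apply1 (w : EuclideanSpace ℝ (Fin 2)) : rot2 w 1 = w 0 := rfl

private lemma norm_rot2 (w : EuclideanSpace ℝ (Fin 2)) : ‖rot2 w‖ = ‖w‖ := by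
  rw [EuclideanSpace.norm_eq, EuclideanSpace.norm_eq]
  congr 1
  simp [Fin.sum_univ_two, rot2_apply0, rot2_apply1]
  ring

private lemma inner_sq_add_inner_rot2_sq (w v : EuclideanSpace ℝ (Fin 2)) :
    ⟪w, v⟫ ^ 2 + ⟪rot2 w, v⟫ ^ 2 = ‖w‖ ^ 2 * ‖v‖ ^ 2 := by
  rw [← real_inner_self_eq_norm_sq, ← real_inner_self_eq_norm_sq]
  simp only [PiLp.inner_apply, RCLike.inner_apply, conj_trivial, Fin.sum_univ_two,
    rot2_apply0, rot2_apply1]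
  ring

private lemma radial_moment
    (k : EuclideanSpace ℝ (Fin 2) → ℝ) (hkmeas : Measurable k)
    (hkradial : ∀ v w : EuclideanSpace ℝ (Fin 2), ‖v‖ = ‖w‖ → k v = k w)
    (hki : Integrable (fun v => ‖v‖ ^ 2 * k v))
    (hki2 : Integrable (fun v => ‖v‖ ^ 2 * |k v|))
    (w : EuclideanSpace ℝ (Fin 2)) :
    ∫ v, ⟪w, v⟫ ^ 2 * k v = ((1 / 2) * ∫ v, ‖v‖ ^ 2 * k v) * ‖w‖ ^ 2 := by
  have intQ : ∀ w' : EuclideanSpace ℝ (Fin 2), Integrable (fun v => ⟪w', v⟫ ^ 2 * k v) := by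
    intro w'
    refine (hki2.const_mul (‖w'‖ ^ 2)).mono' ?_ ?_
    · exact ((continuous_const.inner continuous_id).pow 2).aestronglyMeasurable.mul
        hkmeas.aestronglyMeasurable
    · refine Filter.Eventually.of_forall fun v => ?_
      have h1 : |⟪w', v⟫| ≤ ‖w'‖ * ‖v‖ := abs_real_inner_le_norm w' v
      have h2 : ⟪w', v⟫ ^ 2 ≤ ‖w'‖ ^ 2 * ‖v‖ ^ 2 := by
        rw [← mul_pow, ← sq_abs]
        exact pow_le_pow_left₀ (abs_nonneg _) h1 2
      have : ‖⟪w', v⟫ ^ 2 * k v‖ = ⟪w', v⟫ ^ 2 * |k v| := by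
        rw [Real.norm_eq_abs, abs_mul, abs_of_nonneg (sq_nonneg _)]
      rw [this]
      calc ⟪w', v⟫ ^ 2 * |k v| ≤ ‖w'‖ ^ 2 * ‖v‖ ^ 2 * |k v| := by
            exact mul_le_mul_of_nonneg_right h2 (abs_nonneg _)
        _ = ‖w'‖ ^ 2 * (‖v‖ ^ 2 * |k v|) := by ring
  set T := Submodule.reflection (ℝ ∙ (w - rot2 w))ᗮ with hT
  have hTw : T w = rot2 w := Submodule.reflection_sub (norm_rot2 w).symm
  have key2 : ∫ v, ⟪rot2 w, v⟫ ^ 2 * k v = ∫ v, ⟪w, v⟫ ^ 2 * k v := by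
    have hmp : MeasurePreserving (T : EuclideanSpace ℝ (Fin 2) → EuclideanSpace ℝ (Fin 2)) :=
      (T : EuclideanSpace ℝ (Fin 2) ≃ₗᵢ[ℝ] EuclideanSpace ℝ (Fin 2)).measurePreserving
    have hemb := T.toHomeomorph.toMeasurableEquiv.measurableEmbedding
    calc ∫ v, ⟪rot2 w, v⟫ ^ 2 * k v
        = ∫ v, ⟪rot2 w, T v⟫ ^ 2 * k (T v) :=
          (hmp.integral_comp hemb (fun y => ⟪rot2 w, y⟫ ^ 2 * k y)).symm
      _ = ∫ v, ⟪w, v⟫ ^ 2 * k v := by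
          congr 1; funext v
          rw [← hTw, T.inner_map_map, hkradial (T v) v (T.norm_map v)]
  have key1 : (∫ v, ⟪w, v⟫ ^ 2 * k v) + ∫ v, ⟪rot2 w, v⟫ ^ 2 * k v
      = ‖w‖ ^ 2 * ∫ v, ‖v‖ ^ 2 * k v := by
    rw [← integral_add (intQ w) (intQ (rot2 w)), ← integral_const_mul]
    congr 1; funext v
    have := inner_sq_add_inner_rot2_sq w v
    calc ⟪w, v⟫ ^ 2 * k v + ⟪rot2 w, v⟫ ^ 2 * k v
        = (⟪w, v⟫ ^ 2 + ⟪rot2 w, v⟫ ^ 2) * k v := by ring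
      _ = ‖w‖ ^ 2 * (‖v‖ ^ 2 * k v) := by rw [this]; ring
  rw [key2] at key1
  linarith

private lemma aux_finrank : (finrank ℝ (EuclideanSpace ℝ (Fin 2)) : ℝ) = 2 := by
  simp [finrank_euclideanSpace_fin]

private lemma aux_int_k (ε : ℝ) (hε : 0 < ε)
    (k : EuclideanSpace ℝ (Fin 2) → ℝ) (hkmeas : Measurable k)
    (C : ℝ) (hkbd : ∀ v, |k v| ≤ C * (1 + ‖v‖) ^ (-(4 + ε))) :
    Integrable k := by
  have h : ((finrank ℝ (EuclideanSpace ℝ (Fin 2)) : ℝ)) < 4 + ε := by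
    rw [aux_finrank]; linarith
  refine ((integrable_one_add_norm h).const_mul C).mono'
    hkmeas.aestronglyMeasurable ?_
  exact Filter.Eventually.of_forall fun v => by
    rw [Real.norm_eq_abs]; exact hkbd v

private lemma aux_int_normsq_k (ε : ℝ) (hε : 0 < ε)
    (k : EuclideanSpace ℝ (Fin 2) → ℝ) (hkmeas : Measurable k)
    (C : ℝ) (hkbd : ∀ v, |k v| ≤ C * (1 + ‖v‖) ^ (-(4 + ε))) :
    Integrable (fun v => ‖v‖ ^ 2 * |k v|) := by
  have h : ((finrank ℝ (EuclideanSpace ℝ (Fin 2)) : ℝ)) < 2 + ε := by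
    rw [aux_finrank]; linarith
  refine ((integrable_one_add_norm h).const_mul C).mono' ?_ ?_
  · exact ((continuous_norm.pow 2).aestronglyMeasurable.mul
      hkmeas.abs.aestronglyMeasurable)
  · refine Filter.Eventually.of_forall fun v => ?_
    have h0 : (0:ℝ) < 1 + ‖v‖ := by positivity
    have h1 : ‖v‖ ^ 2 ≤ (1 + ‖v‖) ^ (2:ℝ) := by
      rw [Real.rpow_two]
      apply pow_le_pow_left₀ (norm_nonneg v)
      linarith
    have h2 : (1 + ‖v‖) ^ (2:ℝ) * (1 + ‖v‖) ^ (-(4 + ε)) = (1 + ‖v‖) ^ (-(2 + ε)) := by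
      rw [← Real.rpow_add h0]; ring_nf
    have hk0 : 0 ≤ C * (1 + ‖v‖) ^ (-(4 + ε)) := le_trans (abs_nonneg _) (hkbd v)
    rw [Real.norm_eq_abs, abs_mul, abs_of_nonneg (sq_nonneg _), abs_abs]
    calc ‖v‖ ^ 2 * |k v| ≤ (1 + ‖v‖) ^ (2:ℝ) * (C * (1 + ‖v‖) ^ (-(4 + ε))) := by
          apply mul_le_mul h1 (hkbd v) (abs_nonneg _)
          positivity
      _ = C * (1 + ‖v‖) ^ (-(2 + ε)) := by rw [← h2]; ring

private lemma aux_int_normsq_k' (ε : ℝ) (hε : 0 < ε)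
    (k : EuclideanSpace ℝ (Fin 2) → ℝ) (hkmeas : Measurable k)
    (C : ℝ) (hkbd : ∀ v, |k v| ≤ C * (1 + ‖v‖) ^ (-(4 + ε))) :
    Integrable (fun v => ‖v‖ ^ 2 * k v) := by
  refine (aux_int_normsq_k ε hε k hkmeas C hkbd).mono'
    ((continuous_norm.pow 2).aestronglyMeasurable.mul hkmeas.aestronglyMeasurable) ?_
  refine Filter.Eventually.of_forall fun v => ?_
  rw [Real.norm_eq_abs, abs_mul, abs_of_nonneg (sq_nonneg _)]

private lemma aux_grad_inner (Φ : EuclideanSpace ℝ (Fin 2) → ℝ) (u v : EuclideanSpace ℝ (Fin 2)) :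
    ⟪gradient Φ u, v⟫ = fderiv ℝ Φ u v := by
  rw [gradient]
  exact InnerProductSpace.toDual_symm_apply

private lemma aux_slope (Φ : EuclideanSpace ℝ (Fin 2) → ℝ) (hΦ : ContDiff ℝ 2 Φ)
    (u v : EuclideanSpace ℝ (Fin 2)) :
    Tendsto (fun R : ℝ => R * (Φ u - Φ (u - R⁻¹ • v))) atTop (𝓝 (⟪gradient Φ u, v⟫)) := by
  have hinner : HasDerivAt (fun t : ℝ => u - t • v) (-v) 0 := by
    have := ((hasDerivAt_id (0:ℝ)).smul_const v).const_sub u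
    simpa using this
  have hΦd : HasFDerivAt Φ (fderiv ℝ Φ u) u :=
    ((hΦ.differentiable two_ne_zero) u).hasFDerivAt
  have hcomp : HasDerivAt (fun t : ℝ => Φ (u - t • v)) (fderiv ℝ Φ u (-v)) 0 := by
    have hΦd' : HasFDerivAt Φ (fderiv ℝ Φ u) ((fun t : ℝ => u - t • v) 0) := by
      simpa using hΦd
    exact hΦd'.comp_hasDerivAt 0 hinner
  rw [hasDerivAt_iff_tendsto_slope] at hcomp
  have hR : Tendsto (fun R : ℝ => R⁻¹) atTop (𝓝[≠] (0:ℝ)) := by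
    rw [tendsto_nhdsWithin_iff]
    refine ⟨tendsto_inv_atTop_zero, ?_⟩
    filter_upwards [eventually_ge_atTop (1:ℝ)] with R hR
    simp only [Set.mem_compl_iff, Set.mem_singleton_iff]
    positivity
  have hmain := (hcomp.comp hR).neg
  have heq : (fun R : ℝ => -(slope (fun t : ℝ => Φ (u - t • v)) 0 R⁻¹))
      =ᶠ[atTop] fun R : ℝ => R * (Φ u - Φ (u - R⁻¹ • v)) := by
    filter_upwards [eventually_ge_atTop (1:ℝ)] with R hR1
    have hRne : R ≠ 0 := by positivity
    rw [slope_def_field]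
    field_simp
    simp
  have hval : -(fderiv ℝ Φ u (-v)) = ⟪gradient Φ u, v⟫ := by
    rw [aux_grad_inner, map_neg, neg_neg]
  rw [← hval]
  exact hmain.congr' heq

private lemma aux_slope_sq (Φ : EuclideanSpace ℝ (Fin 2) → ℝ) (hΦ : ContDiff ℝ 2 Φ)
    (u v : EuclideanSpace ℝ (Fin 2)) :
    Tendsto (fun R : ℝ => R ^ 2 * |Φ u - Φ (u - R⁻¹ • v)| ^ 2) atTop
      (𝓝 (⟪gradient Φ u, v⟫ ^ 2)) := by
  have := (aux_slope Φ hΦ u v).pow 2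
  refine this.congr fun R => ?_
  rw [mul_pow, sq_abs]

private lemma aux_vanish (Φ : EuclideanSpace ℝ (Fin 2) → ℝ)
    (w : EuclideanSpace ℝ (Fin 2)) (hw : ‖w‖ ≤ 1)
    (u : EuclideanSpace ℝ (Fin 2)) (hu : u ∉ cthickening 1 (tsupport Φ)) :
    Φ u = 0 ∧ Φ (u - w) = 0 := by
  constructor
  · apply image_eq_zero_of_notMem_tsupport
    intro hmem
    exact hu (self_subset_cthickening _ hmem)
  · apply image_eq_zero_of_notMem_tsupport
    intro hmem
    apply hu
    apply mem_cthickening_of_dist_le u (u - w) 1 _ hmem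
    rw [dist_eq_norm]
    simpa using hw

private lemma aux_inner (Φ : EuclideanSpace ℝ (Fin 2) → ℝ)
    (hΦ : ContDiff ℝ 2 Φ) (hsupp : HasCompactSupport Φ)
    (L : NNReal) (hL : LipschitzWith L Φ)
    (v : EuclideanSpace ℝ (Fin 2)) :
    Tendsto (fun R : ℝ => ∫ u, R ^ 2 * |Φ u - Φ (u - R⁻¹ • v)| ^ 2) atTop
      (𝓝 (∫ u, ⟪gradient Φ u, v⟫ ^ 2)) := by
  set K := cthickening 1 (tsupport Φ) with hKdef
  have hKcomp : IsCompact K := hsupp.cthickening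
  have hKmeas : MeasurableSet K := isClosed_cthickening.measurableSet
  refine tendsto_integral_filter_of_dominated_convergence
    (K.indicator fun _ => (L : ℝ) ^ 2 * ‖v‖ ^ 2) ?_ ?_ ?_ ?_
  · refine Filter.Eventually.of_forall fun R => ?_
    have hc : Continuous fun u : EuclideanSpace ℝ (Fin 2) =>
        R ^ 2 * |Φ u - Φ (u - R⁻¹ • v)| ^ 2 := by
      apply continuous_const.mul
      exact ((hΦ.continuous.sub (hΦ.continuous.comp
        (continuous_id.sub continuous_const))).abs.pow 2)
    exact hc.aestronglyMeasurable
  · filter_upwards [eventually_ge_atTop (max ‖v‖ 1)] with R hR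
    refine Filter.Eventually.of_forall fun u => ?_
    have hR1 : (1:ℝ) ≤ R := le_trans (le_max_right _ _) hR
    have hR0 : (0:ℝ) < R := lt_of_lt_of_le one_pos hR1
    have hvR : ‖v‖ ≤ R := le_trans (le_max_left _ _) hR
    have hwnorm : ‖R⁻¹ • v‖ = R⁻¹ * ‖v‖ := by
      rw [norm_smul, Real.norm_eq_abs, abs_of_pos (inv_pos.mpr hR0)]
    have hw1 : ‖R⁻¹ • v‖ ≤ 1 := by
      rw [hwnorm]
      calc R⁻¹ * ‖v‖ ≤ R⁻¹ * R := by
            apply mul_le_mul_of_nonneg_left hvR (le_of_lt (inv_pos.mpr hR0))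
        _ = 1 := inv_mul_cancel₀ (ne_of_gt hR0)
    by_cases hu : u ∈ K
    · rw [Set.indicator_of_mem hu]
      have hlip : |Φ u - Φ (u - R⁻¹ • v)| ≤ (L : ℝ) * ‖R⁻¹ • v‖ := by
        have := hL.dist_le_mul u (u - R⁻¹ • v)
        rw [Real.dist_eq, dist_eq_norm] at this
        simpa using this
      have habs : 0 ≤ |Φ u - Φ (u - R⁻¹ • v)| := abs_nonneg _
      rw [Real.norm_eq_abs, abs_mul, abs_of_nonneg (sq_nonneg R),
        abs_of_nonneg (sq_nonneg _)]
      calc R ^ 2 * |Φ u - Φ (u - R⁻¹ • v)| ^ 2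
          ≤ R ^ 2 * ((L : ℝ) * ‖R⁻¹ • v‖) ^ 2 := by
            apply mul_le_mul_of_nonneg_left _ (sq_nonneg R)
            exact pow_le_pow_left₀ habs hlip 2
        _ = (L : ℝ) ^ 2 * ‖v‖ ^ 2 := by
            rw [hwnorm]
            field_simp

    · rw [Set.indicator_of_notMem hu]
      obtain ⟨h1, h2⟩ := aux_vanish Φ (R⁻¹ • v) hw1 u hu
      rw [h1, h2]
      simp
  · rw [integrable_indicator_iff hKmeas]
    apply (integrableOn_const_iff).mpr
    exact Or.inr hKcomp.measure_lt_top
  · exact Filter.Eventually.of_forall fun u => aux_slope_sq Φ hΦ u v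

private lemma aux_D_int (Φ : EuclideanSpace ℝ (Fin 2) → ℝ) (hc : Continuous Φ)
    (hsupp : HasCompactSupport Φ) (w : EuclideanSpace ℝ (Fin 2)) :
    Integrable (fun u => |Φ u - Φ (u - w)| ^ 2) := by
  have h1 : HasCompactSupport fun u : EuclideanSpace ℝ (Fin 2) => Φ (u - w) :=
    hsupp.comp_homeomorph (Homeomorph.subRight w)
  have h2 : HasCompactSupport fun u => Φ u - Φ (u - w) :=
    hsupp.comp₂_left h1 (sub_zero 0)
  have h3 : HasCompactSupport fun u => |Φ u - Φ (u - w)| ^ 2 :=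
    h2.comp_left (g := fun x : ℝ => |x| ^ 2) (by simp)
  exact ((hc.sub (hc.comp (continuous_id.sub continuous_const))).abs.pow
    2).integrable_of_hasCompactSupport h3

private lemma aux_sq_int (Φ : EuclideanSpace ℝ (Fin 2) → ℝ) (hc : Continuous Φ)
    (hsupp : HasCompactSupport Φ) :
    Integrable (fun u => Φ u ^ 2) := by
  have h3 : HasCompactSupport fun u => Φ u ^ 2 :=
    hsupp.comp_left (g := fun x : ℝ => x ^ 2) (by simp)
  exact (hc.pow 2).integrable_of_hasCompactSupport h3

private lemma aux_D_le (Φ : EuclideanSpace ℝ (Fin 2) → ℝ) (hc : Continuous Φ)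
    (hsupp : HasCompactSupport Φ) (w : EuclideanSpace ℝ (Fin 2)) :
    ∫ u, |Φ u - Φ (u - w)| ^ 2 ≤ 4 * ∫ u, Φ u ^ 2 := by
  have hsq := aux_sq_int Φ hc hsupp
  have hsq' : Integrable (fun u => Φ (u - w) ^ 2) := hsq.comp_sub_right w
  have hint : Integrable (fun u => 2 * Φ u ^ 2 + 2 * Φ (u - w) ^ 2) :=
    (hsq.const_mul 2).add (hsq'.const_mul 2)
  have hmono := integral_mono (aux_D_int Φ hc hsupp w) hint (fun u => by
    rw [sq_abs]; nlinarith [sq_nonneg (Φ u + Φ (u - w))])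
  calc ∫ u, |Φ u - Φ (u - w)| ^ 2 ≤ ∫ u, (2 * Φ u ^ 2 + 2 * Φ (u - w) ^ 2) := hmono
    _ = 2 * (∫ u, Φ u ^ 2) + 2 * ∫ u, Φ (u - w) ^ 2 := by
        rw [integral_add (hsq.const_mul 2) (hsq'.const_mul 2),
          integral_const_mul, integral_const_mul]
    _ = 4 * ∫ u, Φ u ^ 2 := by
        rw [integral_sub_right_eq_self (fun u => Φ u ^ 2) w]; ring

private lemma aux_outer (ε : ℝ) (hε : 0 < ε)
    (k : EuclideanSpace ℝ (Fin 2) → ℝ) (hkmeas : Measurable k)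
    (C : ℝ) (hkbd : ∀ v, |k v| ≤ C * (1 + ‖v‖) ^ (-(4 + ε)))
    (Φ : EuclideanSpace ℝ (Fin 2) → ℝ)
    (hΦ : ContDiff ℝ 2 Φ) (hsupp : HasCompactSupport Φ)
    (L : NNReal) (hL : LipschitzWith L Φ) :
    Tendsto (fun R : ℝ => ∫ v, (∫ u, R ^ 2 * |Φ u - Φ (u - R⁻¹ • v)| ^ 2) * k v) atTop
      (𝓝 (∫ v, (∫ u, ⟪gradient Φ u, v⟫ ^ 2) * k v)) := by
  have hc := hΦ.continuous
  set K := cthickening 1 (tsupport Φ) with hKdef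
  have hKcomp : IsCompact K := hsupp.cthickening
  have hKmeas : MeasurableSet K := isClosed_cthickening.measurableSet
  have hΦsq : (0:ℝ) ≤ ∫ u, Φ u ^ 2 := integral_nonneg fun u => sq_nonneg _
  set A := (L:ℝ) ^ 2 * (volume K).toReal + 4 * ∫ u, Φ u ^ 2 with hAdef
  have hA1 : (L:ℝ) ^ 2 * (volume K).toReal ≤ A := by
    rw [hAdef]; nlinarith
  have hA2 : 4 * (∫ u, Φ u ^ 2) ≤ A := by
    rw [hAdef]
    have : (0:ℝ) ≤ (L:ℝ) ^ 2 * (volume K).toReal := by positivity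
    linarith
  refine tendsto_integral_filter_of_dominated_convergence
    (fun v => A * (‖v‖ ^ 2 * |k v|)) ?_ ?_ ?_ ?_
  · refine Filter.Eventually.of_forall fun R => ?_
    have hcont : Continuous (fun p : EuclideanSpace ℝ (Fin 2) × EuclideanSpace ℝ (Fin 2) =>
        R ^ 2 * |Φ p.2 - Φ (p.2 - R⁻¹ • p.1)| ^ 2) := by
      apply continuous_const.mul
      exact ((hc.comp continuous_snd).sub (hc.comp
        (continuous_snd.sub (continuous_fst.const_smul R⁻¹)))).abs.pow 2
    exact (hcont.stronglyMeasurable.integral_prod_right').aestronglyMeasurable.mul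
      hkmeas.aestronglyMeasurable
  · filter_upwards [eventually_ge_atTop (1:ℝ)] with R hR1
    refine Filter.Eventually.of_forall fun v => ?_
    have hR0 : (0:ℝ) < R := lt_of_lt_of_le one_pos hR1
    have hInonneg : (0:ℝ) ≤ ∫ u, R ^ 2 * |Φ u - Φ (u - R⁻¹ • v)| ^ 2 :=
      integral_nonneg fun u => by positivity
    have hIint : Integrable (fun u => R ^ 2 * |Φ u - Φ (u - R⁻¹ • v)| ^ 2) :=
      (aux_D_int Φ hc hsupp (R⁻¹ • v)).const_mul _
    have hIbd : (∫ u, R ^ 2 * |Φ u - Φ (u - R⁻¹ • v)| ^ 2) ≤ A * ‖v‖ ^ 2 := by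
      by_cases hvR : ‖v‖ ≤ R
      · -- Lipschitz bound with support control
        have hwnorm : ‖R⁻¹ • v‖ = R⁻¹ * ‖v‖ := by
          rw [norm_smul, Real.norm_eq_abs, abs_of_pos (inv_pos.mpr hR0)]
        have hw1 : ‖R⁻¹ • v‖ ≤ 1 := by
          rw [hwnorm]
          calc R⁻¹ * ‖v‖ ≤ R⁻¹ * R :=
                mul_le_mul_of_nonneg_left hvR (le_of_lt (inv_pos.mpr hR0))
            _ = 1 := inv_mul_cancel₀ (ne_of_gt hR0)
        have hptwise : ∀ u, R ^ 2 * |Φ u - Φ (u - R⁻¹ • v)| ^ 2 ≤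
            K.indicator (fun _ => (L : ℝ) ^ 2 * ‖v‖ ^ 2) u := by
          intro u
          by_cases hu : u ∈ K
          · rw [Set.indicator_of_mem hu]
            have hlip : |Φ u - Φ (u - R⁻¹ • v)| ≤ (L : ℝ) * ‖R⁻¹ • v‖ := by
              have := hL.dist_le_mul u (u - R⁻¹ • v)
              rw [Real.dist_eq, dist_eq_norm] at this
              simpa using this
            calc R ^ 2 * |Φ u - Φ (u - R⁻¹ • v)| ^ 2
                ≤ R ^ 2 * ((L : ℝ) * ‖R⁻¹ • v‖) ^ 2 :=
                  mul_le_mul_of_nonneg_left (pow_le_pow_left₀ (abs_nonneg _) hlip 2)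
                    (sq_nonneg R)
              _ = (L : ℝ) ^ 2 * ‖v‖ ^ 2 := by
                  rw [hwnorm]; field_simp
          · rw [Set.indicator_of_notMem hu]
            obtain ⟨h1, h2⟩ := aux_vanish Φ (R⁻¹ • v) hw1 u hu
            rw [h1, h2]
            simp
        have hindint : Integrable (K.indicator fun _ => (L : ℝ) ^ 2 * ‖v‖ ^ 2) := by
          rw [integrable_indicator_iff hKmeas]
          exact (integrableOn_const_iff).mpr (Or.inr hKcomp.measure_lt_top)
        calc (∫ u, R ^ 2 * |Φ u - Φ (u - R⁻¹ • v)| ^ 2)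
            ≤ ∫ u, K.indicator (fun _ => (L : ℝ) ^ 2 * ‖v‖ ^ 2) u :=
              integral_mono hIint hindint hptwise
          _ = (volume K).toReal • ((L : ℝ) ^ 2 * ‖v‖ ^ 2) :=
              integral_indicator_const _ hKmeas
          _ = ((L : ℝ) ^ 2 * (volume K).toReal) * ‖v‖ ^ 2 := by
              rw [smul_eq_mul]; ring
          _ ≤ A * ‖v‖ ^ 2 := mul_le_mul_of_nonneg_right hA1 (sq_nonneg _)
      · push_neg at hvR
        calc (∫ u, R ^ 2 * |Φ u - Φ (u - R⁻¹ • v)| ^ 2)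
            = R ^ 2 * ∫ u, |Φ u - Φ (u - R⁻¹ • v)| ^ 2 := integral_const_mul _ _
          _ ≤ R ^ 2 * (4 * ∫ u, Φ u ^ 2) := by
              apply mul_le_mul_of_nonneg_left (aux_D_le Φ hc hsupp _) (sq_nonneg R)
          _ ≤ ‖v‖ ^ 2 * (4 * ∫ u, Φ u ^ 2) := by
              apply mul_le_mul_of_nonneg_right _ (by positivity)
              apply pow_le_pow_left₀ (le_of_lt hR0) (le_of_lt hvR)
          _ = (4 * ∫ u, Φ u ^ 2) * ‖v‖ ^ 2 := by ring
          _ ≤ A * ‖v‖ ^ 2 := mul_le_mul_of_nonneg_right hA2 (sq_nonneg _)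
    rw [Real.norm_eq_abs, abs_mul, abs_of_nonneg hInonneg]
    calc (∫ u, R ^ 2 * |Φ u - Φ (u - R⁻¹ • v)| ^ 2) * |k v|
        ≤ (A * ‖v‖ ^ 2) * |k v| := mul_le_mul_of_nonneg_right hIbd (abs_nonneg _)
      _ = A * (‖v‖ ^ 2 * |k v|) := by ring
  · exact (aux_int_normsq_k ε hε k hkmeas C hkbd).const_mul A
  · exact Filter.Eventually.of_forall fun v =>
      (aux_inner Φ hΦ hsupp L hL v).mul_const (k v)

private lemma aux_gradcont (Φ : EuclideanSpace ℝ (Fin 2) → ℝ) (hΦ : ContDiff ℝ 2 Φ) :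
    Continuous (gradient Φ) := by
  show Continuous fun u => (InnerProductSpace.toDual ℝ _).symm (fderiv ℝ Φ u)
  exact (InnerProductSpace.toDual ℝ _).symm.continuous.comp (hΦ.continuous_fderiv two_ne_zero)

private lemma aux_gradsupp (Φ : EuclideanSpace ℝ (Fin 2) → ℝ)
    (hsupp : HasCompactSupport Φ) : HasCompactSupport (gradient Φ) := by
  have := (hsupp.fderiv ℝ).comp_left
    (g := fun l : EuclideanSpace ℝ (Fin 2) →L[ℝ] ℝ => (InnerProductSpace.toDual ℝ _).symm l)
    (by simp)
  exact this

private lemma aux_gradsq_int (Φ : EuclideanSpace ℝ (Fin 2) → ℝ)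
    (hΦ : ContDiff ℝ 2 Φ) (hsupp : HasCompactSupport Φ) :
    Integrable (fun u => ‖gradient Φ u‖ ^ 2) := by
  have h1 : HasCompactSupport fun u => ‖gradient Φ u‖ ^ 2 :=
    (aux_gradsupp Φ hsupp).comp_left (g := fun x : EuclideanSpace ℝ (Fin 2) => ‖x‖ ^ 2) (by simp)
  exact (((aux_gradcont Φ hΦ).norm.pow 2)).integrable_of_hasCompactSupport h1

private lemma aux_value (ε : ℝ) (hε : 0 < ε)
    (k : EuclideanSpace ℝ (Fin 2) → ℝ) (hkmeas : Measurable k)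
    (hkradial : ∀ v w : EuclideanSpace ℝ (Fin 2), ‖v‖ = ‖w‖ → k v = k w)
    (C : ℝ) (hkbd : ∀ v, |k v| ≤ C * (1 + ‖v‖) ^ (-(4 + ε)))
    (Φ : EuclideanSpace ℝ (Fin 2) → ℝ)
    (hΦ : ContDiff ℝ 2 Φ) (hsupp : HasCompactSupport Φ) :
    ∫ v, (∫ u, ⟪gradient Φ u, v⟫ ^ 2) * k v
      = ((1 / 2) * ∫ v, ‖v‖ ^ 2 * k v) * ∫ u, ‖gradient Φ u‖ ^ 2 := by
  have hki := aux_int_normsq_k' ε hε k hkmeas C hkbd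
  have hki2 := aux_int_normsq_k ε hε k hkmeas C hkbd
  have hgint := aux_gradsq_int Φ hΦ hsupp
  have hgradcont := aux_gradcont Φ hΦ
  -- integrability on the product (v, u)
  have hprod : Integrable (Function.uncurry fun v u =>
      ⟪gradient Φ u, v⟫ ^ 2 * k v) (volume.prod volume) := by
    have hbd : Integrable (fun p : EuclideanSpace ℝ (Fin 2) × EuclideanSpace ℝ (Fin 2) =>
        (‖p.1‖ ^ 2 * |k p.1|) * ‖gradient Φ p.2‖ ^ 2) (volume.prod volume) :=
      hki2.mul_prod hgint
    refine hbd.mono' ?_ ?_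
    · apply AEStronglyMeasurable.mul
      · exact (((hgradcont.comp continuous_snd).inner continuous_fst).pow
          2).aestronglyMeasurable
      · exact (hkmeas.comp measurable_fst).aestronglyMeasurable
    · refine Filter.Eventually.of_forall fun p => ?_
      have h1 : |⟪gradient Φ p.2, p.1⟫| ≤ ‖gradient Φ p.2‖ * ‖p.1‖ :=
        abs_real_inner_le_norm _ _
      have h2 : ⟪gradient Φ p.2, p.1⟫ ^ 2 ≤ ‖gradient Φ p.2‖ ^ 2 * ‖p.1‖ ^ 2 := by
        rw [← mul_pow, ← sq_abs]
        exact pow_le_pow_left₀ (abs_nonneg _) h1 2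
      rw [Function.uncurry, Real.norm_eq_abs, abs_mul, abs_of_nonneg (sq_nonneg _)]
      calc ⟪gradient Φ p.2, p.1⟫ ^ 2 * |k p.1|
          ≤ ‖gradient Φ p.2‖ ^ 2 * ‖p.1‖ ^ 2 * |k p.1| :=
            mul_le_mul_of_nonneg_right h2 (abs_nonneg _)
        _ = ‖p.1‖ ^ 2 * |k p.1| * ‖gradient Φ p.2‖ ^ 2 := by ring
  calc ∫ v, (∫ u, ⟪gradient Φ u, v⟫ ^ 2) * k v
      = ∫ v, ∫ u, ⟪gradient Φ u, v⟫ ^ 2 * k v := by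
        congr 1; funext v
        rw [← integral_mul_const]
    _ = ∫ u, ∫ v, ⟪gradient Φ u, v⟫ ^ 2 * k v := integral_integral_swap hprod
    _ = ∫ u, ((1 / 2) * ∫ v, ‖v‖ ^ 2 * k v) * ‖gradient Φ u‖ ^ 2 := by
        congr 1; funext u
        exact radial_moment k hkmeas hkradial hki hki2 (gradient Φ u)
    _ = ((1 / 2) * ∫ v, ‖v‖ ^ 2 * k v) * ∫ u, ‖gradient Φ u‖ ^ 2 :=
        integral_const_mul _ _

private lemma aux_ident (ε : ℝ)
    (k : EuclideanSpace ℝ (Fin 2) → ℝ) (hkmeas : Measurable k)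
    (hk : Integrable k)
    (Φ : EuclideanSpace ℝ (Fin 2) → ℝ)
    (hΦ : ContDiff ℝ 2 Φ) (hsupp : HasCompactSupport Φ)
    (R : ℝ) (hR0 : 0 < R) :
    (∫ x : EuclideanSpace ℝ (Fin 2), ∫ y : EuclideanSpace ℝ (Fin 2),
        |Φ (R⁻¹ • x) - Φ (R⁻¹ • y)| ^ 2 * k (x - y))
      = ∫ v, (∫ u, R ^ 2 * |Φ u - Φ (u - R⁻¹ • v)| ^ 2) * k v := by
  have hc := hΦ.continuous
  set ΦR := fun x : EuclideanSpace ℝ (Fin 2) => Φ (R⁻¹ • x) with hΦRdef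
  have hΦRc : Continuous ΦR := hc.comp (continuous_const_smul R⁻¹)
  have hΦRsupp : HasCompactSupport ΦR := by
    have := hsupp.comp_homeomorph
      (Homeomorph.smul (Units.mk0 R⁻¹ (inv_ne_zero (ne_of_gt hR0))))
    exact this
  -- step (a): translate the inner integral
  have step_a : ∀ x : EuclideanSpace ℝ (Fin 2),
      (∫ y, |ΦR x - ΦR y| ^ 2 * k (x - y))
        = ∫ v, |ΦR x - ΦR (x - v)| ^ 2 * k v := by
    intro x
    have := integral_sub_left_eq_self
      (fun y => |ΦR x - ΦR y| ^ 2 * k (x - y)) volume x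
    rw [← this]
    congr 1; funext v
    rw [sub_sub_cancel]
  -- integrability on the product
  have hsqint : Integrable (fun x => ΦR x ^ 2) := aux_sq_int ΦR hΦRc hΦRsupp
  have h1 : Integrable (fun p : EuclideanSpace ℝ (Fin 2) × EuclideanSpace ℝ (Fin 2) =>
      (2 * ΦR p.1 ^ 2) * |k p.2|) (volume.prod volume) :=
    (hsqint.const_mul 2).mul_prod hk.abs
  have h1meas : AEStronglyMeasurable
      (fun p : EuclideanSpace ℝ (Fin 2) × EuclideanSpace ℝ (Fin 2) =>
        (2 * ΦR p.1 ^ 2) * |k p.2|) (volume.prod volume) :=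
    ((continuous_const.mul ((hΦRc.comp continuous_fst).pow 2)).aestronglyMeasurable).mul
      (hkmeas.comp measurable_snd).abs.aestronglyMeasurable
  have h2 : Integrable (fun p : EuclideanSpace ℝ (Fin 2) × EuclideanSpace ℝ (Fin 2) =>
      (2 * ΦR (p.1 - p.2) ^ 2) * |k p.2|) (volume.prod volume) := by
    have hmp := measurePreserving_sub_prod
      (volume : Measure (EuclideanSpace ℝ (Fin 2))) volume
    exact (hmp.integrable_comp h1meas).mpr h1
  have hprod : Integrable (Function.uncurry fun x v =>
      |ΦR x - ΦR (x - v)| ^ 2 * k v) (volume.prod volume) := by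
    refine ((h1.add h2).mono' ?_ ?_)
    · apply AEStronglyMeasurable.mul
      · exact (((hΦRc.comp continuous_fst).sub (hΦRc.comp
          (continuous_fst.sub continuous_snd))).abs.pow 2).aestronglyMeasurable
      · exact (hkmeas.comp measurable_snd).aestronglyMeasurable
    · refine Filter.Eventually.of_forall fun p => ?_
      rw [Function.uncurry, Real.norm_eq_abs, abs_mul, abs_of_nonneg (sq_nonneg _)]
      have hsq : |ΦR p.1 - ΦR (p.1 - p.2)| ^ 2 ≤ 2 * ΦR p.1 ^ 2 + 2 * ΦR (p.1 - p.2) ^ 2 := by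
        rw [sq_abs]
        nlinarith [sq_nonneg (ΦR p.1 + ΦR (p.1 - p.2))]
      calc |ΦR p.1 - ΦR (p.1 - p.2)| ^ 2 * |k p.2|
          ≤ (2 * ΦR p.1 ^ 2 + 2 * ΦR (p.1 - p.2) ^ 2) * |k p.2| :=
            mul_le_mul_of_nonneg_right hsq (abs_nonneg _)
        _ = (2 * ΦR p.1 ^ 2) * |k p.2| + (2 * ΦR (p.1 - p.2) ^ 2) * |k p.2| := by ring
  -- main computation
  calc (∫ x, ∫ y, |ΦR x - ΦR y| ^ 2 * k (x - y))
      = ∫ x, ∫ v, |ΦR x - ΦR (x - v)| ^ 2 * k v := by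
        congr 1; funext x; exact step_a x
    _ = ∫ v, ∫ x, |ΦR x - ΦR (x - v)| ^ 2 * k v := integral_integral_swap hprod
    _ = ∫ v, (∫ u, R ^ 2 * |Φ u - Φ (u - R⁻¹ • v)| ^ 2) * k v := by
        congr 1; funext v
        rw [integral_mul_const]
        congr 1
        have hsub : ∀ x : EuclideanSpace ℝ (Fin 2),
            ΦR (x - v) = Φ (R⁻¹ • x - R⁻¹ • v) := by
          intro x; rw [hΦRdef]; simp [smul_sub]
        have : (∫ x, |ΦR x - ΦR (x - v)| ^ 2)
            = ∫ x, (fun u => |Φ u - Φ (u - R⁻¹ • v)| ^ 2) (R⁻¹ • x) := by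
          congr 1; funext x
          rw [hsub x]
        rw [this, MeasureTheory.Measure.integral_comp_inv_smul_of_nonneg volume
          (fun u => |Φ u - Φ (u - R⁻¹ • v)| ^ 2) (le_of_lt hR0)]
        rw [integral_const_mul]
        congr 1
        simp [finrank_euclideanSpace_fin]

/-- For a measurable radial kernel `k : ℝ² → ℝ` with `|k(v)| ≤ C(1+|v|)^{-(4+ε)}`
and a `C²` compactly supported `Φ : ℝ² → ℝ`, with `Φ_R(x) = Φ(x/R)`,
`∫∫ |Φ_R(x) - Φ_R(y)|² k(x-y) dx dy → ((1/2) ∫ |v|² k(v) dv) ∫ ‖∇Φ‖²`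
as `R → ∞`. -/
theorem stmt_13 (ε : ℝ) (hε : 0 < ε)
    (k : EuclideanSpace ℝ (Fin 2) → ℝ) (hkmeas : Measurable k)
    (hkradial : ∀ v w : EuclideanSpace ℝ (Fin 2), ‖v‖ = ‖w‖ → k v = k w)
    (C : ℝ) (hC : 0 < C)
    (hkbd : ∀ v, |k v| ≤ C * (1 + ‖v‖) ^ (-(4 + ε)))
    (Φ : EuclideanSpace ℝ (Fin 2) → ℝ)
    (hΦ : ContDiff ℝ 2 Φ) (hsupp : HasCompactSupport Φ) :
    Tendsto (fun R : ℝ =>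
        ∫ x : EuclideanSpace ℝ (Fin 2), ∫ y : EuclideanSpace ℝ (Fin 2),
          |Φ (R⁻¹ • x) - Φ (R⁻¹ • y)| ^ 2 * k (x - y)) atTop
      (nhds (((1 / 2) * ∫ v : EuclideanSpace ℝ (Fin 2), ‖v‖ ^ 2 * k v)
        * ∫ u, ‖gradient Φ u‖ ^ 2)) := by
  have hk := aux_int_k ε hε k hkmeas C hkbd
  obtain ⟨L, hL⟩ := ContDiff.lipschitzWith_of_hasCompactSupport hsupp hΦ two_ne_zero
  have houter := aux_outer ε hε k hkmeas C hkbd Φ hΦ hsupp L hL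
  rw [aux_value ε hε k hkmeas hkradial C hkbd Φ hΦ hsupp] at houter
  refine Tendsto.congr' ?_ houter
  filter_upwards [eventually_gt_atTop (0:ℝ)] with R hR
  exact (aux_ident ε k hkmeas hk Φ hΦ hsupp R hR).symm
end

section
/- Let C > 0 and δ > 0. There exists a continuously differentiable function φ : ℝ → ℝ with compact support such that 0 ≤ φ ≤ 1, φ(x) = 1 for all |x| ≤ 1, and ∫_ℝ ∫_ℝ |φ(x) − φ(y)|² C (1 + |x − y|)^{−2} dx dy < δ. -/
open MeasureTheory

namespace S14

open Set Filter Real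

noncomputable section

/-! ### Calculus bricks -/

def Gg (c s : ℝ) : ℝ := (1+s) * ((Real.log c - Real.log (1+s))^2 + 2*(Real.log c - Real.log (1+s)) + 2)
def Hh (c s : ℝ) : ℝ := -(((Real.log (1+s) - Real.log c)^2 + 2*(Real.log (1+s) - Real.log c) + 2) / (1+s))

lemma brkt_nonneg (l : ℝ) : 0 ≤ l^2 + 2*l + 2 := by nlinarith [sq_nonneg (l+1)]

lemma hasDerivAt_log1p {t : ℝ} (ht : 0 < 1 + t) :
    HasDerivAt (fun s : ℝ => Real.log (1+s)) ((1+t)⁻¹) t := by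
  have h1 : HasDerivAt (fun s : ℝ => 1 + s) 1 t := (hasDerivAt_id t).const_add 1
  simpa using (h1.log ht.ne')

lemma hasDerivAt_Gg (c : ℝ) {t : ℝ} (ht : 0 < 1 + t) :
    HasDerivAt (Gg c) ((Real.log c - Real.log (1+t))^2) t := by
  have h1 : HasDerivAt (fun s : ℝ => 1 + s) 1 t := (hasDerivAt_id t).const_add 1
  have hl : HasDerivAt (fun s : ℝ => Real.log c - Real.log (1+s)) (-(1+t)⁻¹) t := by
    simpa using (hasDerivAt_log1p ht).const_sub (Real.log c)
  have h2 : HasDerivAt (fun s : ℝ =>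
      (Real.log c - Real.log (1+s))^2 + 2*(Real.log c - Real.log (1+s)) + 2)
      (2*(Real.log c - Real.log (1+t))*(-(1+t)⁻¹) + 2*(-(1+t)⁻¹)) t := by
    have hsq : HasDerivAt (fun s : ℝ => (Real.log c - Real.log (1+s))^2)
        (2*(Real.log c - Real.log (1+t))*(-(1+t)⁻¹)) t := by
      exact (hl.pow 2).congr_deriv (by norm_num <;> ring)
    exact ((hsq.add (hl.const_mul 2)).add_const 2).congr_deriv (by ring)
  have := h1.mul h2
  refine this.congr_deriv ?_
  field_simp
  ring

lemma hasDerivAt_Hh (c : ℝ) {t : ℝ} (ht : 0 < 1 + t) :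
    HasDerivAt (Hh c) ((Real.log (1+t) - Real.log c)^2 / (1+t)^2) t := by
  have hl : HasDerivAt (fun s : ℝ => Real.log (1+s) - Real.log c) ((1+t)⁻¹) t :=
    (hasDerivAt_log1p ht).sub_const (Real.log c)
  have hnum : HasDerivAt (fun s : ℝ =>
      (Real.log (1+s) - Real.log c)^2 + 2*(Real.log (1+s) - Real.log c) + 2)
      (2*(Real.log (1+t) - Real.log c)*(1+t)⁻¹ + 2*(1+t)⁻¹) t := by
    have hsq : HasDerivAt (fun s : ℝ => (Real.log (1+s) - Real.log c)^2)
        (2*(Real.log (1+t) - Real.log c)*(1+t)⁻¹) t := by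
      exact (hl.pow 2).congr_deriv (by norm_num <;> ring)
    exact (hsq.add (hl.const_mul 2)).add_const 2
  have hden : HasDerivAt (fun s : ℝ => 1 + s) 1 t := (hasDerivAt_id t).const_add 1
  have := (hnum.div hden ht.ne').neg
  refine this.congr_deriv ?_
  field_simp
  ring

lemma tendsto_Hh (c : ℝ) : Tendsto (Hh c) atTop (nhds 0) := by
  have base : ∀ n : ℕ, Tendsto (fun s : ℝ => (Real.log (1+s))^n / (1+s)) atTop (nhds 0) := by
    intro n
    have h := Real.tendsto_pow_log_div_mul_add_atTop 1 0 n one_ne_zero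
    have hc : Tendsto (fun s : ℝ => 1 + s) atTop atTop := tendsto_atTop_add_const_left _ _ tendsto_id
    have := h.comp hc
    simpa [Function.comp_def] using this
  have expand : Hh c = fun s => -((Real.log (1+s))^2/(1+s)
      + (2 - 2*Real.log c) * ((Real.log (1+s))^1/(1+s))
      + ((Real.log c)^2 - 2*Real.log c + 2) * ((Real.log (1+s))^0/(1+s))) := by
    funext s
    simp only [Hh, pow_one, pow_zero]
    ring
  rw [expand]
  have := ((base 2).add (((base 1).const_mul (2 - 2*Real.log c)).add
    ((base 0).const_mul ((Real.log c)^2 - 2*Real.log c + 2)))).neg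
  simpa [add_assoc] using this

lemma tail_integrable {c a : ℝ} (ha : 0 < 1 + a) :
    IntegrableOn (fun t => (Real.log (1+t) - Real.log c)^2 / (1+t)^2) (Ioi a) := by
  refine integrableOn_Ioi_deriv_of_nonneg' (g := Hh c) (fun x hx => hasDerivAt_Hh c ?_)
    (fun x _ => by positivity) (tendsto_Hh c)
  exact ha.trans_le (by simpa using add_le_add_left hx.out 1)

lemma tail_integral {c a : ℝ} (ha : 0 < 1 + a) :
    ∫ t in Ioi a, (Real.log (1+t) - Real.log c)^2 / (1+t)^2
      = ((Real.log (1+a) - Real.log c)^2 + 2*(Real.log (1+a) - Real.log c) + 2) / (1+a) := by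
  rw [integral_Ioi_of_hasDerivAt_of_nonneg' (g := Hh c) (fun x hx => hasDerivAt_Hh c
      (ha.trans_le (by simpa using add_le_add_left hx.out 1)))
    (fun x _ => by positivity) (tendsto_Hh c)]
  simp [Hh]

lemma cont_logsq (c : ℝ) : ContinuousOn (fun t => (Real.log c - Real.log (1+t))^2) (Ici 0) := by
  refine ContinuousOn.pow ?_ 2
  refine (continuousOn_const.sub ?_)
  refine (Real.continuousOn_log.comp (by fun_prop) ?_)
  intro t ht
  simp only [mem_compl_iff, mem_singleton_iff]
  intro h
  have : (0:ℝ) ≤ t := ht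
  linarith [h]

lemma plateau_integral {c b : ℝ} (hb : 0 ≤ b) :
    ∫ t in (0:ℝ)..b, (Real.log c - Real.log (1+t))^2 = Gg c b - Gg c 0 := by
  refine intervalIntegral.integral_eq_sub_of_hasDerivAt (fun t ht => hasDerivAt_Gg c ?_) ?_
  · rw [uIcc_of_le hb] at ht
    linarith [ht.1]
  · apply ContinuousOn.intervalIntegrable
    rw [uIcc_of_le hb]
    exact (cont_logsq c).mono (Icc_subset_Ici_self)

lemma integrable_comp_abs {f : ℝ → ℝ} (hf : IntegrableOn f (Ioi 0)) :
    Integrable (fun x => f |x|) := by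
  have eqIoi : IntegrableOn (fun x => f |x|) (Ioi 0) :=
    hf.congr_fun (fun x hx => by rw [abs_of_pos hx]) measurableSet_Ioi
  have int_Iic : IntegrableOn (fun x ↦ f |x|) (Iic 0) := by
    rw [← Measure.map_neg_eq_self (volume : Measure ℝ)]
    let m : MeasurableEmbedding fun x : ℝ => -x := (Homeomorph.neg ℝ).measurableEmbedding
    rw [m.integrableOn_map_iff]
    simp_rw [Function.comp_def, abs_neg, neg_preimage, neg_Iic, neg_zero]
    exact (integrableOn_Ici_iff_integrableOn_Ioi).mpr eqIoi
  have : IntegrableOn (fun x => f |x|) (Iic 0 ∪ Ioi 0) := int_Iic.union eqIoi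
  rwa [Iic_union_Ioi, integrableOn_univ] at this

/-! ### The inner majorant -/

def mmaj (P t : ℝ) : ℝ :=
  if 2*P < 1+t then 4*((Real.log (1+t) - Real.log P)^2) * ((1+t)^2)⁻¹
  else (4/P^2) * ((Real.log P - Real.log (1+t))^2 + 1)

lemma mmaj_nonneg {P t : ℝ} (hP : 0 < P) : 0 ≤ mmaj P t := by
  unfold mmaj
  split
  · next h => positivity
  · positivity

lemma mmaj_integrableOn_Ioc {P : ℝ} (hP : 1 ≤ P) :
    IntegrableOn (mmaj P) (Ioc 0 (2*P-1)) := by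
  have hc : (0:ℝ) ≤ 2*P-1 := by linarith
  have hcont : ContinuousOn (fun t => (4/P^2) * ((Real.log P - Real.log (1+t))^2 + 1)) (Icc 0 (2*P-1)) :=
    (((cont_logsq P).add continuousOn_const).const_smul (4/P^2)).mono Icc_subset_Ici_self
  have hint : IntegrableOn (fun t => (4/P^2) * ((Real.log P - Real.log (1+t))^2 + 1)) (Ioc 0 (2*P-1)) :=
    (hcont.integrableOn_Icc).mono_set Ioc_subset_Icc_self
  refine hint.congr_fun (fun t ht => ?_) measurableSet_Ioc
  have : ¬ (2*P < 1 + t) := by push_neg; linarith [ht.2]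
  simp [mmaj, this]

lemma mmaj_integrableOn_Ioi {P : ℝ} (hP : 1 ≤ P) :
    IntegrableOn (mmaj P) (Ioi (2*P-1)) := by
  have ha : (0:ℝ) < 1 + (2*P-1) := by linarith
  have hint : IntegrableOn (fun t => 4 * ((Real.log (1+t) - Real.log P)^2 / (1+t)^2)) (Ioi (2*P-1)) :=
    (tail_integrable (c := P) ha).const_mul 4
  refine hint.congr_fun (fun t ht => ?_) measurableSet_Ioi
  have h1 : 2*P < 1 + t := by have := ht.out; linarith
  simp only [mmaj, if_pos h1]
  rw [div_eq_mul_inv]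
  ring

lemma mmaj_integrableOn {P : ℝ} (hP : 1 ≤ P) : IntegrableOn (mmaj P) (Ioi 0) := by
  have hc : (0:ℝ) ≤ 2*P-1 := by linarith
  have := (mmaj_integrableOn_Ioc hP).union (mmaj_integrableOn_Ioi hP)
  rwa [Ioc_union_Ioi_eq_Ioi hc] at this

lemma mmaj_integral_le {P : ℝ} (hP : 1 ≤ P) : ∫ t in Ioi 0, mmaj P t ≤ 25/P := by
  have hP0 : (0:ℝ) < P := by linarith
  have hc : (0:ℝ) ≤ 2*P-1 := by linarith
  have hsplit : Ioc (0:ℝ) (2*P-1) ∪ Ioi (2*P-1) = Ioi 0 := Ioc_union_Ioi_eq_Ioi hc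
  rw [← hsplit, setIntegral_union (Ioc_disjoint_Ioi le_rfl) measurableSet_Ioi
      (mmaj_integrableOn_Ioc hP) (mmaj_integrableOn_Ioi hP)]
  have l2u : Real.log 2 < 0.6931471808 := Real.log_two_lt_d9
  have l2l : (0.6931471803:ℝ) < Real.log 2 := Real.log_two_gt_d9
  have e1 : ∫ t in Ioc (0:ℝ) (2*P-1), mmaj P t
      = (4/P^2) * ((Gg P (2*P-1) - Gg P 0) + (2*P-1)) := by
    have : ∫ t in Ioc (0:ℝ) (2*P-1), mmaj P t
        = ∫ t in Ioc (0:ℝ) (2*P-1), (4/P^2) * ((Real.log P - Real.log (1+t))^2 + 1) := by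
      refine setIntegral_congr_fun measurableSet_Ioc (fun t ht => ?_)
      have : ¬ (2*P < 1 + t) := by push_neg; linarith [ht.2]
      simp [mmaj, this]
    rw [this, ← intervalIntegral.integral_of_le hc]
    rw [intervalIntegral.integral_const_mul]
    have hii : IntervalIntegrable (fun t => (Real.log P - Real.log (1+t))^2) volume 0 (2*P-1) := by
      apply ContinuousOn.intervalIntegrable
      rw [uIcc_of_le hc]
      exact (cont_logsq P).mono Icc_subset_Ici_self
    rw [intervalIntegral.integral_add hii intervalIntegrable_const]
    rw [plateau_integral hc, intervalIntegral.integral_const]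
    simp
  have e2 : ∫ t in Ioi (2*P-1), mmaj P t
      = 4 * (((Real.log 2)^2 + 2*Real.log 2 + 2) / (2*P)) := by
    have h1 : ∫ t in Ioi (2*P-1), mmaj P t
        = ∫ t in Ioi (2*P-1), 4 * ((Real.log (1+t) - Real.log P)^2 / (1+t)^2) := by
      refine setIntegral_congr_fun measurableSet_Ioi (fun t ht => ?_)
      have h1 : 2*P < 1 + t := by have := ht.out; linarith
      simp only [mmaj, if_pos h1]
      rw [div_eq_mul_inv]; ring
    have ha : (0:ℝ) < 1 + (2*P-1) := by linarith
    have h2p : 1 + (2*P-1) = 2*P := by ring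
    rw [integral_const_mul, tail_integral ha] at h1
    rw [h1, h2p]
    have hlog : Real.log (2*P) - Real.log P = Real.log 2 := by
      rw [Real.log_mul (by norm_num) (ne_of_gt hP0)]
      ring
    rw [hlog]
  rw [e1, e2]
  have hGc : Gg P (2*P-1) = 2*P*((Real.log 2)^2 - 2*Real.log 2 + 2) := by
    unfold Gg
    have h2p : 1 + (2*P-1) = 2*P := by ring
    rw [h2p]
    have hlog : Real.log P - Real.log (2*P) = -Real.log 2 := by
      rw [Real.log_mul (by norm_num) (ne_of_gt hP0)]
      ring
    rw [hlog]
    ring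
  have hG0 : 0 ≤ Gg P 0 := by
    unfold Gg
    have : Real.log (1+(0:ℝ)) = 0 := by norm_num
    rw [this]
    have := brkt_nonneg (Real.log P - 0)
    nlinarith
  have hsq2 : (Real.log 2)^2 ≤ 0.4805 := by nlinarith
  have hbr : (Real.log 2)^2 - 2*Real.log 2 + 2 ≤ 1.1 := by nlinarith
  have hb1 : Gg P (2*P-1) ≤ 2.2*P := by
    rw [hGc]
    nlinarith [mul_le_mul_of_nonneg_left hbr (by positivity : (0:ℝ) ≤ 2*P)]
  have h4P : 0 < P^2 := by positivity
  have key1 : (4/P^2) * ((Gg P (2*P-1) - Gg P 0) + (2*P-1)) ≤ (4/P^2)*(2.2*P + 2*P) := by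
    apply mul_le_mul_of_nonneg_left _ (by positivity)
    linarith
  have key2 : 4 * (((Real.log 2)^2 + 2*Real.log 2 + 2) / (2*P)) ≤ 4*(3.867/(2*P)) := by
    gcongr
    all_goals nlinarith
  have hPne : P ≠ 0 := ne_of_gt hP0
  have hfin : (4/P^2)*(2.2*P + 2*P) + 4*(3.867/(2*P)) ≤ 25/P := by
    have ha : (4/P^2)*(2.2*P + 2*P) = 16.8/P := by field_simp; ring
    have hb : 4*(3.867/(2*P)) = 7.734/P := by field_simp; ring
    rw [ha, hb, ← add_div]
    gcongr
    all_goals norm_num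
  linarith

/-! ### Pointwise domination by the inner majorant -/

lemma log_sub_le {A B : ℝ} (hA : 0 < A) (hAB : A ≤ B) :
    Real.log B - Real.log A ≤ (B - A)/A := by
  have hB : 0 < B := lt_of_lt_of_le hA hAB
  have h1 : Real.log (B/A) ≤ B/A - 1 := Real.log_le_sub_one_of_pos (by positivity)
  rw [Real.log_div (ne_of_gt hB) (ne_of_gt hA)] at h1
  have : B/A - 1 = (B-A)/A := by field_simp
  linarith [this ▸ h1]

lemma mmaj_dom (x y : ℝ) :
    (Real.log (1+|x|) - Real.log (1+|y|))^2 * (((1+|x-y|)^2)⁻¹) ≤ mmaj (1+|x|) |y| := by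
  set P := 1 + |x| with hPdef
  set Q := 1 + |y| with hQdef
  set u := |x - y| with hudef
  have hP : 1 ≤ P := by simp [hPdef, abs_nonneg]
  have hQ : 1 ≤ Q := by simp [hQdef, abs_nonneg]
  have hP0 : 0 < P := by linarith
  have hQ0 : 0 < Q := by linarith
  have hu0 : 0 ≤ u := abs_nonneg _
  have hu1 : 0 < 1 + u := by linarith
  have habs : |P - Q| ≤ u := by
    have := abs_abs_sub_abs_le_abs_sub x y
    have heq : P - Q = |x| - |y| := by rw [hPdef, hQdef]; ring
    rw [heq]
    exact this
  have habs1 : Q - P ≤ u := by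
    have := abs_le.mp habs
    linarith [this.1]
  have habs2 : P - Q ≤ u := (abs_le.mp habs).2
  unfold mmaj
  split
  · next h =>
    have hQ2P : 2*P < Q := by rw [hQdef] at *; exact h
    have hQle : Q ≤ 2*(1+u) := by linarith
    have hinv : ((1+u)^2)⁻¹ ≤ 4*(Q^2)⁻¹ := by
      have h1 : Q^2/4 ≤ (1+u)^2 := by nlinarith
      have h2 := inv_anti₀ (show (0:ℝ) < Q^2/4 by positivity) h1
      have h3 : (Q^2/4)⁻¹ = 4*(Q^2)⁻¹ := by
        rw [inv_div]
        ring
      linarith [h3 ▸ h2]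
    have hsq : (Real.log P - Real.log Q)^2 = (Real.log Q - Real.log P)^2 := by ring
    calc (Real.log P - Real.log Q)^2 * ((1+u)^2)⁻¹
        ≤ (Real.log Q - Real.log P)^2 * (4*(Q^2)⁻¹) := by
          rw [hsq]; exact mul_le_mul_of_nonneg_left hinv (sq_nonneg _)
      _ = 4*((Real.log Q - Real.log P)^2) * (Q^2)⁻¹ := by ring
  · next h =>
    have hQ2P : Q ≤ 2*P := by rw [hQdef] at *; push_neg at h; linarith [h]
    by_cases hsub : 2*Q ≤ P
    · have hup : P/2 ≤ 1+u := by linarith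
      have hinv : ((1+u)^2)⁻¹ ≤ 4*(P^2)⁻¹ := by
        have h1 : P^2/4 ≤ (1+u)^2 := by nlinarith
        have h2 := inv_anti₀ (show (0:ℝ) < P^2/4 by positivity) h1
        have h3 : (P^2/4)⁻¹ = 4*(P^2)⁻¹ := by rw [inv_div]; ring
        linarith [h3 ▸ h2]
      calc (Real.log P - Real.log Q)^2 * ((1+u)^2)⁻¹
          ≤ (Real.log P - Real.log Q)^2 * (4*(P^2)⁻¹) :=
            mul_le_mul_of_nonneg_left hinv (sq_nonneg _)
        _ ≤ (4/P^2) * ((Real.log P - Real.log Q)^2 + 1) := by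
            rw [div_eq_mul_inv]
            nlinarith [sq_nonneg (Real.log P - Real.log Q), sq_nonneg P,
              inv_nonneg.mpr (sq_nonneg P)]
    · push_neg at hsub
      have hub : Real.log P - Real.log Q ≤ 2*u/P := by
        rcases le_or_gt P Q with hle | hlt
        · have : 0 ≤ Real.log Q - Real.log P := by
            have := Real.log_le_log hP0 hle
            linarith
          have : 0 ≤ 2*u/P := by positivity
          linarith
        · have h1 : Real.log P - Real.log Q ≤ (P - Q)/Q := log_sub_le hQ0 hlt.le
          have h2 : (P - Q)/Q ≤ 2*u/P := by
            rw [div_le_div_iff₀ hQ0 hP0]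
            nlinarith
          linarith
      have hlb : -(2*u/P) ≤ Real.log P - Real.log Q := by
        rcases le_or_gt Q P with hle | hlt
        · have : 0 ≤ Real.log P - Real.log Q := by
            have := Real.log_le_log hQ0 hle
            linarith
          have h0 : 0 ≤ 2*u/P := by positivity
          linarith
        · have h1 : Real.log Q - Real.log P ≤ (Q - P)/P := log_sub_le hP0 hlt.le
          have h2 : (Q - P)/P ≤ 2*u/P := by
            rw [div_le_div_iff₀ hP0 hP0]
            nlinarith
          linarith
      have hl : (Real.log P - Real.log Q)^2 ≤ (2*u/P)^2 := sq_le_sq' hlb hub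
      calc (Real.log P - Real.log Q)^2 * ((1+u)^2)⁻¹
          ≤ (2*u/P)^2 * ((1+u)^2)⁻¹ :=
            mul_le_mul_of_nonneg_right hl (inv_nonneg.mpr (sq_nonneg _))
        _ = (4/P^2) * (u^2 * ((1+u)^2)⁻¹) := by
            have hPne : P ≠ 0 := ne_of_gt hP0
            have hune : (1+u) ≠ 0 := ne_of_gt hu1
            field_simp
            ring
        _ ≤ (4/P^2) * 1 := by
            apply mul_le_mul_of_nonneg_left _ (by positivity)
            rw [← div_eq_mul_inv, div_le_one (by positivity)]
            nlinarith
        _ = 4/P^2 := by ring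
        _ ≤ (4/P^2) * ((Real.log P - Real.log Q)^2 + 1) := by
            have h4 : (0:ℝ) ≤ 4/P^2 := by positivity
            nlinarith [sq_nonneg (Real.log P - Real.log Q)]

/-! ### The quartic log inequality and the Lipschitz constant -/

lemma quartic {a b : ℝ} (ha : 0 ≤ a) (hab : a ≤ b) :
    (1+b^2)*(1+a)^4 ≤ (1+a^2)*(1+b)^4 := by
  have hb : 0 ≤ b := le_trans ha hab
  nlinarith [mul_nonneg (sub_nonneg.2 hab)
    (by positivity : (0:ℝ) ≤ 4+5*(a+b)+4*a^2+4*b^2+(a+b)*(a^2+b^2)+4*a^2*b^2+a^2*b^2*(a+b))]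

lemma logsq_aux {a b : ℝ} (ha : 0 ≤ a) (hab : a ≤ b) :
    Real.log (1+b^2) - Real.log (1+a^2) ≤ 4*(Real.log (1+b) - Real.log (1+a)) := by
  have hb : 0 ≤ b := le_trans ha hab
  have h1 : Real.log ((1+b^2)*(1+a)^4) ≤ Real.log ((1+a^2)*(1+b)^4) :=
    Real.log_le_log (by positivity) (quartic ha hab)
  rw [Real.log_mul (by positivity) (by positivity),
      Real.log_mul (by positivity) (by positivity),
      Real.log_pow, Real.log_pow] at h1
  push_cast at h1
  linarith

lemma logsq_le (x y : ℝ) :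
    |Real.log (1+x^2) - Real.log (1+y^2)| ≤ 4*|Real.log (1+|x|) - Real.log (1+|y|)| := by
  have hx2 : x^2 = |x|^2 := (sq_abs x).symm
  have hy2 : y^2 = |y|^2 := (sq_abs y).symm
  rcases le_total |x| |y| with hle | hle
  · have h1 := logsq_aux (abs_nonneg x) hle
    have hm1 : Real.log (1+x^2) ≤ Real.log (1+y^2) := by
      apply Real.log_le_log (by positivity)
      nlinarith [abs_nonneg x, abs_nonneg y]
    have hm2 : Real.log (1+|x|) ≤ Real.log (1+|y|) := by
      apply Real.log_le_log (by positivity); linarith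
    rw [abs_of_nonpos (by linarith), abs_of_nonpos (by linarith)]
    rw [hx2, hy2] at *
    linarith
  · have h1 := logsq_aux (abs_nonneg y) hle
    have hm1 : Real.log (1+y^2) ≤ Real.log (1+x^2) := by
      apply Real.log_le_log (by positivity)
      nlinarith [abs_nonneg x, abs_nonneg y]
    have hm2 : Real.log (1+|y|) ≤ Real.log (1+|x|) := by
      apply Real.log_le_log (by positivity); linarith
    rw [abs_of_nonneg (by linarith), abs_of_nonneg (by linarith)]
    rw [hx2, hy2] at *
    linarith

lemma exists_lip : ∃ M : ℝ, 1 ≤ M ∧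
    ∀ p q : ℝ, |Real.smoothTransition p - Real.smoothTransition q| ≤ M * |p - q| := by
  have hCD : ContDiff ℝ 1 Real.smoothTransition := Real.smoothTransition.contDiff
  have hcont : Continuous (deriv Real.smoothTransition) := hCD.continuous_deriv le_rfl
  obtain ⟨K, hK⟩ := isCompact_Icc.exists_bound_of_continuousOn
    (hcont.continuousOn : ContinuousOn (deriv Real.smoothTransition) (Icc (0:ℝ) 1))
  have hzero : ∀ z : ℝ, z ∉ Icc (0:ℝ) 1 → deriv Real.smoothTransition z = 0 := by
    intro z hz
    rw [mem_Icc, not_and_or] at hz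
    rcases hz with hz | hz
    · push_neg at hz
      have hev : Real.smoothTransition =ᶠ[nhds z] (fun _ => 0) := by
        filter_upwards [Iio_mem_nhds hz] with w hw
        exact Real.smoothTransition.zero_of_nonpos (le_of_lt hw)
      rw [hev.deriv_eq, deriv_const]
    · push_neg at hz
      have hev : Real.smoothTransition =ᶠ[nhds z] (fun _ => 1) := by
        filter_upwards [Ioi_mem_nhds hz] with w hw
        exact Real.smoothTransition.one_of_one_le (le_of_lt hw)
      rw [hev.deriv_eq, deriv_const]
  refine ⟨max K 1, le_max_right _ _, ?_⟩
  have hbound : ∀ z : ℝ, ‖deriv Real.smoothTransition z‖ ≤ max K 1 := by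
    intro z
    by_cases hz : z ∈ Icc (0:ℝ) 1
    · exact le_trans (hK z hz) (le_max_left _ _)
    · rw [hzero z hz]
      simp only [norm_zero]
      exact le_trans zero_le_one (le_max_right _ _)
  intro p q
  have := Convex.norm_image_sub_le_of_norm_deriv_le
    (fun z _ => (hCD.differentiable (by norm_num)).differentiableAt)
    (fun z _ => hbound z) convex_univ (mem_univ q) (mem_univ p)
  simpa [Real.norm_eq_abs] using this

/-! ### The plateau function -/

def phi (S x : ℝ) : ℝ := Real.smoothTransition ((3/2) * (1 - Real.log (1+x^2)/(2*S)))

lemma phi_contDiff {S : ℝ} : ContDiff ℝ 1 (phi S) := by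
  have hlog : ContDiff ℝ 1 (fun x : ℝ => Real.log (1+x^2)) :=
    ContDiff.log (contDiff_const.add (contDiff_id.pow 2)) (fun x => by positivity)
  exact (Real.smoothTransition.contDiff (n := 1)).comp
    (contDiff_const.mul (contDiff_const.sub (hlog.div_const _)))

lemma phi_nonneg {S x : ℝ} : 0 ≤ phi S x := Real.smoothTransition.nonneg _
lemma phi_le_one {S x : ℝ} : phi S x ≤ 1 := Real.smoothTransition.le_one _

lemma phi_one {S x : ℝ} (hS : 2 ≤ S) (hx : |x| ≤ 1) : phi S x = 1 := by
  apply Real.smoothTransition.one_of_one_le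
  have hx2 : x^2 ≤ 1 := by nlinarith [abs_nonneg x, sq_abs x]
  have h1 : Real.log (1+x^2) ≤ Real.log 2 := Real.log_le_log (by positivity) (by linarith)
  have h2 : Real.log 2 < 0.6931471808 := Real.log_two_lt_d9
  have h3 : Real.log (1+x^2)/(2*S) ≤ 1/3 := by
    rw [div_le_iff₀ (by linarith)]
    calc Real.log (1+x^2) ≤ 0.6931471808 := by linarith
      _ ≤ 1/3*(2*S) := by linarith
  linarith

lemma phi_zero {S x : ℝ} (hS : 2 ≤ S) (hx : Real.exp S ≤ |x|) : phi S x = 0 := by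
  apply Real.smoothTransition.zero_of_nonpos
  have h0 : Real.exp (2*S) ≤ x^2 := by
    have h1 : Real.exp S * Real.exp S ≤ |x| * |x| :=
      mul_le_mul hx hx (Real.exp_pos S).le (abs_nonneg x)
    have h2 : |x| * |x| = x^2 := by rw [← sq_abs x]; ring
    rw [show (2*S : ℝ) = S + S by ring, Real.exp_add, ← h2]
    exact h1
  have h1 : (2*S : ℝ) ≤ Real.log (1+x^2) := by
    rw [← Real.log_exp (2*S)]
    apply Real.log_le_log (Real.exp_pos _)
    linarith
  have h2 : 1 ≤ Real.log (1+x^2)/(2*S) := by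
    rw [le_div_iff₀ (by linarith)]
    linarith
  linarith

lemma phi_diff_le {S M : ℝ} (hS : 2 ≤ S) (hM : 1 ≤ M)
    (hlip : ∀ p q : ℝ, |Real.smoothTransition p - Real.smoothTransition q| ≤ M * |p - q|)
    (x y : ℝ) :
    |phi S x - phi S y| ≤ (3*M/S) * |Real.log (1+|x|) - Real.log (1+|y|)| := by
  have h1 := hlip ((3/2) * (1 - Real.log (1+x^2)/(2*S))) ((3/2) * (1 - Real.log (1+y^2)/(2*S)))
  have h2 : (3/2) * (1 - Real.log (1+x^2)/(2*S)) - (3/2) * (1 - Real.log (1+y^2)/(2*S))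
      = (3/(4*S)) * (Real.log (1+y^2) - Real.log (1+x^2)) := by
    field_simp
    ring
  rw [h2] at h1
  have h3 : |(3/(4*S)) * (Real.log (1+y^2) - Real.log (1+x^2))|
      = (3/(4*S)) * |Real.log (1+x^2) - Real.log (1+y^2)| := by
    rw [abs_mul, abs_of_pos (by positivity : (0:ℝ) < 3/(4*S)), abs_sub_comm]
  rw [h3] at h1
  have h4 := logsq_le x y
  calc |phi S x - phi S y| ≤ M * ((3/(4*S)) * |Real.log (1+x^2) - Real.log (1+y^2)|) := h1
    _ ≤ M * ((3/(4*S)) * (4*|Real.log (1+|x|) - Real.log (1+|y|)|)) := by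
        apply mul_le_mul_of_nonneg_left _ (by linarith)
        apply mul_le_mul_of_nonneg_left h4 (by positivity)
    _ = (3*M/S) * |Real.log (1+|x|) - Real.log (1+|y|)| := by
        field_simp

/-! ### Far majorant and outer majorant -/

def fmaj (E t : ℝ) : ℝ := if t ≤ E then (Real.log (1+E) - Real.log (1+t))^2 else 0

lemma fmaj_facts {E : ℝ} (hE : 0 ≤ E) :
    IntegrableOn (fmaj E) (Ioi 0) ∧ ∫ t in Ioi 0, fmaj E t ≤ 2*(1+E) := by
  have hIoc : IntegrableOn (fmaj E) (Ioc 0 E) := by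
    have hint : IntegrableOn (fun t => (Real.log (1+E) - Real.log (1+t))^2) (Ioc 0 E) :=
      (((cont_logsq (1+E)).mono Icc_subset_Ici_self).integrableOn_Icc).mono_set Ioc_subset_Icc_self
    exact hint.congr_fun (fun t ht => by simp [fmaj, ht.2]) measurableSet_Ioc
  have hIoi : IntegrableOn (fmaj E) (Ioi E) := by
    have : IntegrableOn (fun _ : ℝ => (0:ℝ)) (Ioi E) := integrableOn_zero
    exact this.congr_fun (fun t ht => by
      have : ¬ t ≤ E := not_le.mpr ht.out
      simp [fmaj, this]) measurableSet_Ioi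
  have hsplit : Ioc (0:ℝ) E ∪ Ioi E = Ioi 0 := Ioc_union_Ioi_eq_Ioi hE
  constructor
  · rw [← hsplit]; exact hIoc.union hIoi
  · rw [← hsplit, setIntegral_union (Ioc_disjoint_Ioi le_rfl) measurableSet_Ioi hIoc hIoi]
    have e2 : ∫ t in Ioi E, fmaj E t = 0 := by
      rw [setIntegral_congr_fun measurableSet_Ioi (fun t (ht : t ∈ Ioi E) => by
        have : ¬ t ≤ E := not_le.mpr ht.out
        simp [fmaj, this] : EqOn (fmaj E) (fun _ => (0:ℝ)) (Ioi E))]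
      simp
    have e1 : ∫ t in Ioc (0:ℝ) E, fmaj E t = Gg (1+E) E - Gg (1+E) 0 := by
      rw [setIntegral_congr_fun measurableSet_Ioc (fun t (ht : t ∈ Ioc 0 E) => by
        simp [fmaj, ht.2] : EqOn (fmaj E) (fun t => (Real.log (1+E) - Real.log (1+t))^2) (Ioc 0 E))]
      rw [← intervalIntegral.integral_of_le hE]
      exact plateau_integral hE
    rw [e1, e2]
    have hGE : Gg (1+E) E = 2*(1+E) := by
      unfold Gg; simp; ring
    have hG0 : 0 ≤ Gg (1+E) 0 := by
      unfold Gg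
      have h := brkt_nonneg (Real.log (1+E) - Real.log (1+0))
      nlinarith
    linarith

lemma fmaj_nonneg {E t : ℝ} : 0 ≤ fmaj E t := by
  unfold fmaj
  split
  · positivity
  · exact le_refl 0

def omaj (c1 c2 X t : ℝ) : ℝ := if t ≤ X then c1 * ((1+t))⁻¹ else c2 * ((1+t)^2)⁻¹

lemma omaj_facts {c1 c2 X : ℝ} (hX : 0 ≤ X) (h1 : 0 ≤ c1) (h2 : 0 ≤ c2) :
    Integrable (fun x : ℝ => omaj c1 c2 X |x|) ∧
    ∫ x : ℝ, omaj c1 c2 X |x| = 2*(c1 * Real.log (1+X) + c2 * ((1+X))⁻¹) := by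
  have hIoc : IntegrableOn (omaj c1 c2 X) (Ioc 0 X) := by
    have hcont : ContinuousOn (fun t : ℝ => c1 * ((1+t))⁻¹) (Icc 0 X) := by
      apply ContinuousOn.mul continuousOn_const
      apply ContinuousOn.inv₀ (by fun_prop)
      intro t ht
      have := ht.1
      intro hc
      linarith [hc]
    exact (hcont.integrableOn_Icc.mono_set Ioc_subset_Icc_self).congr_fun
      (fun t ht => by simp [omaj, ht.2]) measurableSet_Ioc
  have hd : ∀ t ∈ Ici X, HasDerivAt (fun s : ℝ => -(c2 * (1+s)⁻¹)) (c2 * ((1+t)^2)⁻¹) t := by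
    intro t ht
    have ht1 : 0 < 1 + t := by have := ht.out; linarith
    have h0 : HasDerivAt (fun s : ℝ => 1 + s) 1 t := (hasDerivAt_id t).const_add 1
    have h1 := (h0.inv ht1.ne').const_mul c2
    have := h1.neg
    refine this.congr_deriv ?_
    field_simp
  have htend0 : Tendsto (fun s : ℝ => -(c2 * (1+s)⁻¹)) atTop (nhds (0:ℝ)) := by
    have hb : Tendsto (fun s : ℝ => 1 + s) atTop atTop := tendsto_atTop_add_const_left _ _ tendsto_id
    have := ((tendsto_inv_atTop_zero.comp hb).const_mul c2).neg
    simpa using this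
  have hIoi : IntegrableOn (omaj c1 c2 X) (Ioi X) := by
    have hint : IntegrableOn (fun t => c2 * ((1+t)^2)⁻¹) (Ioi X) :=
      integrableOn_Ioi_deriv_of_nonneg' hd (fun t ht => by positivity) htend0
    exact hint.congr_fun (fun t ht => by
      have : ¬ t ≤ X := not_le.mpr ht.out
      simp [omaj, this]) measurableSet_Ioi
  have hsplit : Ioc (0:ℝ) X ∪ Ioi X = Ioi 0 := Ioc_union_Ioi_eq_Ioi hX
  have hIoi0 : IntegrableOn (omaj c1 c2 X) (Ioi 0) := by
    rw [← hsplit]; exact hIoc.union hIoi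
  constructor
  · exact integrable_comp_abs hIoi0
  · rw [integral_comp_abs (f := omaj c1 c2 X)]
    rw [← hsplit, setIntegral_union (Ioc_disjoint_Ioi le_rfl) measurableSet_Ioi hIoc hIoi]
    have e1 : ∫ t in Ioc (0:ℝ) X, omaj c1 c2 X t = c1 * Real.log (1+X) := by
      rw [setIntegral_congr_fun measurableSet_Ioc (fun t (ht : t ∈ Ioc 0 X) => by
        simp [omaj, ht.2] : EqOn (omaj c1 c2 X) (fun t => c1 * ((1+t))⁻¹) (Ioc 0 X))]
      rw [← intervalIntegral.integral_of_le hX, intervalIntegral.integral_const_mul]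
      have : ∫ t in (0:ℝ)..X, ((1+t))⁻¹ = Real.log (1+X) - Real.log (1+0) := by
        refine intervalIntegral.integral_eq_sub_of_hasDerivAt
          (f := fun s : ℝ => Real.log (1+s)) (fun t ht => ?_) ?_
        · rw [uIcc_of_le hX] at ht
          exact hasDerivAt_log1p (by linarith [ht.1])
        · apply ContinuousOn.intervalIntegrable
          rw [uIcc_of_le hX]
          apply ContinuousOn.inv₀ (by fun_prop)
          intro t ht
          have := ht.1
          intro hc
          linarith [hc]
      rw [this]
      simp
    have e2 : ∫ t in Ioi X, omaj c1 c2 X t = c2 * ((1+X))⁻¹ := by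
      rw [setIntegral_congr_fun measurableSet_Ioi (fun t (ht : t ∈ Ioi X) => by
        have : ¬ t ≤ X := not_le.mpr ht.out
        simp [omaj, this] : EqOn (omaj c1 c2 X) (fun t => c2 * ((1+t)^2)⁻¹) (Ioi X))]
      rw [integral_Ioi_of_hasDerivAt_of_nonneg' hd (fun t ht => by positivity) htend0]
      simp
    rw [e1, e2]

end

end S14

open S14 Set Filter Real in
/-- One-dimensional plateau construction: for `C > 0`, `δ > 0` there is a `C¹`
compactly supported `φ : ℝ → ℝ` with `0 ≤ φ ≤ 1`, `φ = 1` on `[-1, 1]`, and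
`∫∫ |φ(x) - φ(y)|² C(1+|x-y|)^{-2} dx dy < δ`. -/
theorem stmt_14 (C δ : ℝ) (hC : 0 < C) (hδ : 0 < δ) :
    ∃ φ : ℝ → ℝ,
      ContDiff ℝ 1 φ ∧ HasCompactSupport φ ∧
      (∀ x, 0 ≤ φ x ∧ φ x ≤ 1) ∧
      (∀ x : ℝ, |x| ≤ 1 → φ x = 1) ∧
      (∫ x : ℝ, ∫ y : ℝ, |φ x - φ y| ^ 2 * (C * ((1 + |x - y|) ^ 2)⁻¹)) < δ := by
  obtain ⟨M, hM1, hlip⟩ := S14.exists_lip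
  have hM0 : 0 < M := by linarith
  set S : ℝ := max 2 (1602*M^2*C/δ + 1) with hSdef
  have hS2 : (2:ℝ) ≤ S := le_max_left _ _
  have hS0 : (0:ℝ) < S := by linarith
  have hSgt : 1602*M^2*C/δ < S := lt_of_lt_of_le (lt_add_one _) (le_max_right _ _)
  set A : ℝ := 3*M/S with hAdef
  have hA0 : 0 < A := by positivity
  set E : ℝ := Real.exp S with hEdef
  have hE1 : 1 ≤ E := by
    rw [hEdef]
    have := Real.add_one_le_exp S
    linarith
  have hE0 : 0 < E := by linarith
  set X : ℝ := 2*E+1 with hXdef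
  have hX0 : (0:ℝ) ≤ X := by linarith
  -- the function
  refine ⟨phi S, phi_contDiff, ?_, fun x => ⟨phi_nonneg, phi_le_one⟩,
    fun x hx => phi_one hS2 hx, ?_⟩
  · -- compact support
    apply HasCompactSupport.intro (isCompact_Icc (a := -E) (b := E))
    intro x hx
    apply phi_zero hS2
    rw [mem_Icc, not_and_or] at hx
    rcases hx with hx | hx
    · push_neg at hx
      calc E ≤ -x := by linarith
        _ ≤ |x| := by rw [abs_eq_max_neg]; exact le_max_right _ _
    · push_neg at hx
      calc E ≤ x := le_of_lt hx
        _ ≤ |x| := le_abs_self x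
  · -- the integral bound
    set F : ℝ → ℝ → ℝ := fun x y => |phi S x - phi S y| ^ 2 * (C * ((1 + |x - y|) ^ 2)⁻¹)
      with hFdef
    have hF_nonneg : ∀ x y, 0 ≤ F x y := by
      intro x y
      rw [hFdef]
      positivity
    -- pointwise master bound
    have hmaster : ∀ x y, F x y ≤ A^2*C *
        ((Real.log (1+|x|) - Real.log (1+|y|))^2 * (((1+|x-y|)^2)⁻¹)) := by
      intro x y
      have h1 := phi_diff_le hS2 hM1 hlip x y
      have h2 : |phi S x - phi S y|^2
          ≤ (3*M/S)^2 * (Real.log (1+|x|) - Real.log (1+|y|))^2 := by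
        have := pow_le_pow_left₀ (abs_nonneg _) h1 2
        calc |phi S x - phi S y|^2
            ≤ ((3*M/S) * |Real.log (1+|x|) - Real.log (1+|y|)|)^2 := this
          _ = (3*M/S)^2 * (Real.log (1+|x|) - Real.log (1+|y|))^2 := by
              rw [mul_pow, sq_abs]
      calc F x y ≤ ((3*M/S)^2 * (Real.log (1+|x|) - Real.log (1+|y|))^2)
            * (C * ((1 + |x - y|) ^ 2)⁻¹) := by
            rw [hFdef]
            exact mul_le_mul_of_nonneg_right h2 (by positivity)
        _ = A^2*C * ((Real.log (1+|x|) - Real.log (1+|y|))^2 * (((1+|x-y|)^2)⁻¹)) := by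
            rw [hAdef]; ring
    -- inner bound, mid regime (valid for all x)
    have hinner_mid : ∀ x : ℝ, (∫ y : ℝ, F x y) ≤ (50*A^2*C) * ((1+|x|))⁻¹ := by
      intro x
      have hP : (1:ℝ) ≤ 1 + |x| := by simp [abs_nonneg]
      have hP0 : (0:ℝ) < 1 + |x| := by linarith
      have hint : Integrable (fun y : ℝ => A^2*C * mmaj (1+|x|) |y|) :=
        (integrable_comp_abs (mmaj_integrableOn hP)).const_mul _
      have hle : ∀ y, F x y ≤ A^2*C * mmaj (1+|x|) |y| := by
        intro y
        calc F x y ≤ A^2*C * ((Real.log (1+|x|) - Real.log (1+|y|))^2 * (((1+|x-y|)^2)⁻¹)) :=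
              hmaster x y
          _ ≤ A^2*C * mmaj (1+|x|) |y| :=
              mul_le_mul_of_nonneg_left (mmaj_dom x y) (by positivity)
      calc (∫ y : ℝ, F x y) ≤ ∫ y : ℝ, A^2*C * mmaj (1+|x|) |y| :=
            integral_mono_of_nonneg (Filter.Eventually.of_forall (hF_nonneg x)) hint
              (Filter.Eventually.of_forall hle)
        _ = A^2*C * ∫ y : ℝ, mmaj (1+|x|) |y| := integral_const_mul _ _
        _ = A^2*C * (2 * ∫ t in Ioi (0:ℝ), mmaj (1+|x|) t) := by
            rw [integral_comp_abs (f := mmaj (1+|x|))]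
        _ ≤ A^2*C * (2 * (25/(1+|x|))) := by
            apply mul_le_mul_of_nonneg_left _ (by positivity)
            apply mul_le_mul_of_nonneg_left (mmaj_integral_le hP) (by norm_num)
        _ = (50*A^2*C) * ((1+|x|))⁻¹ := by
            field_simp
            ring
    -- inner bound, far regime
    have hinner_far : ∀ x : ℝ, X < |x| →
        (∫ y : ℝ, F x y) ≤ (16*A^2*C*(1+E)) * (((1+|x|)^2)⁻¹) := by
      intro x hx
      have hP0 : (0:ℝ) < 1 + |x| := by positivity
      have hphix : phi S x = 0 := phi_zero hS2 (by rw [hEdef] at *; linarith)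
      have hphiE : phi S E = 0 := phi_zero hS2 (by rw [abs_of_pos hE0])
      have hle : ∀ y, F x y ≤ (4*A^2*C*((1+|x|)^2)⁻¹) * fmaj E |y| := by
        intro y
        by_cases hy : |y| ≤ E
        · -- φ(y) ≤ A q(y), kernel ≤ 4/(1+|x|)²
          have hq0 : 0 ≤ Real.log (1+E) - Real.log (1+|y|) := by
            have := Real.log_le_log (by positivity : (0:ℝ) < 1 + |y|)
              (by linarith : 1 + |y| ≤ 1 + E)
            linarith
          have hqb : phi S y ≤ A * (Real.log (1+E) - Real.log (1+|y|)) := by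
            have h1 := phi_diff_le hS2 hM1 hlip y E
            rw [hphiE, sub_zero, abs_of_nonneg (phi_nonneg), abs_of_pos hE0] at h1
            have h2 : |Real.log (1+|y|) - Real.log (1+E)|
                = Real.log (1+E) - Real.log (1+|y|) := by
              rw [abs_sub_comm, abs_of_nonneg hq0]
            rw [h2] at h1
            rw [hAdef]
            exact h1
          have hsq : (phi S y)^2 ≤ A^2 * (Real.log (1+E) - Real.log (1+|y|))^2 := by
            have := pow_le_pow_left₀ (phi_nonneg (S := S) (x := y)) hqb 2
            calc (phi S y)^2 ≤ (A * (Real.log (1+E) - Real.log (1+|y|)))^2 := this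
              _ = A^2 * (Real.log (1+E) - Real.log (1+|y|))^2 := by rw [mul_pow]
          have hker : ((1+|x-y|)^2)⁻¹ ≤ 4*((1+|x|)^2)⁻¹ := by
            have hxy : |x| - |y| ≤ |x-y| := abs_sub_abs_le_abs_sub x y
            have hbig : (1+|x|)/2 ≤ 1+|x-y| := by
              rw [hXdef] at hx
              linarith
            have h1 : (1+|x|)^2/4 ≤ (1+|x-y|)^2 := by nlinarith [abs_nonneg (x-y)]
            have h2 := inv_anti₀ (show (0:ℝ) < (1+|x|)^2/4 by positivity) h1
            have h3 : ((1+|x|)^2/4)⁻¹ = 4*((1+|x|)^2)⁻¹ := by rw [inv_div]; ring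
            linarith [h3 ▸ h2]
          have hFxy : F x y = (phi S y)^2 * (C * ((1+|x-y|)^2)⁻¹) := by
            rw [hFdef]
            simp only [hphix, zero_sub, abs_neg, abs_of_nonneg (phi_nonneg (S := S) (x := y))]
          rw [hFxy]
          have hfm : fmaj E |y| = (Real.log (1+E) - Real.log (1+|y|))^2 := by
            simp [fmaj, hy]
          rw [hfm]
          calc (phi S y)^2 * (C * ((1+|x-y|)^2)⁻¹)
              ≤ (A^2 * (Real.log (1+E) - Real.log (1+|y|))^2) * (C * (4*((1+|x|)^2)⁻¹)) := by
                apply mul_le_mul hsq (mul_le_mul_of_nonneg_left hker hC.le)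
                  (by positivity) (by positivity)
            _ = (4*A^2*C*((1+|x|)^2)⁻¹) * (Real.log (1+E) - Real.log (1+|y|))^2 := by ring
        · -- both vanish
          push_neg at hy
          have hphiy : phi S y = 0 := phi_zero hS2 (by rw [hEdef] at *; linarith)
          have : F x y = 0 := by
            rw [hFdef]
            simp [hphix, hphiy]
          rw [this]
          have : fmaj E |y| = 0 := by simp [fmaj, not_le.mpr hy]
          rw [this, mul_zero]
      have hint : Integrable (fun y : ℝ => (4*A^2*C*((1+|x|)^2)⁻¹) * fmaj E |y|) :=
        (integrable_comp_abs (fmaj_facts (by linarith : (0:ℝ) ≤ E)).1).const_mul _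
      calc (∫ y : ℝ, F x y) ≤ ∫ y : ℝ, (4*A^2*C*((1+|x|)^2)⁻¹) * fmaj E |y| :=
            integral_mono_of_nonneg (Filter.Eventually.of_forall (hF_nonneg x)) hint
              (Filter.Eventually.of_forall hle)
        _ = (4*A^2*C*((1+|x|)^2)⁻¹) * ∫ y : ℝ, fmaj E |y| := integral_const_mul _ _
        _ = (4*A^2*C*((1+|x|)^2)⁻¹) * (2 * ∫ t in Ioi (0:ℝ), fmaj E t) := by
            rw [integral_comp_abs (f := fmaj E)]
        _ ≤ (4*A^2*C*((1+|x|)^2)⁻¹) * (2 * (2*(1+E))) := by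
            apply mul_le_mul_of_nonneg_left _ (by positivity)
            apply mul_le_mul_of_nonneg_left (fmaj_facts (by linarith : (0:ℝ) ≤ E)).2
              (by norm_num)
        _ = (16*A^2*C*(1+E)) * (((1+|x|)^2)⁻¹) := by ring
    -- outer bound
    set c1 : ℝ := 50*A^2*C with hc1def
    set c2 : ℝ := 16*A^2*C*(1+E) with hc2def
    have hc1 : 0 ≤ c1 := by positivity
    have hc2 : 0 ≤ c2 := by positivity
    have houter : ∀ x : ℝ, (∫ y : ℝ, F x y) ≤ omaj c1 c2 X |x| := by
      intro x
      by_cases hx : |x| ≤ X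
      · rw [omaj, if_pos hx]
        exact hinner_mid x
      · rw [omaj, if_neg hx]
        push_neg at hx
        exact hinner_far x hx
    have hout_nonneg : ∀ x : ℝ, 0 ≤ ∫ y : ℝ, F x y := by
      intro x
      exact integral_nonneg (hF_nonneg x)
    obtain ⟨homaj_int, homaj_val⟩ := omaj_facts (c1 := c1) (c2 := c2) hX0 hc1 hc2
    have hstep : (∫ x : ℝ, ∫ y : ℝ, F x y) ≤ 2*(c1 * Real.log (1+X) + c2 * ((1+X))⁻¹) := by
      rw [← homaj_val]
      exact integral_mono_of_nonneg (Filter.Eventually.of_forall hout_nonneg) homaj_int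
        (Filter.Eventually.of_forall houter)
    -- numerics
    have hlogX : Real.log (1+X) ≤ S + 1.4 := by
      have h1 : (1+X : ℝ) = 2*(1+E) := by rw [hXdef]; ring
      have h2 : Real.log (1+X) = Real.log 2 + Real.log (1+E) := by
        rw [h1, Real.log_mul (by norm_num) (by positivity)]
      have h3 : Real.log (1+E) ≤ Real.log (2*E) :=
        Real.log_le_log (by positivity) (by linarith)
      have h4 : Real.log (2*E) = Real.log 2 + S := by
        rw [Real.log_mul (by norm_num) (ne_of_gt hE0), hEdef, Real.log_exp]
      have h5 : Real.log 2 < 0.6931471808 := Real.log_two_lt_d9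
      rw [h2]
      rw [h4] at h3
      linarith
    have hXinv : c2 * ((1+X))⁻¹ = 8*A^2*C := by
      have h1 : (1+X : ℝ) = 2*(1+E) := by rw [hXdef]; ring
      rw [hc2def, h1]
      have hne : (1+E : ℝ) ≠ 0 := by positivity
      field_simp
      ring
    have htot : 2*(c1 * Real.log (1+X) + c2 * ((1+X))⁻¹) ≤ 1602*M^2*C/S := by
      have h1 : c1 * Real.log (1+X) ≤ c1 * (S+1.4) :=
        mul_le_mul_of_nonneg_left hlogX hc1
      rw [hXinv]
      have hA2 : A^2 = 9*M^2/S^2 := by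
        rw [hAdef]
        field_simp
        ring
      have expand : 2*(c1 * (S+1.4) + 8*A^2*C)
          = (100*(S+1.4) + 16) * ((9*M^2/S^2)*C) := by
        rw [hc1def, hA2]
        ring
      have hfinal : (100*(S+1.4) + 16) * ((9*M^2/S^2)*C) ≤ 1602*M^2*C/S := by
        have hSne : S ≠ 0 := ne_of_gt hS0
        have e1 : (100*(S+1.4)+16) * ((9*M^2/S^2)*C) = ((900*S+1404)*(M^2*C))/S^2 := by
          field_simp
          ring
        have e2 : 1602*M^2*C/S = ((1602*S)*(M^2*C))/S^2 := by
          rw [pow_two]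
          field_simp
        rw [e1, e2]
        have hnum : (900*S+1404)*(M^2*C) ≤ (1602*S)*(M^2*C) :=
          mul_le_mul_of_nonneg_right (by linarith) (by positivity)
        gcongr
        all_goals first | positivity | exact hnum | linarith
      calc 2*(c1 * Real.log (1+X) + 8*A^2*C) ≤ 2*(c1 * (S+1.4) + 8*A^2*C) := by linarith
        _ = (100*(S+1.4) + 16) * ((9*M^2/S^2)*C) := expand
        _ ≤ 1602*M^2*C/S := hfinal
    have hlast : 1602*M^2*C/S < δ := by
      rw [div_lt_iff₀ hS0]
      have h1 : 1602*M^2*C/δ < S := hSgt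
      rw [div_lt_iff₀ hδ] at h1
      linarith [h1]
    calc (∫ x : ℝ, ∫ y : ℝ, F x y) ≤ 2*(c1 * Real.log (1+X) + c2 * ((1+X))⁻¹) := hstep
      _ ≤ 1602*M^2*C/S := htot
      _ < δ := hlast
end
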